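/- arXiv:0801.4162 — 5 statements merged into one kernel-verified Lean document; each statement's English description precedes it below -/
import Mathlib

section
/- Let p be an odd prime, l ≥ 1 an integer, q = p^{2l}, and let χ be a multiplicative character of (ℤ/qℤ)^* with parameter t_χ ∈ ℤ/p^lℤ. Then for all a, b ∈ (ℤ/qℤ)^*, the twisted Kloosterman sum satisfies K_q(a,b,χ) = Σ_{x ∈ (ℤ/qℤ)^*, h(x) ≡ 0 mod p^l} e_q(ax + bx^{-1})χ(x), where h(x) = ax² + t_χ x − b; equivalently, K_q(a,b,χ) = p^l Σ_x e_q(ax + bx^{-1})χ(x) with x running over a set of representatives in (ℤ/qℤ)^* of the residues x mod p^l satisfying h(x) ≡ 0 mod p^l (the summand is independent of the choice of representative). -/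
open Complex Finset

/-- The standard additive character `e_q(x) = exp(2πix/q)` of `ℤ/qℤ`. -/
noncomputable def eZMod (q : ℕ) (x : ZMod q) : ℂ :=
  Complex.exp (2 * Real.pi * Complex.I * x.val / q)

/-- The twisted Kloosterman sum `K_q(a,b,χ) = ∑_{x ∈ (ℤ/qℤ)^*} e_q(ax + bx⁻¹)χ(x)`. -/
noncomputable def Kloos (q : ℕ) [NeZero q] (a b : ZMod q) (χ : MulChar (ZMod q) ℂ) : ℂ :=
  ∑ x : (ZMod q)ˣ,
    eZMod q (a * (x : ZMod q) + b * ((x⁻¹ : (ZMod q)ˣ) : ZMod q)) * χ (x : ZMod q)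

lemma eZMod_add (q : ℕ) [NeZero q] (x y : ZMod q) :
    eZMod q (x + y) = eZMod q x * eZMod q y := by
  unfold eZMod
  rw [← Complex.exp_add]
  have hq : (q:ℂ) ≠ 0 := Nat.cast_ne_zero.mpr (NeZero.ne q)
  have h : (x.val : ℂ) + y.val = (x+y).val + q * ((x.val + y.val) / q : ℕ) := by
    have h' : x.val + y.val = (x+y).val + q * ((x.val + y.val) / q) := by
      rw [ZMod.val_add]; exact (Nat.mod_add_div _ _).symm
    exact_mod_cast congrArg (Nat.cast : ℕ → ℂ) h'
  have key : 2 * Real.pi * Complex.I * x.val / q + 2 * Real.pi * Complex.I * y.val / q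
      = 2 * Real.pi * Complex.I * ((x+y).val) / q
        + (((x.val + y.val) / q : ℕ) : ℂ) * (2 * Real.pi * Complex.I) := by
    rw [← add_div]
    have h2 : 2 * (Real.pi:ℂ) * Complex.I * x.val + 2 * Real.pi * Complex.I * y.val
        = 2 * Real.pi * Complex.I * ((x+y).val)
          + ((((x.val + y.val) / q : ℕ) : ℂ) * (2 * Real.pi * Complex.I)) * q := by
      linear_combination (2 * (Real.pi:ℂ) * Complex.I) * h
    rw [h2, add_div, mul_div_cancel_right₀ _ hq]
  rw [key, Complex.exp_add, Complex.exp_nat_mul_two_pi_mul_I, mul_one]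

lemma eZMod_ne_one (m : ℕ) [NeZero m] (c : ZMod m) (hc : c ≠ 0) : eZMod m c ≠ 1 := by
  intro h
  unfold eZMod at h
  rw [Complex.exp_eq_one_iff] at h
  obtain ⟨n, hn⟩ := h
  have hm : (m:ℂ) ≠ 0 := Nat.cast_ne_zero.mpr (NeZero.ne m)
  have h2 : (2:ℂ) * Real.pi * Complex.I ≠ 0 := by
    simp [Real.pi_ne_zero, Complex.I_ne_zero, two_ne_zero]
  have hn' : 2 * (Real.pi:ℂ) * Complex.I * ((c.val:ℂ) / m)
      = 2 * Real.pi * Complex.I * n := by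
    rw [← mul_div_assoc, hn]; ring
  have hv' : (c.val : ℂ) / m = n := mul_left_cancel₀ h2 hn'
  have hv : (c.val : ℂ) = n * m := by
    rw [div_eq_iff hm] at hv'; linear_combination hv'
  have hvz : (c.val : ℤ) = n * m := by exact_mod_cast hv
  have hlt : c.val < m := ZMod.val_lt c
  have hmz : 0 < (m:ℤ) := by exact_mod_cast (NeZero.pos m)
  have hn0 : n = 0 := by nlinarith [Int.ofNat_nonneg c.val, (by exact_mod_cast hlt : (c.val:ℤ) < (m:ℤ))]
  apply hc
  have hv0 : c.val = 0 := by rw [hn0, zero_mul] at hvz; exact_mod_cast hvz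
  exact (ZMod.val_eq_zero c).mp hv0

lemma sum_eZMod_mul (m : ℕ) [NeZero m] (c : ZMod m) (hc : c ≠ 0) :
    ∑ u : ZMod m, eZMod m (u * c) = 0 := by
  have h1 : eZMod m c ≠ 1 := eZMod_ne_one m c hc
  have h2 : eZMod m c * ∑ u : ZMod m, eZMod m (u * c) = ∑ u : ZMod m, eZMod m (u * c) := by
    rw [Finset.mul_sum]
    refine Fintype.sum_equiv (Equiv.addRight 1) _ _ (fun u => ?_)
    rw [← eZMod_add]
    congr 1
    show c + u * c = (u + 1) * c
    ring
  have h3 : (eZMod m c - 1) * ∑ u : ZMod m, eZMod m (u * c) = 0 := by linear_combination h2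
  rcases mul_eq_zero.mp h3 with h | h
  · exact absurd (sub_eq_zero.mp h) h1
  · exact h

lemma eZMod_pow_mul (p l : ℕ) (hp : 2 ≤ p) (hl : 1 ≤ l) (w : ZMod (p^(2*l))) :
    eZMod (p^(2*l)) ((p : ZMod (p^(2*l)))^l * w) = eZMod (p^l) ((w.val : ZMod (p^l))) := by
  haveI : NeZero (p^(2*l)) := ⟨pow_ne_zero _ (by omega)⟩
  haveI : NeZero (p^l) := ⟨pow_ne_zero _ (by omega)⟩
  have hcast : (p : ZMod (p^(2*l)))^l = ((p^l : ℕ) : ZMod (p^(2*l))) := by push_cast; ring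
  have hval : (((p^l : ℕ) : ZMod (p^(2*l))) * w).val = p^l * (w.val % p^l) := by
    rw [ZMod.val_mul, ZMod.val_natCast]
    have h1 : p^l % p^(2*l) = p^l :=
      Nat.mod_eq_of_lt (Nat.pow_lt_pow_right (by omega) (by omega))
    rw [h1]
    have h2 : p^(2*l) = p^l * p^l := by rw [← pow_add]; congr 1; omega
    have h3 := Nat.mul_mod_mul_left (p^l) w.val (p^l)
    rw [← h2] at h3
    exact h3
  have hval2 : ((w.val : ZMod (p^l))).val = w.val % p^l := ZMod.val_natCast _ _
  unfold eZMod
  rw [hcast, hval, hval2]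
  have hpl : ((p:ℂ))^l ≠ 0 := pow_ne_zero _ (by exact_mod_cast (by omega : p ≠ 0))
  congr 1
  push_cast
  have h3 : ((p:ℂ))^(2*l) = (p:ℂ)^l * (p:ℂ)^l := by rw [two_mul, pow_add]
  rw [h3]
  field_simp


/-- For `q = p^{2l}` an even power of an odd prime and `χ` a multiplicative character
of `(ℤ/qℤ)^*` with parameter `t_χ ∈ ℤ/p^lℤ` (i.e. `χ(1 + p^l x) = e_{p^l}(t_χ x)`),
the Kloosterman sum `K_q(a,b,χ)` equals the subsum over those units `x` with
`h(x) = ax² + t_χ x - b ≡ 0 (mod p^l)`. -/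
theorem kloos_eq_even_power
    (p l : ℕ) [Fact p.Prime] (hodd : p ≠ 2) (hl : 1 ≤ l)
    (χ : MulChar (ZMod (p ^ (2 * l))) ℂ) (t : ZMod (p ^ l))
    (ht : ∀ x : ZMod (p ^ l),
      χ (1 + (p : ZMod (p ^ (2 * l))) ^ l * (x.val : ZMod (p ^ (2 * l)))) =
        eZMod (p ^ l) (t * x))
    (a b : (ZMod (p ^ (2 * l)))ˣ) :
    Kloos (p ^ (2 * l)) (a : ZMod (p ^ (2 * l))) (b : ZMod (p ^ (2 * l))) χ =
      ∑ x ∈ Finset.univ.filter (fun x : (ZMod (p ^ (2 * l)))ˣ =>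
          ZMod.castHom (pow_dvd_pow p (by omega : l ≤ 2 * l)) (ZMod (p ^ l))
            ((a : ZMod (p ^ (2 * l))) * (x : ZMod (p ^ (2 * l))) ^ 2 +
              (t.val : ZMod (p ^ (2 * l))) * (x : ZMod (p ^ (2 * l))) -
              (b : ZMod (p ^ (2 * l)))) = 0),
        eZMod (p ^ (2 * l))
            ((a : ZMod (p ^ (2 * l))) * (x : ZMod (p ^ (2 * l))) +
              (b : ZMod (p ^ (2 * l))) * ((x⁻¹ : (ZMod (p ^ (2 * l)))ˣ) : ZMod (p ^ (2 * l)))) *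
          χ (x : ZMod (p ^ (2 * l))) := by
  classical
  have hp2 : 2 ≤ p := (Fact.out : p.Prime).two_le
  haveI hq0 : NeZero (p ^ (2*l)) := ⟨pow_ne_zero _ (by omega)⟩
  haveI hm0 : NeZero (p ^ l) := ⟨pow_ne_zero _ (by omega)⟩
  set π : ZMod (p ^ (2*l)) →+* ZMod (p ^ l) :=
    ZMod.castHom (pow_dvd_pow p (by omega : l ≤ 2 * l)) (ZMod (p ^ l)) with hπdef
  set f : (ZMod (p ^ (2*l)))ˣ → ℂ := fun x =>
    eZMod (p ^ (2*l)) ((a : ZMod (p ^ (2*l))) * (x : ZMod (p ^ (2*l)))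
        + (b : ZMod (p ^ (2*l))) * ((x⁻¹ : (ZMod (p ^ (2*l)))ˣ) : ZMod (p ^ (2*l)))) *
      χ (x : ZMod (p ^ (2*l))) with hfdef
  set P : (ZMod (p ^ (2*l)))ˣ → Prop := fun x =>
    π ((a : ZMod (p ^ (2*l))) * (x : ZMod (p ^ (2*l))) ^ 2
        + (t.val : ZMod (p ^ (2*l))) * (x : ZMod (p ^ (2*l))) - (b : ZMod (p ^ (2*l)))) = 0
    with hPdef
  have hp2l : (p : ZMod (p ^ (2*l)))^l * (p : ZMod (p ^ (2*l)))^l = 0 := by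
    rw [← pow_add]
    have h1 : l + l = 2*l := by omega
    rw [h1]
    have h2 : ((p : ZMod (p ^ (2*l))))^(2*l) = ((p^(2*l) : ℕ) : ZMod (p ^ (2*l))) := by
      push_cast; ring
    rw [h2, ZMod.natCast_self]
  have hπp : π ((p : ZMod (p ^ (2*l)))^l) = 0 := by
    rw [map_pow, map_natCast]
    have h3 : ((p : ZMod (p ^ l)))^l = ((p^l : ℕ) : ZMod (p ^ l)) := by push_cast; ring
    rw [h3, ZMod.natCast_self]
  have hunit : ∀ u : ZMod (p ^ l),
      (1 + (p : ZMod (p ^ (2*l)))^l * (u.val : ZMod (p ^ (2*l))))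
        * (1 - (p : ZMod (p ^ (2*l)))^l * (u.val : ZMod (p ^ (2*l)))) = 1 := by
    intro u
    linear_combination (-((u.val : ZMod (p ^ (2*l))) * (u.val : ZMod (p ^ (2*l))))) * hp2l
  let ε : ZMod (p ^ l) → (ZMod (p ^ (2*l)))ˣ := fun u =>
    ⟨1 + (p : ZMod (p ^ (2*l)))^l * (u.val : ZMod (p ^ (2*l))),
     1 - (p : ZMod (p ^ (2*l)))^l * (u.val : ZMod (p ^ (2*l))),
      hunit u, by linear_combination hunit u⟩
  have hεval : ∀ u, ((ε u : (ZMod (p ^ (2*l)))ˣ) : ZMod (p ^ (2*l)))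
      = 1 + (p : ZMod (p ^ (2*l)))^l * (u.val : ZMod (p ^ (2*l))) := fun u => rfl
  have hεinv : ∀ u, (((ε u)⁻¹ : (ZMod (p ^ (2*l)))ˣ) : ZMod (p ^ (2*l)))
      = 1 - (p : ZMod (p ^ (2*l)))^l * (u.val : ZMod (p ^ (2*l))) := fun u => rfl
  have hπε : ∀ u, π ((ε u : (ZMod (p ^ (2*l)))ˣ) : ZMod (p ^ (2*l))) = 1 := by
    intro u
    rw [hεval, map_add, map_one, map_mul, hπp, zero_mul, add_zero]
  set c₀ : (ZMod (p ^ (2*l)))ˣ → ZMod (p ^ l) := fun x =>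
    π ((a : ZMod (p ^ (2*l))) * (x : ZMod (p ^ (2*l)))
      - (b : ZMod (p ^ (2*l))) * ((x⁻¹ : (ZMod (p ^ (2*l)))ˣ) : ZMod (p ^ (2*l)))) + t
    with hc₀def
  have hπt : π ((t.val : ZMod (p ^ (2*l)))) = t := by
    rw [map_natCast, ZMod.natCast_val, ZMod.cast_id]
  have hPc : ∀ x : (ZMod (p ^ (2*l)))ˣ, P x ↔ c₀ x = 0 := by
    intro x
    have hxx : (x : ZMod (p ^ (2*l))) * ((x⁻¹ : (ZMod (p ^ (2*l)))ˣ) : ZMod (p ^ (2*l))) = 1 :=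
      x.mul_inv
    have h5 : π (x : ZMod (p ^ (2*l))) * π ((x⁻¹ : (ZMod (p ^ (2*l)))ˣ) : ZMod (p ^ (2*l))) = 1 := by
      rw [← map_mul, hxx, map_one]
    have hfactor : π ((a : ZMod (p ^ (2*l))) * (x : ZMod (p ^ (2*l))) ^ 2
          + (t.val : ZMod (p ^ (2*l))) * (x : ZMod (p ^ (2*l))) - (b : ZMod (p ^ (2*l))))
        = π (x : ZMod (p ^ (2*l))) * c₀ x := by
      simp only [hc₀def, map_add, map_sub, map_mul, map_pow, hπt]
      linear_combination (π (b : ZMod (p ^ (2*l)))) * h5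
    have hxu : IsUnit (π (x : ZMod (p ^ (2*l)))) := (x.map π.toMonoidHom).isUnit
    constructor
    · intro hP
      simp only [hPdef] at hP
      rw [hfactor] at hP
      obtain ⟨xu, hxu'⟩ := hxu
      rw [← hxu'] at hP
      exact (Units.mul_right_eq_zero xu).mp hP
    · intro hc
      simp only [hPdef]
      rw [hfactor, hc, mul_zero]
  have hPmul : ∀ (u : ZMod (p ^ l)) (x : (ZMod (p ^ (2*l)))ˣ), P (x * ε u) ↔ P x := by
    intro u x
    have hcoe : ((x * ε u : (ZMod (p ^ (2*l)))ˣ) : ZMod (p ^ (2*l)))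
        = (x : ZMod (p ^ (2*l))) * ((ε u : (ZMod (p ^ (2*l)))ˣ) : ZMod (p ^ (2*l))) := rfl
    have heq : π ((a : ZMod (p ^ (2*l))) * ((x * ε u : (ZMod (p ^ (2*l)))ˣ) : ZMod (p ^ (2*l))) ^ 2
          + (t.val : ZMod (p ^ (2*l))) * ((x * ε u : (ZMod (p ^ (2*l)))ˣ) : ZMod (p ^ (2*l)))
          - (b : ZMod (p ^ (2*l))))
        = π ((a : ZMod (p ^ (2*l))) * (x : ZMod (p ^ (2*l))) ^ 2
          + (t.val : ZMod (p ^ (2*l))) * (x : ZMod (p ^ (2*l))) - (b : ZMod (p ^ (2*l)))) := by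
      rw [hcoe]
      simp only [map_add, map_sub, map_mul, map_pow, mul_pow, hπε, one_pow, mul_one]
    simp only [hPdef]
    rw [heq]
  have key : ∀ (u : ZMod (p ^ l)) (x : (ZMod (p ^ (2*l)))ˣ),
      f (x * ε u) = f x * eZMod (p ^ l) (u * c₀ x) := by
    intro u x
    have e1 : ((x * ε u : (ZMod (p ^ (2*l)))ˣ) : ZMod (p ^ (2*l)))
        = (x : ZMod (p ^ (2*l))) * (1 + (p : ZMod (p ^ (2*l)))^l * (u.val : ZMod (p ^ (2*l)))) :=
      rfl
    have e2 : (((x * ε u)⁻¹ : (ZMod (p ^ (2*l)))ˣ) : ZMod (p ^ (2*l)))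
        = ((x⁻¹ : (ZMod (p ^ (2*l)))ˣ) : ZMod (p ^ (2*l)))
          * (1 - (p : ZMod (p ^ (2*l)))^l * (u.val : ZMod (p ^ (2*l)))) := by
      rw [mul_inv, Units.val_mul, hεinv]
    have harg : (a : ZMod (p ^ (2*l))) * ((x * ε u : (ZMod (p ^ (2*l)))ˣ) : ZMod (p ^ (2*l)))
          + (b : ZMod (p ^ (2*l))) * (((x * ε u)⁻¹ : (ZMod (p ^ (2*l)))ˣ) : ZMod (p ^ (2*l)))
        = ((a : ZMod (p ^ (2*l))) * (x : ZMod (p ^ (2*l)))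
            + (b : ZMod (p ^ (2*l))) * ((x⁻¹ : (ZMod (p ^ (2*l)))ˣ) : ZMod (p ^ (2*l))))
          + (p : ZMod (p ^ (2*l)))^l * ((u.val : ZMod (p ^ (2*l))) *
            ((a : ZMod (p ^ (2*l))) * (x : ZMod (p ^ (2*l)))
              - (b : ZMod (p ^ (2*l))) * ((x⁻¹ : (ZMod (p ^ (2*l)))ˣ) : ZMod (p ^ (2*l))))) := by
      rw [e1, e2]; ring
    have hW : ((((u.val : ZMod (p ^ (2*l))) * ((a : ZMod (p ^ (2*l))) * (x : ZMod (p ^ (2*l)))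
          - (b : ZMod (p ^ (2*l))) * ((x⁻¹ : (ZMod (p ^ (2*l)))ˣ)
            : ZMod (p ^ (2*l))))).val : ZMod (p ^ l)))
        = u * π ((a : ZMod (p ^ (2*l))) * (x : ZMod (p ^ (2*l)))
          - (b : ZMod (p ^ (2*l))) * ((x⁻¹ : (ZMod (p ^ (2*l)))ˣ) : ZMod (p ^ (2*l)))) := by
      rw [ZMod.natCast_val]
      have hcastπ : ∀ z : ZMod (p ^ (2*l)), (ZMod.cast z : ZMod (p ^ l)) = π z := fun z => rfl
      rw [hcastπ, map_mul, map_natCast, ZMod.natCast_val, ZMod.cast_id]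
    have hχ : χ ((x * ε u : (ZMod (p ^ (2*l)))ˣ) : ZMod (p ^ (2*l)))
        = χ (x : ZMod (p ^ (2*l))) * eZMod (p ^ l) (t * u) := by
      rw [e1, map_mul]
      congr 1
      exact ht u
    simp only [hfdef]
    rw [harg, eZMod_add, hχ]
    rw [eZMod_pow_mul p l hp2 hl, hW]
    have hcomb : eZMod (p ^ l) (u * π ((a : ZMod (p ^ (2*l))) * (x : ZMod (p ^ (2*l)))
          - (b : ZMod (p ^ (2*l))) * ((x⁻¹ : (ZMod (p ^ (2*l)))ˣ) : ZMod (p ^ (2*l)))))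
          * eZMod (p ^ l) (t * u)
        = eZMod (p ^ l) (u * c₀ x) := by
      rw [← eZMod_add]
      congr 1
      simp only [hc₀def]
      ring
    rw [← hcomb]
    ring
  -- the vanishing of the sum over non-roots
  set S := Finset.univ.filter (fun x : (ZMod (p ^ (2*l)))ˣ => ¬ P x) with hSdef
  have hzero : ∑ x ∈ S, f x = 0 := by
    have hbij : ∀ u : ZMod (p ^ l), ∑ x ∈ S, f (x * ε u) = ∑ x ∈ S, f x := by
      intro u
      refine Finset.sum_nbij' (fun x => x * ε u) (fun x => x * (ε u)⁻¹) ?_ ?_ ?_ ?_ ?_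
      · intro x hx
        simp only [hSdef, Finset.mem_filter, Finset.mem_univ, true_and] at hx ⊢
        rw [hPmul]; exact hx
      · intro x hx
        simp only [hSdef, Finset.mem_filter, Finset.mem_univ, true_and] at hx ⊢
        intro hP
        rw [← hPmul u (x * (ε u)⁻¹)] at hP
        rw [inv_mul_cancel_right] at hP
        exact hx hP
      · intro x _
        simp [mul_inv_cancel_right]
      · intro x _
        simp [inv_mul_cancel_right]
      · intro x _
        rfl
    have hmF : ((p ^ l : ℕ) : ℂ) * ∑ x ∈ S, f x = 0 := by
      have hcard : ((p ^ l : ℕ) : ℂ) * ∑ x ∈ S, f x = ∑ _u : ZMod (p ^ l), ∑ x ∈ S, f x := by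
        rw [Finset.sum_const, Finset.card_univ, ZMod.card, nsmul_eq_mul]
      rw [hcard]
      calc ∑ _u : ZMod (p ^ l), ∑ x ∈ S, f x
          = ∑ u : ZMod (p ^ l), ∑ x ∈ S, f (x * ε u) :=
            Finset.sum_congr rfl fun u _ => (hbij u).symm
        _ = ∑ x ∈ S, ∑ u : ZMod (p ^ l), f (x * ε u) := Finset.sum_comm
        _ = ∑ x ∈ S, f x * ∑ u : ZMod (p ^ l), eZMod (p ^ l) (u * c₀ x) := by
            refine Finset.sum_congr rfl fun x _ => ?_
            rw [Finset.mul_sum]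
            exact Finset.sum_congr rfl fun u _ => key u x
        _ = 0 := by
            refine Finset.sum_eq_zero fun x hx => ?_
            simp only [hSdef, Finset.mem_filter, Finset.mem_univ, true_and] at hx
            rw [sum_eZMod_mul (p ^ l) (c₀ x) (fun h => hx ((hPc x).mpr h)), mul_zero]
    have hmne : ((p ^ l : ℕ) : ℂ) ≠ 0 := Nat.cast_ne_zero.mpr (NeZero.ne _)
    rcases mul_eq_zero.mp hmF with h | h
    · exact absurd h hmne
    · exact h
  -- assemble
  have hsplit := Finset.sum_filter_add_sum_filter_not Finset.univ P f
  rw [show Kloos (p ^ (2*l)) ((a : ZMod (p ^ (2*l)))) ((b : ZMod (p ^ (2*l)))) χ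
      = ∑ x : (ZMod (p ^ (2*l)))ˣ, f x from rfl]
  rw [← hsplit]
  rw [show Finset.univ.filter (fun x : (ZMod (p ^ (2*l)))ˣ => ¬ P x) = S from rfl]
  rw [hzero, add_zero]
end

section
/- Let p be an odd prime, l ≥ 1 an integer, and q = p^{2l+1}. Then for every multiplicative character χ of (ℤ/qℤ)^* there exists a unique t ∈ ℤ/p^{l+1}ℤ such that χ(1 + p^l x + p^{2l}·(x²/2)) = e_{p^{l+1}}(t x) for all x ∈ ℤ/p^{l+1}ℤ, where x²/2 denotes x² times the inverse of 2 modulo p^{l+1}. -/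
open Complex

/-- For `q = p^{2l+1}` an odd power of an odd prime, every multiplicative character
`χ` of `(ℤ/qℤ)^*` has a unique parameter `t ∈ ℤ/p^{l+1}ℤ` such that
`χ(1 + p^l x + p^{2l}·(x²/2)) = e_{p^{l+1}}(t x)` for all `x ∈ ℤ/p^{l+1}ℤ`, where
`x²/2` denotes `x²` times the inverse of `2` modulo `p^{l+1}`. -/
theorem exists_unique_param_odd_power
    (p : ℕ) (hp : p.Prime) (hodd : p ≠ 2) (l : ℕ) (hl : 1 ≤ l)
    (χ : MulChar (ZMod (p ^ (2 * l + 1))) ℂ) :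
    ∃! t : ZMod (p ^ (l + 1)), ∀ x : ZMod (p ^ (l + 1)),
      χ (1 + (p : ZMod (p ^ (2 * l + 1))) ^ l * (x.val : ZMod (p ^ (2 * l + 1))) +
          (p : ZMod (p ^ (2 * l + 1))) ^ (2 * l) *
            (((x ^ 2 * (2 : ZMod (p ^ (l + 1)))⁻¹).val : ZMod (p ^ (2 * l + 1))))) =
        eZMod (p ^ (l + 1)) (t * x) := by
  have hp0 : p ≠ 0 := hp.pos.ne'
  haveI hNn : NeZero (p ^ (l + 1)) := ⟨pow_ne_zero _ hp0⟩
  haveI hNq : NeZero (p ^ (2 * l + 1)) := ⟨pow_ne_zero _ hp0⟩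
  set f : ZMod (p ^ (l + 1)) → ZMod (p ^ (2 * l + 1)) := fun x =>
    1 + ((p : ZMod (p ^ (2 * l + 1)))) ^ l * (x.val : ZMod (p ^ (2 * l + 1))) + ((p : ZMod (p ^ (2 * l + 1)))) ^ (2 * l) * (((x ^ 2 * ((2 : ZMod (p ^ (l + 1)))⁻¹)).val : ZMod (p ^ (2 * l + 1)))) with hf
  -- basic power vanishing
  have hP0 : ∀ j, 2 * l + 1 ≤ j → ((p : ZMod (p ^ (2 * l + 1)))) ^ j = 0 := by
    intro j hj
    obtain ⟨m, rfl⟩ := Nat.exists_eq_add_of_le hj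
    have h1 : ((p : ZMod (p ^ (2 * l + 1)))) ^ (2 * l + 1) = 0 := by
      have h := ZMod.natCast_self (p ^ (2 * l + 1))
      push_cast at h
      exact h
    calc ((p : ZMod (p ^ (2 * l + 1)))) ^ (2 * l + 1 + m)
        = ((p : ZMod (p ^ (2 * l + 1)))) ^ (2 * l + 1) * ((p : ZMod (p ^ (2 * l + 1)))) ^ m :=
          pow_add _ _ _
      _ = 0 := by rw [h1, zero_mul]
  -- additive compatibility of val-casting
  have auxadd : ∀ j, 2 * l + 1 ≤ l + 1 + j → ∀ a b : ZMod (p ^ (l + 1)),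
      ((p : ZMod (p ^ (2 * l + 1)))) ^ j * (((a + b).val : ℕ) : ZMod (p ^ (2 * l + 1))) = ((p : ZMod (p ^ (2 * l + 1)))) ^ j * ((a.val : ZMod (p ^ (2 * l + 1))) + (b.val : ZMod (p ^ (2 * l + 1)))) := by
    intro j hj a b
    have h2 : a.val + b.val = (p ^ (l + 1)) * ((a.val + b.val) / (p ^ (l + 1))) + (a.val + b.val) % (p ^ (l + 1)) :=
      (Nat.div_add_mod _ _).symm
    have h3 : (a.val : ZMod (p ^ (2 * l + 1))) + (b.val : ZMod (p ^ (2 * l + 1)))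
        = ((p ^ (l + 1)) : ZMod (p ^ (2 * l + 1))) * (((a.val + b.val) / (p ^ (l + 1)) : ℕ) : ZMod (p ^ (2 * l + 1))) + (((a + b).val : ℕ) : ZMod (p ^ (2 * l + 1))) := by
      rw [ZMod.val_add]
      exact_mod_cast congrArg (Nat.cast : ℕ → ZMod (p ^ (2 * l + 1))) h2
    have hz : ((p : ZMod (p ^ (2 * l + 1)))) ^ j * ((p ^ (l + 1)) : ZMod (p ^ (2 * l + 1))) = 0 := by
      rw [← pow_add ((p : ZMod (p ^ (2 * l + 1)))) j (l + 1)]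
      exact hP0 _ (by omega)
    rw [h3, mul_add, ← mul_assoc, hz, zero_mul, zero_add]
  have auxmul : ∀ j, 2 * l + 1 ≤ l + 1 + j → ∀ a b : ZMod (p ^ (l + 1)),
      ((p : ZMod (p ^ (2 * l + 1)))) ^ j * (((a * b).val : ℕ) : ZMod (p ^ (2 * l + 1))) = ((p : ZMod (p ^ (2 * l + 1)))) ^ j * ((a.val : ZMod (p ^ (2 * l + 1))) * (b.val : ZMod (p ^ (2 * l + 1)))) := by
    intro j hj a b
    have h2 : a.val * b.val = (p ^ (l + 1)) * ((a.val * b.val) / (p ^ (l + 1))) + (a.val * b.val) % (p ^ (l + 1)) :=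
      (Nat.div_add_mod _ _).symm
    have h3 : (a.val : ZMod (p ^ (2 * l + 1))) * (b.val : ZMod (p ^ (2 * l + 1)))
        = ((p ^ (l + 1)) : ZMod (p ^ (2 * l + 1))) * (((a.val * b.val) / (p ^ (l + 1)) : ℕ) : ZMod (p ^ (2 * l + 1))) + (((a * b).val : ℕ) : ZMod (p ^ (2 * l + 1))) := by
      rw [ZMod.val_mul]
      exact_mod_cast congrArg (Nat.cast : ℕ → ZMod (p ^ (2 * l + 1))) h2
    have hz : ((p : ZMod (p ^ (2 * l + 1)))) ^ j * ((p ^ (l + 1)) : ZMod (p ^ (2 * l + 1))) = 0 := by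
      rw [← pow_add ((p : ZMod (p ^ (2 * l + 1)))) j (l + 1)]
      exact hP0 _ (by omega)
    rw [h3, mul_add, ← mul_assoc, hz, zero_mul, zero_add]
  -- 2 is invertible mod (p ^ (l + 1))
  have h2inv : (2 : ZMod (p ^ (l + 1))) * ((2 : ZMod (p ^ (l + 1)))⁻¹) = 1 := by
    apply ZMod.mul_inv_of_unit
    have : IsUnit ((2 : ℕ) : ZMod (p ^ (l + 1))) := by
      rw [ZMod.isUnit_iff_coprime]
      exact (Nat.Coprime.pow_right _ ((Nat.coprime_primes Nat.prime_two hp).mpr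
        (fun h => hodd h.symm)))
    exact_mod_cast this
  -- key multiplicativity
  have key : ∀ x y : ZMod (p ^ (l + 1)), f x * f y = f (x + y) := by
    intro x y
    have hsq : (x + y) ^ 2 * ((2 : ZMod (p ^ (l + 1)))⁻¹) = x ^ 2 * ((2 : ZMod (p ^ (l + 1)))⁻¹) + (y ^ 2 * ((2 : ZMod (p ^ (l + 1)))⁻¹) + x * y) := by
      linear_combination (x * y) * h2inv
    have hXY : ((p : ZMod (p ^ (2 * l + 1)))) ^ l * ((p : ZMod (p ^ (2 * l + 1)))) ^ l = ((p : ZMod (p ^ (2 * l + 1)))) ^ (2 * l) := by rw [← pow_add]; congr 1; omega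
    have h3 : ((p : ZMod (p ^ (2 * l + 1)))) ^ (2 * l) * ((p : ZMod (p ^ (2 * l + 1)))) ^ l = 0 := by rw [← pow_add]; exact hP0 _ (by omega)
    have h4 : ((p : ZMod (p ^ (2 * l + 1)))) ^ (2 * l) * ((p : ZMod (p ^ (2 * l + 1)))) ^ (2 * l) = 0 := by rw [← pow_add]; exact hP0 _ (by omega)
    have ea := auxadd (2 * l) (by omega) (x ^ 2 * ((2 : ZMod (p ^ (l + 1)))⁻¹)) (y ^ 2 * ((2 : ZMod (p ^ (l + 1)))⁻¹) + x * y)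
    have eb := auxadd (2 * l) (by omega) (y ^ 2 * ((2 : ZMod (p ^ (l + 1)))⁻¹)) (x * y)
    have ec := auxmul (2 * l) (by omega) x y
    have e1 := auxadd l (by omega) x y
    have e2 : ((p : ZMod (p ^ (2 * l + 1)))) ^ (2 * l) * ((((x + y) ^ 2 * ((2 : ZMod (p ^ (l + 1)))⁻¹)).val : ℕ) : ZMod (p ^ (2 * l + 1)))
        = ((p : ZMod (p ^ (2 * l + 1)))) ^ (2 * l) * (((x ^ 2 * ((2 : ZMod (p ^ (l + 1)))⁻¹)).val : ZMod (p ^ (2 * l + 1))) + ((y ^ 2 * ((2 : ZMod (p ^ (l + 1)))⁻¹)).val : ZMod (p ^ (2 * l + 1)))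
            + (x.val : ZMod (p ^ (2 * l + 1))) * (y.val : ZMod (p ^ (2 * l + 1)))) := by
      rw [hsq]
      linear_combination ea + eb + ec
    simp only [hf]
    linear_combination (-1 : ZMod (p ^ (2 * l + 1))) * e1 - e2
      + ((x.val : ZMod (p ^ (2 * l + 1))) * (y.val : ZMod (p ^ (2 * l + 1)))) * hXY
      + ((x.val : ZMod (p ^ (2 * l + 1))) * ((y ^ 2 * ((2 : ZMod (p ^ (l + 1)))⁻¹)).val : ZMod (p ^ (2 * l + 1)))
        + ((x ^ 2 * ((2 : ZMod (p ^ (l + 1)))⁻¹)).val : ZMod (p ^ (2 * l + 1))) * (y.val : ZMod (p ^ (2 * l + 1)))) * h3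
      + (((x ^ 2 * ((2 : ZMod (p ^ (l + 1)))⁻¹)).val : ZMod (p ^ (2 * l + 1))) * ((y ^ 2 * ((2 : ZMod (p ^ (l + 1)))⁻¹)).val : ZMod (p ^ (2 * l + 1)))) * h4
  have hf0 : f 0 = 1 := by
    rw [hf]
    simp [ZMod.val_zero]
  -- χ ∘ f on naturals
  have hpow : ∀ m : ℕ, χ (f ((m : ℕ) : ZMod (p ^ (l + 1)))) = χ (f 1) ^ m := by
    intro m
    induction m with
    | zero => simpa [hf0] using χ.map_one
    | succ m ih =>
      have : ((m + 1 : ℕ) : ZMod (p ^ (l + 1))) = ((m : ℕ) : ZMod (p ^ (l + 1))) + 1 := by push_cast; ring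
      rw [this, ← key, map_mul, ih]
      exact (pow_succ _ m).symm
  set ζ : ℂ := χ (f 1) with hζ
  have hζn : ζ ^ (p ^ (l + 1)) = 1 := by
    have := hpow (p ^ (l + 1))
    rw [ZMod.natCast_self, hf0, χ.map_one] at this
    exact this.symm
  obtain ⟨k, hk, hke⟩ :=
    (Complex.isPrimitiveRoot_exp (p ^ (l + 1)) (NeZero.ne (p ^ (l + 1)))).eq_pow_of_pow_eq_one hζn
  set ζ₀ : ℂ := Complex.exp (2 * Real.pi * Complex.I / ((p ^ (l + 1) : ℕ) : ℂ)) with hζ₀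
  have hord : orderOf ζ₀ = (p ^ (l + 1)) := ((Complex.isPrimitiveRoot_exp (p ^ (l + 1)) (NeZero.ne (p ^ (l + 1)))).eq_orderOf).symm
  have hexp : ∀ m : ℕ, Complex.exp (2 * Real.pi * Complex.I * m / ((p ^ (l + 1) : ℕ) : ℂ)) = ζ₀ ^ m := by
    intro m
    rw [hζ₀, ← Complex.exp_nat_mul]
    congr 1
    ring
  have heZ : ∀ z : ZMod (p ^ (l + 1)), eZMod (p ^ (l + 1)) z = ζ₀ ^ z.val := by
    intro z
    rw [eZMod]
    exact hexp z.val
  have hval : ∀ z : ZMod (p ^ (l + 1)), ((z.val : ℕ) : ZMod (p ^ (l + 1))) = z :=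
    fun z => ZMod.natCast_rightInverse z
  have hχf : ∀ x : ZMod (p ^ (l + 1)), χ (f x) = ζ ^ x.val := by
    intro x
    conv_lhs => rw [← hval x]
    exact hpow x.val
  have hζ₀n : ζ₀ ^ (p ^ (l + 1)) = 1 := (Complex.isPrimitiveRoot_exp (p ^ (l + 1)) (NeZero.ne (p ^ (l + 1)))).pow_eq_one
  have hmod : ∀ m : ℕ, ζ₀ ^ (m % (p ^ (l + 1))) = ζ₀ ^ m := by
    intro m
    conv_rhs => rw [← Nat.div_add_mod m (p ^ (l + 1))]
    rw [pow_add ζ₀ (p ^ (l + 1) * (m / p ^ (l + 1))) (m % p ^ (l + 1)),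
      pow_mul ζ₀ (p ^ (l + 1)) (m / p ^ (l + 1)), hζ₀n, one_pow, one_mul]
  refine ⟨(k : ZMod (p ^ (l + 1))), ?_, ?_⟩
  · intro x
    have goal_lhs : χ (f x) = ζ₀ ^ (k * x.val) := by
      rw [hχf, ← hke, ← pow_mul]
    have hv : ((k : ZMod (p ^ (l + 1))) * x).val = (k * x.val) % (p ^ (l + 1)) := by
      have : ((k : ZMod (p ^ (l + 1))) * x) = (((k * x.val : ℕ)) : ZMod (p ^ (l + 1))) := by
        push_cast
        rw [hval]
      rw [this, ZMod.val_natCast]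
    have goal_rhs : eZMod (p ^ (l + 1)) ((k : ZMod (p ^ (l + 1))) * x) = ζ₀ ^ (k * x.val) := by
      rw [heZ, hv, hmod]
    exact goal_lhs.trans goal_rhs.symm
  · intro t' ht'
    have h1 := ht' 1
    have h2 : χ (f 1) = eZMod (p ^ (l + 1)) ((k : ZMod (p ^ (l + 1))) * 1) := by
      have goal_lhs : χ (f 1) = ζ₀ ^ (k * (1 : ZMod (p ^ (l + 1))).val) := by
        rw [hχf, ← hke, ← pow_mul]
      have hv : ((k : ZMod (p ^ (l + 1))) * 1).val = (k * (1 : ZMod (p ^ (l + 1))).val) % (p ^ (l + 1)) := by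
        have : ((k : ZMod (p ^ (l + 1))) * 1) = (((k * (1 : ZMod (p ^ (l + 1))).val : ℕ)) : ZMod (p ^ (l + 1))) := by
          push_cast
          rw [hval]
        rw [this, ZMod.val_natCast]
      rw [goal_lhs, heZ, hv, hmod]
    have heq : eZMod (p ^ (l + 1)) (t' * 1) = eZMod (p ^ (l + 1)) ((k : ZMod (p ^ (l + 1))) * 1) := by
      rw [← h1]; exact h2
    rw [mul_one, mul_one] at heq
    rw [heZ, heZ] at heq
    have := (Complex.isPrimitiveRoot_exp (p ^ (l + 1)) (NeZero.ne (p ^ (l + 1)))).pow_inj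
      (ZMod.val_lt t') (ZMod.val_lt _) heq
    have := congrArg (Nat.cast : ℕ → ZMod (p ^ (l + 1))) this
    rwa [hval, hval] at this
end

section
/- Let p be an odd prime, l ≥ 1 an integer, q = p^{2l+1}, and let χ be a multiplicative character of (ℤ/qℤ)^* with parameter t_χ ∈ ℤ/p^{l+1}ℤ. Let a, b ∈ (ℤ/qℤ)^* and set h(x) = ax² + t_χ x − b and d(x) = ((p−1)/2)·t_χ·x² + bx. Then K_q(a,b,χ) = p^l Σ_x e_q(a x̃ + b x̃^{-1}) χ(x̃) 𝒢(x̃), where x runs over the elements of (ℤ/p^lℤ)^* with h(x) ≡ 0 mod p^l, x̃ ∈ ℤ is any integer lifting x (the entire summand е_q(a x̃ + b x̃^{-1})χ(x̃)𝒢(x̃) is independent of the choice of lift), and 𝒢(x̃) is the Gauss sum 𝒢(x̃) = Σ_{y mod p} e_p(d(x̃) y² + p^{-l} h(x̃) y), in which h(x̃) ≡ 0 mod p^l so that p^{-l}h(x̃) is well defined modulo p. -/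
open Complex Finset

/-- The integer `h(x̃) = a x̃² + t_χ x̃ - b` computed with the canonical integer lifts
of `a`, `b` (mod `q`) and `t_χ`. -/
def hInt (q : ℕ) (a b : ZMod q) (tv : ℕ) (x : ℕ) : ℤ :=
  (a.val : ℤ) * (x : ℤ) ^ 2 + (tv : ℤ) * (x : ℤ) - (b.val : ℤ)

/-- The integer `d(x̃) = ((p-1)/2)·t_χ·x̃² + b x̃`. -/
def dInt (p q : ℕ) (b : ZMod q) (tv : ℕ) (x : ℕ) : ℤ :=
  (((p - 1) / 2 : ℕ) : ℤ) * (tv : ℤ) * (x : ℤ) ^ 2 + (b.val : ℤ) * (x : ℤ)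

/-- The Gauss sum `𝒢 = ∑_{y mod p} e_p(c y² + e y)`. -/
noncomputable def gaussSum' (p : ℕ) [NeZero p] (c e : ℤ) : ℂ :=
  ∑ y : ZMod p, eZMod p ((c : ZMod p) * y ^ 2 + (e : ZMod p) * y)

/-! ### auxiliary exponential function on integers -/

/-- `E q k = exp(2πik/q)` for integer `k`. -/
noncomputable def E (q : ℕ) (k : ℤ) : ℂ :=
  Complex.exp (2 * Real.pi * Complex.I * k / q)

lemma E_add (q : ℕ) (j k : ℤ) : E q (j + k) = E q j * E q k := by
  rw [E, E, E, ← Complex.exp_add]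
  congr 1
  push_cast
  ring

lemma E_intCast_mul_eq_one (q : ℕ) (m : ℤ) : E q ((q : ℤ) * m) = 1 := by
  rcases Nat.eq_zero_or_pos q with hq | hq
  · simp [E, hq]
  · rw [E]
    have h : 2 * (Real.pi : ℂ) * Complex.I * (((q : ℤ) * m : ℤ) : ℂ) / q
        = m * (2 * Real.pi * Complex.I) := by
      have hq' : (q : ℂ) ≠ 0 := by exact_mod_cast hq.ne'
      push_cast
      field_simp
    rw [h]
    exact Complex.exp_int_mul_two_pi_mul_I m

lemma E_congr (q : ℕ) {j k : ℤ} (h : (q : ℤ) ∣ (j - k)) : E q j = E q k := by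
  obtain ⟨m, hm⟩ := h
  have : j = k + (q : ℤ) * m := by linarith
  rw [this, E_add, E_intCast_mul_eq_one, mul_one]

lemma eZMod_eq_E (q : ℕ) (x : ZMod q) : eZMod q x = E q (x.val : ℤ) := by
  rw [eZMod, E]; norm_num

lemma E_eq_eZMod (q : ℕ) [NeZero q] (k : ℤ) : E q k = eZMod q ((k : ℤ) : ZMod q) := by
  rw [eZMod_eq_E]
  apply E_congr
  have h2 : ((k - ((k : ZMod q).val : ℤ) : ℤ) : ZMod q) = 0 := by
    push_cast
    simp [ZMod.natCast_val, ZMod.intCast_cast]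
  exact (ZMod.intCast_zmod_eq_zero_iff_dvd _ q).1 h2

lemma E_mul_left (m n : ℕ) (hm : m ≠ 0) (k : ℤ) : E (m * n) ((m : ℤ) * k) = E n k := by
  rcases Nat.eq_zero_or_pos n with hn | hn
  · simp [E, hn]
  · rw [E, E]
    congr 1
    have hm' : (m : ℂ) ≠ 0 := by exact_mod_cast hm
    have hn' : (n : ℂ) ≠ 0 := by exact_mod_cast hn.ne'
    push_cast
    field_simp

lemma E_eq_one_iff (q : ℕ) (hq : q ≠ 0) (k : ℤ) : E q k = 1 ↔ (q : ℤ) ∣ k := by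
  have hq' : (q : ℂ) ≠ 0 := by exact_mod_cast hq
  have hc : (2 * (Real.pi : ℂ) * Complex.I) ≠ 0 := by
    simp [Real.pi_ne_zero, Complex.I_ne_zero]
  rw [E, Complex.exp_eq_one_iff]
  constructor
  · rintro ⟨n, hn⟩
    refine ⟨n, ?_⟩
    rw [mul_div_assoc] at hn
    have h1 : (2 * (Real.pi : ℂ) * Complex.I) * ((k : ℂ) / q)
        = (2 * (Real.pi : ℂ) * Complex.I) * n := by rw [hn]; ring
    have h2 : (k : ℂ) / q = n := mul_left_cancel₀ hc h1
    have h3 : (k : ℂ) = (n : ℂ) * q := (div_eq_iff hq').1 h2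
    have h4 : (k : ℂ) = ((q * n : ℤ) : ℂ) := by push_cast; linear_combination h3
    exact_mod_cast h4
  · rintro ⟨n, rfl⟩
    refine ⟨n, ?_⟩
    push_cast
    field_simp

lemma E_nat_mul (q : ℕ) (w : ℕ) (d : ℤ) : E q ((w : ℤ) * d) = (E q d) ^ w := by
  induction w with
  | zero => simp [E]
  | succ n ih =>
      have : ((n + 1 : ℕ) : ℤ) * d = (n : ℤ) * d + d := by push_cast; ring
      rw [this, E_add, ih, pow_succ]

lemma sum_E_eq_ite (N : ℕ) (hN : N ≠ 0) (d : ℤ) :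
    ∑ w ∈ Finset.range N, E N ((w : ℤ) * d) = if (N : ℤ) ∣ d then (N : ℂ) else 0 := by
  by_cases h : (N : ℤ) ∣ d
  · simp only [h, if_true]
    have h1 : ∀ w ∈ Finset.range N, E N ((w : ℤ) * d) = 1 := by
      intro w _
      obtain ⟨e, rfl⟩ := h
      have h2 : (w : ℤ) * ((N : ℤ) * e) = (N : ℤ) * ((w : ℤ) * e) := by ring
      rw [h2, E_intCast_mul_eq_one]
    rw [Finset.sum_congr rfl h1]
    simp
  · simp only [h, if_false]
    have hr : E N d ≠ 1 := fun hh => h ((E_eq_one_iff N hN d).1 hh)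
    have h1 : ∀ w ∈ Finset.range N, E N ((w:ℤ) * d) = (E N d) ^ w := fun w _ => E_nat_mul N w d
    rw [Finset.sum_congr rfl h1, geom_sum_eq hr]
    have hNpow : (E N d) ^ N = 1 := by
      rw [← E_nat_mul]
      exact E_intCast_mul_eq_one N d
    rw [hNpow]
    simp

/-! ### sum reindexing lemmas -/

lemma sum_zmod (n : ℕ) [NeZero n] (G : ZMod n → ℂ) :
    ∑ y : ZMod n, G y = ∑ k ∈ Finset.range n, G (k : ZMod n) := by
  refine Finset.sum_nbij' (fun y => y.val) (fun k => (k : ZMod n)) ?_ ?_ ?_ ?_ ?_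
  · intro y _; exact Finset.mem_range.2 (ZMod.val_lt y)
  · intro k _; exact Finset.mem_univ _
  · intro y _; exact ZMod.natCast_rightInverse y
  · intro k hk; exact ZMod.val_cast_of_lt (Finset.mem_range.1 hk)
  · intro y _; rw [ZMod.natCast_rightInverse y]

lemma sum_range_mul (m n : ℕ) (hm : 0 < m) (F : ℕ → ℂ) :
    ∑ k ∈ Finset.range (m * n), F k
      = ∑ z ∈ Finset.range m, ∑ w ∈ Finset.range n, F (z + m * w) := by
  rw [← Finset.sum_product']
  refine Finset.sum_nbij' (fun k => (k % m, k / m)) (fun zw => zw.1 + m * zw.2) ?_ ?_ ?_ ?_ ?_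
  · intro k hk
    rw [Finset.mem_range] at hk
    refine Finset.mem_product.2 ⟨Finset.mem_range.2 (Nat.mod_lt _ hm), Finset.mem_range.2 ?_⟩
    exact Nat.div_lt_of_lt_mul (by omega)
  · intro zw hzw
    obtain ⟨h1, h2⟩ := Finset.mem_product.1 hzw
    rw [Finset.mem_range] at h1 h2
    refine Finset.mem_range.2 ?_
    calc zw.1 + m * zw.2 < m + m * zw.2 := by omega
    _ = m * (zw.2 + 1) := by ring
    _ ≤ m * n := Nat.mul_le_mul_left _ (by omega)
  · intro k _; exact Nat.mod_add_div k m
  · intro zw hzw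
    obtain ⟨h1, h2⟩ := Finset.mem_product.1 hzw
    rw [Finset.mem_range] at h1 h2
    have e1 : (zw.1 + m * zw.2) % m = zw.1 := by
      rw [Nat.add_mul_mod_self_left, Nat.mod_eq_of_lt h1]
    have e2 : (zw.1 + m * zw.2) / m = zw.2 := by
      rw [Nat.add_mul_div_left _ _ hm, Nat.div_eq_of_lt h1, zero_add]
    exact Prod.ext e1 e2
  · intro k _; rw [Nat.mod_add_div k m]

lemma gaussSum'_eq_sum_range (p : ℕ) [NeZero p] (c e : ℤ) :
    gaussSum' p c e = ∑ z ∈ Finset.range p, E p (c * (z : ℤ) ^ 2 + e * (z : ℤ)) := by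
  rw [gaussSum', sum_zmod]
  refine Finset.sum_congr rfl fun k _ => ?_
  rw [E_eq_eZMod]
  congr 1
  push_cast
  ring

lemma sum_zmod_mul_unit (p : ℕ) [Fact p.Prime] (M : ZMod p) (hM : M ≠ 0) (G : ZMod p → ℂ) :
    ∑ z : ZMod p, G (M * z) = ∑ z : ZMod p, G z :=
  Fintype.sum_bijective (fun z => M * z) (Equiv.mulLeft₀ M hM).bijective _ _ (fun _ => rfl)

lemma gaussSum'_subst (p : ℕ) [Fact p.Prime] (c e d f : ℤ) (M : ZMod p) (hM : M ≠ 0)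
    (hc : ((d : ℤ) : ZMod p) = M ^ 2 * ((c : ℤ) : ZMod p))
    (he : ((f : ℤ) : ZMod p) = M * ((e : ℤ) : ZMod p)) :
    gaussSum' p c e = gaussSum' p d f := by
  rw [gaussSum', gaussSum']
  rw [← sum_zmod_mul_unit p M hM (fun ζ => eZMod p ((c : ZMod p) * ζ ^ 2 + (e : ZMod p) * ζ))]
  refine Finset.sum_congr rfl fun ζ _ => ?_
  congr 1
  rw [hc, he]
  ring

/-! ### the parametrization of units mod `p^{2l+1}` -/

def Nuy (p l : ℕ) (u : (ZMod (p^l))ˣ) (y : ZMod (p^(l+1))) : ℕ :=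
  (u : ZMod (p^l)).val *
    (1 + p^l * y.val + p^(2*l) * ((y^2 * (2 : ZMod (p^(l+1)))⁻¹).val))

lemma not_dvd_M (p l : ℕ) [hp : Fact p.Prime] (hl : 1 ≤ l) (u : (ZMod (p^l))ˣ) :
    ¬ (p ∣ (u : ZMod (p^l)).val) := by
  intro h
  have hco : Nat.Coprime (u : ZMod (p^l)).val (p^l) := ZMod.val_coe_unit_coprime u
  have hpl : p ∣ p ^ l := dvd_pow_self p (by omega)
  have h1 : p ∣ Nat.gcd (u : ZMod (p^l)).val (p^l) := Nat.dvd_gcd h hpl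
  rw [hco] at h1
  exact Nat.Prime.not_dvd_one hp.out h1

lemma coprime_Nuy (p l : ℕ) [hp : Fact p.Prime] (hl : 1 ≤ l)
    (u : (ZMod (p^l))ˣ) (y : ZMod (p^(l+1))) :
    Nat.Coprime (Nuy p l u y) (p^(2*l+1)) := by
  rw [Nat.coprime_pow_right_iff (by omega), Nat.coprime_comm,
    Nat.Prime.coprime_iff_not_dvd hp.out]
  intro hdvd
  rcases (Nat.Prime.dvd_mul hp.out).1 hdvd with h | h
  · exact not_dvd_M p l hl u h
  · have h1 : p ∣ p ^ l * (y.val) := Dvd.dvd.mul_right (dvd_pow_self p (by omega)) _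
    have h2 : p ∣ p ^ (2*l) * ((y^2 * (2 : ZMod (p^(l+1)))⁻¹).val) :=
      Dvd.dvd.mul_right (dvd_pow_self p (by omega)) _
    have h3 := Nat.dvd_sub h (Nat.dvd_add h1 h2)
    rw [show 1 + p^l * (y.val) + p^(2*l) * ((y^2 * (2 : ZMod (p^(l+1)))⁻¹).val)
        - (p^l * (y.val) + p^(2*l) * ((y^2 * (2 : ZMod (p^(l+1)))⁻¹).val)) = 1 from by omega] at h3
    exact Nat.Prime.not_dvd_one hp.out h3

noncomputable def phiU (p l : ℕ) [hp : Fact p.Prime] (hl : 1 ≤ l)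
    (uy : (ZMod (p^l))ˣ × ZMod (p^(l+1))) : (ZMod (p^(2*l+1)))ˣ :=
  ZMod.unitOfCoprime _ (coprime_Nuy p l hl uy.1 uy.2)

lemma coprime_M (p l : ℕ) [hp : Fact p.Prime] (hl : 1 ≤ l) (u : (ZMod (p^l))ˣ) (n : ℕ) :
    Nat.Coprime ((u : ZMod (p^l)).val) (p^n) :=
  Nat.Coprime.pow_right n
    ((Nat.Prime.coprime_iff_not_dvd hp.out).2 (not_dvd_M p l hl u)).symm

section
variable (p l : ℕ) [hp : Fact p.Prime]

lemma phiU_injective (hl : 1 ≤ l) : Function.Injective (phiU p l hl) := by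
  have hpne : (p : ℕ) ≠ 0 := hp.out.ne_zero
  haveI : NeZero (p ^ l) := ⟨pow_ne_zero _ hpne⟩
  haveI : NeZero (p ^ (l+1)) := ⟨pow_ne_zero _ hpne⟩
  haveI : NeZero (p ^ (2*l+1)) := ⟨pow_ne_zero _ hpne⟩
  rintro ⟨u, y⟩ ⟨u', y'⟩ h
  have hN : ((Nuy p l u y : ZMod (p^(2*l+1)))) = ((Nuy p l u' y' : ZMod (p^(2*l+1)))) := by
    have := congrArg (fun z : (ZMod (p^(2*l+1)))ˣ => (z : ZMod (p^(2*l+1)))) h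
    simpa [phiU, ZMod.coe_unitOfCoprime] using this
  have hdvd_l : (p^l : ℕ) ∣ p^(2*l+1) := pow_dvd_pow p (by omega)
  have hNl : ((Nuy p l u y : ZMod (p^l))) = ((Nuy p l u' y' : ZMod (p^l))) := by
    have := congrArg (ZMod.castHom hdvd_l (ZMod (p^l))) hN
    simpa using this
  have hppl : (p : ZMod (p^l))^l = 0 := by
    have : ((p^l : ℕ) : ZMod (p^l)) = 0 := ZMod.natCast_self _
    push_cast at this; exact this
  have hred : ∀ (v : (ZMod (p^l))ˣ) (z : ZMod (p^(l+1))),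
      ((Nuy p l v z : ZMod (p^l))) = (v : ZMod (p^l)) := by
    intro v z
    have hv : (((v : ZMod (p^l)).val : ℕ) : ZMod (p^l)) = (v : ZMod (p^l)) :=
      ZMod.natCast_rightInverse _
    rw [Nuy]
    push_cast
    linear_combination hv + (((z.val : ZMod (p^l))) * (((v : ZMod (p^l)).val : ZMod (p^l)))
      + (p : ZMod (p^l))^l * (((v : ZMod (p^l)).val : ZMod (p^l)))
        * (((z^2 * (2 : ZMod (p^(l+1)))⁻¹).val : ZMod (p^l)))) * hppl
  have huu' : u = u' := by
    have : (u : ZMod (p^l)) = (u' : ZMod (p^l)) := by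
      rw [← hred u y, ← hred u' y', hNl]
    exact Units.ext this
  subst huu'
  set M := (u : ZMod (p^l)).val with hM
  set yv := y.val with hyv
  set y'v := y'.val with hy'v
  set wv := ((y^2 * (2 : ZMod (p^(l+1)))⁻¹).val) with hwv
  set w'v := ((y'^2 * (2 : ZMod (p^(l+1)))⁻¹).val) with hw'v
  have hint : ((p:ℤ)^(2*l+1)) ∣ ((Nuy p l u y' : ℤ) - (Nuy p l u y : ℤ)) := by
    have h1 : (Nuy p l u y) ≡ (Nuy p l u y') [MOD (p^(2*l+1))] :=
      (ZMod.natCast_eq_natCast_iff _ _ _).1 hN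
    have h2 := h1.dvd
    have h3 : ((p^(2*l+1) : ℕ) : ℤ) = (p:ℤ)^(2*l+1) := by push_cast; ring
    rwa [h3] at h2
  have hfact : ((Nuy p l u y' : ℤ)) - ((Nuy p l u y : ℤ))
      = (M : ℤ) * ((p:ℤ)^l * ((y'v : ℤ) - (yv:ℤ) + (p:ℤ)^l * ((w'v:ℤ) - (wv:ℤ)))) := by
    rw [Nuy, Nuy]
    push_cast
    ring
  rw [hfact] at hint
  have hcopM : IsCoprime ((p:ℤ)^(2*l+1)) (M:ℤ) := by
    have h1 : IsCoprime ((M:ℕ) : ℤ) ((p^(2*l+1) : ℕ) : ℤ) :=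
      Nat.isCoprime_iff_coprime.2 (coprime_M p l hl u (2*l+1))
    have h2 := h1.symm
    push_cast at h2
    exact h2
  have hint2 : ((p:ℤ)^(2*l+1)) ∣ ((p:ℤ)^l * ((y'v : ℤ) - (yv:ℤ) + (p:ℤ)^l * ((w'v:ℤ) - (wv:ℤ)))) :=
    (IsCoprime.dvd_of_dvd_mul_left hcopM) hint
  have hq : ((p:ℤ)^(2*l+1)) = (p:ℤ)^l * (p:ℤ)^(l+1) := by
    rw [← pow_add]; congr 1; omega
  rw [hq] at hint2
  have hpne' : (p : ℤ) ≠ 0 := by exact_mod_cast hpne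
  have hplne : ((p:ℤ)^l) ≠ 0 := pow_ne_zero _ hpne'
  have hint3 : ((p:ℤ)^(l+1)) ∣ ((y'v : ℤ) - (yv:ℤ) + (p:ℤ)^l * ((w'v:ℤ) - (wv:ℤ))) :=
    (mul_dvd_mul_iff_left hplne).1 hint2
  have hyp : (p:ℤ) ∣ ((y'v : ℤ) - (yv:ℤ)) := by
    have h1 : (p:ℤ) ∣ ((y'v : ℤ) - (yv:ℤ) + (p:ℤ)^l * ((w'v:ℤ) - (wv:ℤ))) :=
      dvd_trans (dvd_pow_self _ (by omega : l+1 ≠ 0)) hint3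
    have h2 : (p:ℤ) ∣ (p:ℤ)^l * ((w'v:ℤ) - (wv:ℤ)) :=
      Dvd.dvd.mul_right (dvd_pow_self _ (by omega : l ≠ 0)) _
    have h3 := dvd_sub h1 h2
    simpa using h3
  have hyy' : ((yv : ZMod p)) = ((y'v : ZMod p)) := by
    have h0 : (((y'v : ℤ) - (yv : ℤ) : ℤ) : ZMod p) = 0 :=
      (ZMod.intCast_zmod_eq_zero_iff_dvd _ _).2 hyp
    push_cast at h0
    linear_combination -h0
  have hdvd_p : (p : ℕ) ∣ p^(l+1) := dvd_pow_self p (by omega)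
  have hπ : ∀ z : ZMod (p^(l+1)), (ZMod.castHom hdvd_p (ZMod p)) z = ((z.val : ZMod p)) := by
    intro z
    rw [ZMod.castHom_apply, ← ZMod.natCast_val]
  have hyc : (ZMod.castHom hdvd_p (ZMod p)) y = (ZMod.castHom hdvd_p (ZMod p)) y' := by
    rw [hπ, hπ]; exact hyy'
  have hww' : ((wv : ZMod p)) = ((w'v : ZMod p)) := by
    rw [hwv, hw'v, ← hπ, ← hπ, map_mul, map_mul, map_pow, map_pow, hyc]
  have hwp : (p:ℤ) ∣ ((w'v:ℤ) - (wv:ℤ)) := by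
    have h0 : (((w'v : ℤ) - (wv : ℤ) : ℤ) : ZMod p) = 0 := by
      push_cast
      rw [hww']; ring
    exact (ZMod.intCast_zmod_eq_zero_iff_dvd _ _).1 h0
  have h4 : ((p:ℤ)^(l+1)) ∣ (p:ℤ)^l * ((w'v:ℤ) - (wv:ℤ)) := by
    obtain ⟨c, hc⟩ := hwp
    exact ⟨c, by rw [hc, pow_succ]; ring⟩
  have h5 : ((p:ℤ)^(l+1)) ∣ ((y'v:ℤ) - (yv:ℤ)) := by
    have := dvd_sub hint3 h4
    simpa using this
  have hyfin : y = y' := by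
    have h0 : (((y'v : ℤ) - (yv : ℤ) : ℤ) : ZMod (p^(l+1))) = 0 := by
      refine (ZMod.intCast_zmod_eq_zero_iff_dvd _ _).2 ?_
      push_cast
      exact h5
    push_cast at h0
    have e1 : ((yv : ℕ) : ZMod (p^(l+1))) = y := ZMod.natCast_rightInverse _
    have e2 : ((y'v : ℕ) : ZMod (p^(l+1))) = y' := ZMod.natCast_rightInverse _
    rw [e1, e2] at h0
    linear_combination -h0
  rw [hyfin]

lemma phiU_bijective (hl : 1 ≤ l) : Function.Bijective (phiU p l hl) := by
  have hpne : (p : ℕ) ≠ 0 := hp.out.ne_zero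
  haveI : NeZero (p ^ l) := ⟨pow_ne_zero _ hpne⟩
  haveI : NeZero (p ^ (l+1)) := ⟨pow_ne_zero _ hpne⟩
  haveI : NeZero (p ^ (2*l+1)) := ⟨pow_ne_zero _ hpne⟩
  rw [Fintype.bijective_iff_injective_and_card]
  refine ⟨phiU_injective p l hl, ?_⟩
  rw [Fintype.card_prod, ZMod.card_units_eq_totient, ZMod.card_units_eq_totient, ZMod.card]
  rw [Nat.totient_prime_pow hp.out (show 0 < l by omega),
    Nat.totient_prime_pow hp.out (show 0 < 2*l+1 by omega)]
  obtain ⟨l', rfl⟩ : ∃ l', l = l'+1 := ⟨l-1, by omega⟩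
  rw [Nat.add_sub_cancel, show 2*(l'+1)+1-1 = l' + (l'+1+1) from by omega, pow_add]
  ring

lemma phiU_coe (hl : 1 ≤ l) (u : (ZMod (p^l))ˣ) (y : ZMod (p^(l+1))) :
    ((phiU p l hl (u, y) : ZMod (p^(2*l+1))))
      = (((u : ZMod (p^l)).val : ZMod (p^(2*l+1)))) *
        (1 + (p : ZMod (p^(2*l+1)))^l * (y.val : ZMod (p^(2*l+1)))
          + (p : ZMod (p^(2*l+1)))^(2*l)
            * (((y^2 * (2 : ZMod (p^(l+1)))⁻¹).val : ZMod (p^(2*l+1))))) := by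
  rw [phiU, ZMod.coe_unitOfCoprime, Nuy]
  push_cast
  ring

lemma phiU_coe_inv (hodd : p ≠ 2) (hl : 1 ≤ l) (u : (ZMod (p^l))ˣ) (y : ZMod (p^(l+1))) :
    (((phiU p l hl (u, y))⁻¹ : (ZMod (p^(2*l+1)))ˣ) : ZMod (p^(2*l+1)))
      = (((u : ZMod (p^l)).val : ZMod (p^(2*l+1))))⁻¹ *
        (1 - (p : ZMod (p^(2*l+1)))^l * (y.val : ZMod (p^(2*l+1)))
          + (p : ZMod (p^(2*l+1)))^(2*l)
            * (((y^2 * (2 : ZMod (p^(l+1)))⁻¹).val : ZMod (p^(2*l+1))))) := by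
  have hpne : (p : ℕ) ≠ 0 := hp.out.ne_zero
  haveI : NeZero (p ^ (l+1)) := ⟨pow_ne_zero _ hpne⟩
  haveI : NeZero (p ^ (2*l+1)) := ⟨pow_ne_zero _ hpne⟩
  set q := p^(2*l+1) with hq
  set v := phiU p l hl (u, y) with hv
  set M : ℕ := (u : ZMod (p^l)).val with hM
  set yv : ℕ := y.val with hyv
  set wv : ℕ := ((y^2 * (2 : ZMod (p^(l+1)))⁻¹).val) with hwv
  set z : ZMod q := ((M : ZMod q))⁻¹ *
    (1 - (p : ZMod q)^l * (yv : ZMod q) + (p : ZMod q)^(2*l) * (wv : ZMod q)) with hz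
  have hPq : (p : ZMod q)^(2*l+1) = 0 := by
    have : ((p^(2*l+1) : ℕ) : ZMod q) = 0 := ZMod.natCast_self _
    push_cast at this
    exact this
  have h2w : (p:ℤ) ∣ (2 * (wv:ℤ) - (yv:ℤ)^2) := by
    have hco2 : Nat.Coprime 2 (p^(l+1)) := by
      refine Nat.Coprime.pow_right _ ?_
      have : ¬ (p ∣ 2) := fun h =>
        hodd ((Nat.prime_dvd_prime_iff_eq hp.out Nat.prime_two).1 h)
      exact (Nat.coprime_comm.1 ((Nat.Prime.coprime_iff_not_dvd hp.out).2 this))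
    have h21 : (2 : ZMod (p^(l+1))) * (2 : ZMod (p^(l+1)))⁻¹ = 1 := by
      have := ZMod.coe_mul_inv_eq_one (n := p^(l+1)) 2 hco2
      push_cast at this
      exact this
    have hcast : ((2 * wv : ℕ) : ZMod (p^(l+1))) = ((yv^2 : ℕ) : ZMod (p^(l+1))) := by
      push_cast
      rw [hwv, ZMod.natCast_val, ZMod.cast_id, hyv, ZMod.natCast_val, ZMod.cast_id]
      calc 2 * (y^2 * (2 : ZMod (p^(l+1)))⁻¹)
          = (2 * (2 : ZMod (p^(l+1)))⁻¹) * y^2 := by ring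
        _ = y^2 := by rw [h21, one_mul]
    have hmod : (2 * wv) ≡ (yv^2) [MOD p^(l+1)] := (ZMod.natCast_eq_natCast_iff _ _ _).1 hcast
    have hdvd := hmod.dvd
    have h1 : ((p^(l+1) : ℕ) : ℤ) ∣ ((yv^2 : ℕ) : ℤ) - ((2*wv : ℕ) : ℤ) := by exact_mod_cast hdvd
    have h2 : (p:ℤ) ∣ ((yv^2 : ℕ) : ℤ) - ((2*wv : ℕ) : ℤ) :=
      dvd_trans (by exact_mod_cast dvd_pow_self (p:ℤ) (show l+1 ≠ 0 by omega)) h1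
    have h3 : (2 * (wv:ℤ) - (yv:ℤ)^2) = -(((yv^2 : ℕ) : ℤ) - ((2*wv : ℕ) : ℤ)) := by push_cast; ring
    rw [h3]
    exact dvd_neg.mpr h2
  have key2 : (p : ZMod q)^(2*l) * (2 * (wv : ZMod q)) = (p : ZMod q)^(2*l) * ((yv : ZMod q))^2 := by
    obtain ⟨k, hk⟩ := h2w
    have hcast : ((2 * (wv:ℤ) - (yv:ℤ)^2 : ℤ) : ZMod q) = (p : ZMod q) * ((k : ℤ) : ZMod q) := by
      rw [hk]; push_cast; ring
    push_cast at hcast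
    have h1 : (2 * (wv : ZMod q) - ((yv : ZMod q))^2) = (p : ZMod q) * ((k : ℤ) : ZMod q) := by
      exact_mod_cast hcast
    calc (p : ZMod q)^(2*l) * (2 * (wv : ZMod q))
        = (p : ZMod q)^(2*l) * (((yv : ZMod q))^2 + (p : ZMod q) * ((k : ℤ) : ZMod q)) := by
          rw [← h1]; ring
      _ = (p : ZMod q)^(2*l) * ((yv : ZMod q))^2 + (p : ZMod q)^(2*l+1) * ((k : ℤ) : ZMod q) := by
          rw [pow_succ]; ring
      _ = (p : ZMod q)^(2*l) * ((yv : ZMod q))^2 := by rw [hPq]; ring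
  have hMc : (M : ZMod q) * ((M : ZMod q))⁻¹ = 1 :=
    ZMod.coe_mul_inv_eq_one M (coprime_M p l hl u (2*l+1))
  have hmul : (v : ZMod q) * z = 1 := by
    rw [phiU_coe p l hl u y, hz]
    have e4 : (p : ZMod q)^(4*l) = 0 := by
      rw [show 4*l = (2*l+1) + (2*l-1) from by omega, pow_add, hPq, zero_mul]
    linear_combination (1 - (p : ZMod q)^l * (yv : ZMod q) + (p : ZMod q)^(2*l) * (wv : ZMod q))
        * (1 + (p : ZMod q)^l * (yv : ZMod q) + (p : ZMod q)^(2*l) * (wv : ZMod q)) * hMc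
      + key2 + ((wv : ZMod q))^2 * e4
  have hvinv : ((v⁻¹ : (ZMod q)ˣ) : ZMod q) = z := by
    have h1 : ((v⁻¹ : (ZMod q)ˣ) : ZMod q) * ((v : ZMod q) * z) = ((v⁻¹ : (ZMod q)ˣ) : ZMod q) := by
      rw [hmul, mul_one]
    have h2 : ((v⁻¹ : (ZMod q)ˣ) : ZMod q) * (v : ZMod q) = 1 := by
      rw [← Units.val_mul, inv_mul_cancel, Units.val_one]
    calc ((v⁻¹ : (ZMod q)ˣ) : ZMod q) = ((v⁻¹ : (ZMod q)ˣ) : ZMod q) * ((v : ZMod q) * z) := h1.symm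
      _ = (((v⁻¹ : (ZMod q)ˣ) : ZMod q) * (v : ZMod q)) * z := by ring
      _ = z := by rw [h2, one_mul]
  rw [hvinv, hz]
end

/-- For `q = p^{2l+1}` an odd power of an odd prime and `χ` a character with parameter
`t_χ ∈ ℤ/p^{l+1}ℤ`, the Kloosterman sum `K_q(a,b,χ)` equals
`p^l ∑_x e_q(a x̃ + b x̃⁻¹) χ(x̃) 𝒢(x̃)`, the sum being over `x ∈ (ℤ/p^lℤ)^*` with
`h(x) ≡ 0 (mod p^l)`, where `x̃` is the canonical lift of `x`,
`h(x) = ax² + t_χ x - b`, and `𝒢(x̃) = ∑_{y mod p} e_p(d(x̃)y² + p^{-l}h(x̃)y)` with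
`d(x) = ((p-1)/2) t_χ x² + bx`. -/
theorem kloos_eq_odd_power
    (p l : ℕ) [Fact p.Prime] (hodd : p ≠ 2) (hl : 1 ≤ l)
    (χ : MulChar (ZMod (p ^ (2 * l + 1))) ℂ) (t : ZMod (p ^ (l + 1)))
    (ht : ∀ x : ZMod (p ^ (l + 1)),
      χ (1 + (p : ZMod (p ^ (2 * l + 1))) ^ l * (x.val : ZMod (p ^ (2 * l + 1))) +
          (p : ZMod (p ^ (2 * l + 1))) ^ (2 * l) *
            (((x ^ 2 * (2 : ZMod (p ^ (l + 1)))⁻¹).val : ZMod (p ^ (2 * l + 1))))) =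
        eZMod (p ^ (l + 1)) (t * x))
    (a b : (ZMod (p ^ (2 * l + 1)))ˣ) :
    Kloos (p ^ (2 * l + 1)) (a : ZMod (p ^ (2 * l + 1))) (b : ZMod (p ^ (2 * l + 1))) χ =
      (p : ℂ) ^ l *
        ∑ x ∈ Finset.univ.filter (fun x : (ZMod (p ^ l))ˣ =>
            (p : ℤ) ^ l ∣
              hInt (p ^ (2 * l + 1)) (a : ZMod (p ^ (2 * l + 1))) (b : ZMod (p ^ (2 * l + 1)))
                t.val (x : ZMod (p ^ l)).val),
          eZMod (p ^ (2 * l + 1))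
              ((a : ZMod (p ^ (2 * l + 1))) * (((x : ZMod (p ^ l)).val : ZMod (p ^ (2 * l + 1)))) +
                (b : ZMod (p ^ (2 * l + 1))) *
                  (((x : ZMod (p ^ l)).val : ZMod (p ^ (2 * l + 1))))⁻¹) *
            χ (((x : ZMod (p ^ l)).val : ZMod (p ^ (2 * l + 1)))) *
            gaussSum' p
              (dInt p (p ^ (2 * l + 1)) (b : ZMod (p ^ (2 * l + 1))) t.val (x : ZMod (p ^ l)).val)
              (hInt (p ^ (2 * l + 1)) (a : ZMod (p ^ (2 * l + 1))) (b : ZMod (p ^ (2 * l + 1)))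
                  t.val (x : ZMod (p ^ l)).val / (p : ℤ) ^ l) := by
  classical
  have hpf : Fact p.Prime := inferInstance
  have hpne : (p : ℕ) ≠ 0 := hpf.out.ne_zero
  have hpne' : (p : ℤ) ≠ 0 := by exact_mod_cast hpne
  haveI : NeZero p := ⟨hpne⟩
  haveI : NeZero (p ^ l) := ⟨pow_ne_zero _ hpne⟩
  haveI : NeZero (p ^ (l+1)) := ⟨pow_ne_zero _ hpne⟩
  haveI : NeZero (p ^ (2*l+1)) := ⟨pow_ne_zero _ hpne⟩
  have hbij := phiU_bijective p l hl
  set F : (ZMod (p^(2*l+1)))ˣ → ℂ := fun x =>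
    eZMod (p^(2*l+1)) ((a : ZMod (p^(2*l+1))) * (x : ZMod (p^(2*l+1)))
      + (b : ZMod (p^(2*l+1))) * ((x⁻¹ : (ZMod (p^(2*l+1)))ˣ) : ZMod (p^(2*l+1))))
      * χ (x : ZMod (p^(2*l+1))) with hF
  have inner : ∀ u : (ZMod (p^l))ˣ,
      ∑ y : ZMod (p^(l+1)), F (phiU p l hl (u, y))
      = (p:ℂ)^l * (if (p:ℤ)^l ∣ hInt (p^(2*l+1)) (a : ZMod (p^(2*l+1))) (b : ZMod (p^(2*l+1)))
            t.val ((u : ZMod (p^l)).val)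
        then eZMod (p^(2*l+1)) ((a : ZMod (p^(2*l+1))) * (((u : ZMod (p^l)).val : ZMod (p^(2*l+1))))
              + (b : ZMod (p^(2*l+1))) * (((u : ZMod (p^l)).val : ZMod (p^(2*l+1))))⁻¹)
            * χ (((u : ZMod (p^l)).val : ZMod (p^(2*l+1))))
            * gaussSum' p
                (dInt p (p^(2*l+1)) (b : ZMod (p^(2*l+1))) t.val ((u : ZMod (p^l)).val))
                (hInt (p^(2*l+1)) (a : ZMod (p^(2*l+1))) (b : ZMod (p^(2*l+1))) t.val
                    ((u : ZMod (p^l)).val) / (p:ℤ)^l)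
        else 0) := by
    intro u
    set M : ℕ := ((u : ZMod (p^l))).val with hMdef
    set av : ℕ := ((a : ZMod (p^(2*l+1)))).val with havdef
    set bv : ℕ := ((b : ZMod (p^(2*l+1)))).val with hbvdef
    set tv : ℕ := t.val with htvdef
    set cM : ℕ := (((M : ZMod (p^(2*l+1))))⁻¹).val with hcMdef
    set i2 : ℕ := (((2 : ZMod (p^(l+1)))⁻¹)).val with hi2def
    -- basic cast facts
    have hacast : ((av : ℕ) : ZMod (p^(2*l+1))) = (a : ZMod (p^(2*l+1))) :=
      ZMod.natCast_rightInverse _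
    have hbcast : ((bv : ℕ) : ZMod (p^(2*l+1))) = (b : ZMod (p^(2*l+1))) :=
      ZMod.natCast_rightInverse _
    have hccast : ((cM : ℕ) : ZMod (p^(2*l+1))) = ((M : ZMod (p^(2*l+1))))⁻¹ :=
      ZMod.natCast_rightInverse _
    have htcast : ((tv : ℕ) : ZMod (p^(l+1))) = t := ZMod.natCast_rightInverse _
    have hi2cast : ((i2 : ℕ) : ZMod (p^(l+1))) = ((2 : ZMod (p^(l+1)))⁻¹) :=
      ZMod.natCast_rightInverse _
    have hMc : (M : ZMod (p^(2*l+1))) * ((M : ZMod (p^(2*l+1))))⁻¹ = 1 :=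
      ZMod.coe_mul_inv_eq_one M (coprime_M p l hl u (2*l+1))
    obtain ⟨K, hK⟩ : ∃ K : ℤ, (M:ℤ)*(cM:ℤ) - 1 = (p:ℤ)^(2*l+1) * K := by
      have h0 : (((M:ℤ)*(cM:ℤ) - 1 : ℤ) : ZMod (p^(2*l+1))) = 0 := by
        push_cast
        rw [hccast, hMc]
        ring
      obtain ⟨K, hK⟩ := (ZMod.intCast_zmod_eq_zero_iff_dvd _ _).1 h0
      refine ⟨K, ?_⟩
      rw [hK]
      push_cast
      ring
    -- `2⁻¹` facts
    have hco2 : Nat.Coprime 2 (p^(l+1)) := by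
      refine Nat.Coprime.pow_right _ ?_
      have : ¬ (p ∣ 2) := fun h =>
        hodd ((Nat.prime_dvd_prime_iff_eq hpf.out Nat.prime_two).1 h)
      exact (Nat.coprime_comm.1 ((Nat.Prime.coprime_iff_not_dvd hpf.out).2 this))
    have h21 : (2 : ZMod (p^(l+1))) * (2 : ZMod (p^(l+1)))⁻¹ = 1 := by
      have := ZMod.coe_mul_inv_eq_one (n := p^(l+1)) 2 hco2
      push_cast at this
      exact this
    -- the inner-sum integrand
    set g : ℤ → ℂ := fun k => E (p^(2*l+1))
      ((av:ℤ)*M + (bv:ℤ)*cM + (p:ℤ)^l*k*((av:ℤ)*M - (bv:ℤ)*cM)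
        + (p:ℤ)^(2*l)*((i2:ℤ)*k^2)*((av:ℤ)*M + (bv:ℤ)*cM) + (p:ℤ)^l*(tv:ℤ)*k) with hgdef
    -- pointwise evaluation of the summand
    have hpoint : ∀ y : ZMod (p^(l+1)),
        F (phiU p l hl (u, y)) = χ ((M : ZMod (p^(2*l+1)))) * g ((y.val : ℤ)) := by
      intro y
      set yv : ℕ := y.val with hyvdef
      set wv : ℕ := ((y^2 * (2 : ZMod (p^(l+1)))⁻¹).val) with hwvdef
      -- p ∣ wv - i2 * yv²
      have hwmod : (p:ℤ) ∣ ((wv:ℤ) - (i2:ℤ)*(yv:ℤ)^2) := by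
        have h0 : (((wv:ℤ) - (i2:ℤ)*(yv:ℤ)^2 : ℤ) : ZMod (p^(l+1))) = 0 := by
          push_cast
          rw [hwvdef, ZMod.natCast_val, ZMod.cast_id, hi2cast, hyvdef,
            ZMod.natCast_val, ZMod.cast_id]
          ring
        have h1 := (ZMod.intCast_zmod_eq_zero_iff_dvd _ _).1 h0
        have h2 : ((p^(l+1) : ℕ) : ℤ) = (p:ℤ)^(l+1) := by push_cast; ring
        rw [h2] at h1
        exact dvd_trans (dvd_pow_self _ (by omega : l+1 ≠ 0)) h1
      have harg : (a : ZMod (p^(2*l+1))) * ((phiU p l hl (u, y) : ZMod (p^(2*l+1))))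
          + (b : ZMod (p^(2*l+1))) * (((phiU p l hl (u, y))⁻¹ : (ZMod (p^(2*l+1)))ˣ) : ZMod (p^(2*l+1)))
          = ((((av:ℤ)*M + (bv:ℤ)*cM + (p:ℤ)^l*(yv:ℤ)*((av:ℤ)*M - (bv:ℤ)*cM)
              + (p:ℤ)^(2*l)*(wv:ℤ)*((av:ℤ)*M + (bv:ℤ)*cM) : ℤ)) : ZMod (p^(2*l+1))) := by
        rw [phiU_coe p l hl u y, phiU_coe_inv p l hodd hl u y]
        rw [← hacast, ← hbcast, ← hccast]
        push_cast
        ring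
      have hchi : χ ((phiU p l hl (u, y) : ZMod (p^(2*l+1))))
          = χ ((M : ZMod (p^(2*l+1)))) * eZMod (p^(l+1)) (t * y) := by
        rw [phiU_coe p l hl u y, map_mul, ht y]
      have hQfac : eZMod (p^(l+1)) (t * y) = E (p^(2*l+1)) ((p:ℤ)^l * ((tv:ℤ)*(yv:ℤ))) := by
        rw [eZMod_eq_E]
        have e1 : E (p^(l+1)) (((t*y).val : ℤ)) = E (p^(l+1)) ((tv:ℤ)*(yv:ℤ)) := by
          apply E_congr
          have h0 : (((((t*y).val : ℤ)) - (tv:ℤ)*(yv:ℤ) : ℤ) : ZMod (p^(l+1))) = 0 := by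
            push_cast
            rw [ZMod.natCast_val, ZMod.cast_id, htcast, hyvdef, ZMod.natCast_val, ZMod.cast_id]
            ring
          exact (ZMod.intCast_zmod_eq_zero_iff_dvd _ _).1 h0
        rw [e1]
        have e2 := E_mul_left (p^l) (p^(l+1)) (pow_ne_zero _ hpne) ((tv:ℤ)*(yv:ℤ))
        rw [show p^l * p^(l+1) = p^(2*l+1) from by rw [← pow_add]; congr 1; omega] at e2
        rw [show ((p^l : ℕ) : ℤ) = (p:ℤ)^l from by push_cast; ring] at e2
        rw [e2]
      have hgval : eZMod (p^(2*l+1))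
            ((((av:ℤ)*M + (bv:ℤ)*cM + (p:ℤ)^l*(yv:ℤ)*((av:ℤ)*M - (bv:ℤ)*cM)
              + (p:ℤ)^(2*l)*(wv:ℤ)*((av:ℤ)*M + (bv:ℤ)*cM) : ℤ) : ZMod (p^(2*l+1))))
            * E (p^(2*l+1)) ((p:ℤ)^l * ((tv:ℤ)*(yv:ℤ)))
          = g ((yv : ℤ)) := by
        rw [← E_eq_eZMod, ← E_add, hgdef]
        -- replace wv by i2*yv² modulo q
        apply E_congr
        rw [show ((p^(2*l+1) : ℕ) : ℤ) = (p:ℤ)^(2*l) * (p:ℤ) from by push_cast; rw [← pow_succ]]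
        obtain ⟨k, hk⟩ := hwmod
        refine ⟨((((av:ℤ)*M + (bv:ℤ)*cM)) * k), ?_⟩
        linear_combination ((p:ℤ)^(2*l) * ((av:ℤ)*M + (bv:ℤ)*cM)) * hk
      calc F (phiU p l hl (u, y))
          = eZMod (p^(2*l+1)) ((a : ZMod (p^(2*l+1))) * ((phiU p l hl (u, y) : ZMod (p^(2*l+1))))
              + (b : ZMod (p^(2*l+1)))
                * (((phiU p l hl (u, y))⁻¹ : (ZMod (p^(2*l+1)))ˣ) : ZMod (p^(2*l+1))))
            * χ ((phiU p l hl (u, y) : ZMod (p^(2*l+1)))) := rfl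
        _ = eZMod (p^(2*l+1))
            ((((av:ℤ)*M + (bv:ℤ)*cM + (p:ℤ)^l*(yv:ℤ)*((av:ℤ)*M - (bv:ℤ)*cM)
              + (p:ℤ)^(2*l)*(wv:ℤ)*((av:ℤ)*M + (bv:ℤ)*cM) : ℤ) : ZMod (p^(2*l+1))))
            * (χ ((M : ZMod (p^(2*l+1)))) * E (p^(2*l+1)) ((p:ℤ)^l * ((tv:ℤ)*(yv:ℤ)))) := by
            rw [harg, hchi, hQfac]
        _ = χ ((M : ZMod (p^(2*l+1)))) * g ((yv : ℤ)) := by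
            rw [← hgval]; ring
    -- sum over y
    rw [Finset.sum_congr rfl (fun y _ => hpoint y), ← Finset.mul_sum]
    have hsum1 : ∑ y : ZMod (p^(l+1)), g ((y.val : ℤ))
        = ∑ k ∈ Finset.range (p^(l+1)), g ((k : ℤ)) := by
      rw [sum_zmod (p^(l+1)) (fun y => g ((y.val : ℤ)))]
      refine Finset.sum_congr rfl fun k hk => ?_
      rw [ZMod.val_cast_of_lt (Finset.mem_range.1 hk)]
    have hsum2 : ∑ k ∈ Finset.range (p^(l+1)), g ((k : ℤ))
        = ∑ z ∈ Finset.range p, ∑ w ∈ Finset.range (p^l), g (((z + p*w : ℕ) : ℤ)) := by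
      rw [show (p^(l+1) : ℕ) = p * p^l from by rw [pow_succ]; ring]
      exact sum_range_mul p (p^l) (Nat.pos_of_ne_zero hpne) (fun k => g ((k:ℤ)))
    -- splitting of the summand
    set g1 : ℕ → ℂ := fun z => E (p^(2*l+1))
      ((av:ℤ)*M + (bv:ℤ)*cM + (p:ℤ)^l*(z:ℤ)*((av:ℤ)*M - (bv:ℤ)*cM)
        + (p:ℤ)^(2*l)*((i2:ℤ)*(z:ℤ)^2)*((av:ℤ)*M + (bv:ℤ)*cM) + (p:ℤ)^l*(tv:ℤ)*(z:ℤ)) with hg1def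
    have hsplit : ∀ z w : ℕ, g (((z + p*w : ℕ) : ℤ))
        = g1 z * E (p^l) ((w:ℤ) * ((av:ℤ)*M - (bv:ℤ)*cM + (tv:ℤ))) := by
      intro z w
      have hdec : (((z + p*w : ℕ) : ℤ)) = (z:ℤ) + (p:ℤ)*(w:ℤ) := by push_cast; ring
      rw [hgdef]
      simp only []
      rw [hdec]
      have harg1 : (av:ℤ)*M + (bv:ℤ)*cM
            + (p:ℤ)^l*((z:ℤ) + (p:ℤ)*(w:ℤ))*((av:ℤ)*M - (bv:ℤ)*cM)
            + (p:ℤ)^(2*l)*((i2:ℤ)*((z:ℤ) + (p:ℤ)*(w:ℤ))^2)*((av:ℤ)*M + (bv:ℤ)*cM)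
            + (p:ℤ)^l*(tv:ℤ)*((z:ℤ) + (p:ℤ)*(w:ℤ))
          = ((av:ℤ)*M + (bv:ℤ)*cM + (p:ℤ)^l*(z:ℤ)*((av:ℤ)*M - (bv:ℤ)*cM)
              + (p:ℤ)^(2*l)*((i2:ℤ)*(z:ℤ)^2)*((av:ℤ)*M + (bv:ℤ)*cM) + (p:ℤ)^l*(tv:ℤ)*(z:ℤ))
            + ((p:ℤ)^(l+1) * ((w:ℤ) * ((av:ℤ)*M - (bv:ℤ)*cM + (tv:ℤ)))
              + (p:ℤ)^(2*l+1) * ((i2:ℤ)*(2*(z:ℤ)*(w:ℤ) + (p:ℤ)*(w:ℤ)^2)*((av:ℤ)*M + (bv:ℤ)*cM))) := by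
        ring
      rw [harg1, E_add (p^(2*l+1))
        ((av:ℤ)*M + (bv:ℤ)*cM + (p:ℤ)^l*(z:ℤ)*((av:ℤ)*M - (bv:ℤ)*cM)
          + (p:ℤ)^(2*l)*((i2:ℤ)*(z:ℤ)^2)*((av:ℤ)*M + (bv:ℤ)*cM) + (p:ℤ)^l*(tv:ℤ)*(z:ℤ))
        ((p:ℤ)^(l+1) * ((w:ℤ) * ((av:ℤ)*M - (bv:ℤ)*cM + (tv:ℤ)))
          + (p:ℤ)^(2*l+1) * ((i2:ℤ)*(2*(z:ℤ)*(w:ℤ) + (p:ℤ)*(w:ℤ)^2)*((av:ℤ)*M + (bv:ℤ)*cM))),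
        E_add (p^(2*l+1))
        ((p:ℤ)^(l+1) * ((w:ℤ) * ((av:ℤ)*M - (bv:ℤ)*cM + (tv:ℤ))))
        ((p:ℤ)^(2*l+1) * ((i2:ℤ)*(2*(z:ℤ)*(w:ℤ) + (p:ℤ)*(w:ℤ)^2)*((av:ℤ)*M + (bv:ℤ)*cM)))]
      have hone : E (p^(2*l+1))
          ((p:ℤ)^(2*l+1) * ((i2:ℤ)*(2*(z:ℤ)*(w:ℤ) + (p:ℤ)*(w:ℤ)^2)*((av:ℤ)*M + (bv:ℤ)*cM))) = 1 := by
        rw [show (p:ℤ)^(2*l+1) = ((p^(2*l+1) : ℕ) : ℤ) from by push_cast; ring]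
        exact E_intCast_mul_eq_one _ _
      have hmid : E (p^(2*l+1)) ((p:ℤ)^(l+1) * ((w:ℤ) * ((av:ℤ)*M - (bv:ℤ)*cM + (tv:ℤ))))
          = E (p^l) ((w:ℤ) * ((av:ℤ)*M - (bv:ℤ)*cM + (tv:ℤ))) := by
        have e2 := E_mul_left (p^(l+1)) (p^l) (pow_ne_zero _ hpne)
          ((w:ℤ) * ((av:ℤ)*M - (bv:ℤ)*cM + (tv:ℤ)))
        rw [show p^(l+1) * p^l = p^(2*l+1) from by rw [← pow_add]; congr 1; omega] at e2
        rw [show ((p^(l+1) : ℕ) : ℤ) = (p:ℤ)^(l+1) from by push_cast; ring] at e2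
        exact e2
      rw [hone, hmid, mul_one]
    rw [hsum1, hsum2]
    rw [Finset.sum_congr rfl (fun z _ => Finset.sum_congr rfl (fun w _ => hsplit z w))]
    have hfac : ∑ z ∈ Finset.range p, ∑ w ∈ Finset.range (p^l),
          g1 z * E (p^l) ((w:ℤ) * ((av:ℤ)*M - (bv:ℤ)*cM + (tv:ℤ)))
        = (∑ z ∈ Finset.range p, g1 z)
          * (if ((p^l : ℕ) : ℤ) ∣ ((av:ℤ)*M - (bv:ℤ)*cM + (tv:ℤ)) then ((p^l : ℕ) : ℂ) else 0) := by
      have hw : ∀ z ∈ Finset.range p,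
          (∑ w ∈ Finset.range (p^l), g1 z * E (p^l) ((w:ℤ) * ((av:ℤ)*M - (bv:ℤ)*cM + (tv:ℤ))))
            = g1 z * (if ((p^l : ℕ) : ℤ) ∣ ((av:ℤ)*M - (bv:ℤ)*cM + (tv:ℤ))
                then ((p^l : ℕ) : ℂ) else 0) := by
        intro z _
        rw [← Finset.mul_sum, sum_E_eq_ite (p^l) (pow_ne_zero _ hpne)]
      rw [Finset.sum_congr rfl hw, ← Finset.sum_mul]
    rw [hfac]
    -- translate the divisibility condition
    have hplcast : ((p^l : ℕ) : ℤ) = (p:ℤ)^l := by push_cast; ring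
    have hMD : (M:ℤ) * ((av:ℤ)*M - (bv:ℤ)*cM + (tv:ℤ))
        = hInt (p^(2*l+1)) (a : ZMod (p^(2*l+1))) (b : ZMod (p^(2*l+1))) tv M
          - (bv:ℤ)*((p:ℤ)^(2*l+1))*K := by
      rw [hInt, ← havdef, ← hbvdef]
      linear_combination (-(bv:ℤ))*hK
    have hsmall : (p:ℤ)^l ∣ (bv:ℤ)*((p:ℤ)^(2*l+1))*K :=
      ⟨(bv:ℤ)*(p:ℤ)^(l+1)*K, by rw [show (2*l+1) = l + (l+1) from by omega, pow_add]; ring⟩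
    have hcopMp : IsCoprime ((p:ℤ)^l) (M:ℤ) := by
      have h1 : IsCoprime ((M:ℕ) : ℤ) ((p^l : ℕ) : ℤ) :=
        Nat.isCoprime_iff_coprime.2 (coprime_M p l hl u l)
      have h2 := h1.symm
      push_cast at h2
      exact h2
    have hiffD : (((p^l : ℕ) : ℤ) ∣ ((av:ℤ)*M - (bv:ℤ)*cM + (tv:ℤ)))
        ↔ ((p:ℤ)^l ∣ hInt (p^(2*l+1)) (a : ZMod (p^(2*l+1))) (b : ZMod (p^(2*l+1))) tv M) := by
      rw [hplcast]
      constructor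
      · intro h
        have h1 : (p:ℤ)^l ∣ (M:ℤ) * ((av:ℤ)*M - (bv:ℤ)*cM + (tv:ℤ)) := h.mul_left _
        rw [hMD] at h1
        have h3 := dvd_add h1 hsmall
        simpa using h3
      · intro h
        have h1 : (p:ℤ)^l ∣ (M:ℤ) * ((av:ℤ)*M - (bv:ℤ)*cM + (tv:ℤ)) := by
          rw [hMD]
          exact dvd_sub h hsmall
        exact hcopMp.dvd_of_dvd_mul_left h1
    by_cases hcond : (p:ℤ)^l ∣ hInt (p^(2*l+1)) (a : ZMod (p^(2*l+1))) (b : ZMod (p^(2*l+1))) tv M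
    swap
    · rw [if_neg hcond, if_neg (fun hh => hcond (hiffD.1 hh))]
      ring
    rw [if_pos hcond, if_pos (hiffD.2 hcond)]
    obtain ⟨D', hD'⟩ := hiffD.2 hcond
    set eI : ℤ := hInt (p^(2*l+1)) (a : ZMod (p^(2*l+1))) (b : ZMod (p^(2*l+1))) tv M / (p:ℤ)^l
      with heIdef
    have heI : (p:ℤ)^l * eI
        = hInt (p^(2*l+1)) (a : ZMod (p^(2*l+1))) (b : ZMod (p^(2*l+1))) tv M :=
      Int.mul_ediv_cancel' hcond
    have hplne : ((p:ℤ)^l) ≠ 0 := pow_ne_zero _ hpne'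
    -- the sum over z is a Gauss sum
    have hg1z : ∀ z ∈ Finset.range p, g1 z
        = E (p^(2*l+1)) ((av:ℤ)*M + (bv:ℤ)*cM)
          * E p (((i2:ℤ)*((av:ℤ)*M + (bv:ℤ)*cM))*(z:ℤ)^2 + D'*(z:ℤ)) := by
      intro z _
      rw [hg1def]
      simp only []
      have harg : (av:ℤ)*M + (bv:ℤ)*cM + (p:ℤ)^l*(z:ℤ)*((av:ℤ)*M - (bv:ℤ)*cM)
            + (p:ℤ)^(2*l)*((i2:ℤ)*(z:ℤ)^2)*((av:ℤ)*M + (bv:ℤ)*cM) + (p:ℤ)^l*(tv:ℤ)*(z:ℤ)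
          = ((av:ℤ)*M + (bv:ℤ)*cM)
            + (p:ℤ)^(2*l) * ((((i2:ℤ)*((av:ℤ)*M + (bv:ℤ)*cM))*(z:ℤ)^2 + D'*(z:ℤ))) := by
        linear_combination ((p:ℤ)^l*(z:ℤ))*hD' + ((p:ℤ)^l*(z:ℤ)*D')*hplcast
      rw [harg, E_add ((p^(2*l+1)))
        ((av:ℤ)*M + (bv:ℤ)*cM)
        ((p:ℤ)^(2*l) * ((((i2:ℤ)*((av:ℤ)*M + (bv:ℤ)*cM))*(z:ℤ)^2 + D'*(z:ℤ))))]
      congr 1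
      have e2 := E_mul_left (p^(2*l)) p (pow_ne_zero _ hpne)
        ((((i2:ℤ)*((av:ℤ)*M + (bv:ℤ)*cM))*(z:ℤ)^2 + D'*(z:ℤ)))
      rw [show p^(2*l) * p = p^(2*l+1) from by rw [← pow_succ]] at e2
      rw [show ((p^(2*l) : ℕ) : ℤ) = (p:ℤ)^(2*l) from by push_cast; ring] at e2
      exact e2
    have hgsum : ∑ z ∈ Finset.range p, g1 z
        = E (p^(2*l+1)) ((av:ℤ)*M + (bv:ℤ)*cM)
          * gaussSum' p ((i2:ℤ)*((av:ℤ)*M + (bv:ℤ)*cM)) D' := by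
      rw [Finset.sum_congr rfl hg1z, ← Finset.mul_sum, gaussSum'_eq_sum_range]
    -- substitution in the Gauss sum
    have hMp : ((M : ZMod p)) ≠ 0 := by
      intro h
      exact not_dvd_M p l hl u ((ZMod.natCast_eq_zero_iff M p).1 h)
    have hdvdp1 : (p : ℕ) ∣ p^(l+1) := dvd_pow_self p (by omega)
    have f1 : (M : ZMod p) * (cM : ZMod p) = 1 := by
      have h0 : (((M:ℤ)*(cM:ℤ) - 1 : ℤ) : ZMod p) = (((p:ℤ)^(2*l+1)*K : ℤ) : ZMod p) := by
        rw [hK]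
      push_cast at h0
      rw [ZMod.natCast_self] at h0
      rw [zero_pow (by omega : 2*l+1 ≠ 0)] at h0
      linear_combination h0
    have f2 : (av : ZMod p) * (M : ZMod p)^2 + (tv : ZMod p) * (M : ZMod p) - (bv : ZMod p) = 0 := by
      have h0 : ((hInt (p^(2*l+1)) (a : ZMod (p^(2*l+1))) (b : ZMod (p^(2*l+1))) tv M : ℤ) : ZMod p)
          = (((p:ℤ)^l * eI : ℤ) : ZMod p) := by rw [heI]
      rw [hInt, ← havdef, ← hbvdef] at h0
      push_cast at h0
      rw [ZMod.natCast_self] at h0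
      rw [zero_pow (by omega : l ≠ 0)] at h0
      linear_combination h0
    have f3 : (2 : ZMod p) * (i2 : ZMod p) = 1 := by
      have h1 : ((2 * i2 : ℕ) : ZMod (p^(l+1))) = ((1 : ℕ) : ZMod (p^(l+1))) := by
        push_cast
        rw [hi2cast]
        exact h21
      have h2 := congrArg (ZMod.castHom hdvdp1 (ZMod p)) h1
      rw [map_natCast, map_natCast] at h2
      push_cast at h2
      exact h2
    set phd : ℕ := (p - 1) / 2 with hphddef
    have f4 : (2 : ZMod p) * ((phd : ℕ) : ZMod p) = -1 := by
      have hoddp : Odd p := hpf.out.odd_of_ne_two hodd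
      obtain ⟨m, hm⟩ := hoddp
      have hnat : 2 * phd = p - 1 := by rw [hphddef]; omega
      have h1 : ((2 * phd : ℕ) : ZMod p) = ((p - 1 : ℕ) : ZMod p) := by rw [hnat]
      push_cast at h1
      rw [h1]
      rw [Nat.cast_sub (by omega : 1 ≤ p), ZMod.natCast_self]
      push_cast
      ring
    have hMD' : (M:ℤ)*D' = eI - (bv:ℤ)*(p:ℤ)^(l+1)*K := by
      have hstep : (p:ℤ)^l * ((M:ℤ)*D') = (p:ℤ)^l * (eI - (bv:ℤ)*(p:ℤ)^(l+1)*K) := by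
        have hq5 : (p:ℤ)^(2*l+1) = (p:ℤ)^l * (p:ℤ)^(l+1) := by
          rw [← pow_add]; congr 1; omega
        linear_combination hMD - (M:ℤ)*hD' - ((M:ℤ)*D')*hplcast - heI
          - ((bv:ℤ)*K)*hq5
      exact mul_left_cancel₀ hplne hstep
    have he' : ((eI : ℤ) : ZMod p) = (M : ZMod p) * ((D' : ℤ) : ZMod p) := by
      have h0 : (((M:ℤ)*D' : ℤ) : ZMod p) = ((eI - (bv:ℤ)*(p:ℤ)^(l+1)*K : ℤ) : ZMod p) := by
        rw [hMD']
      push_cast at h0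
      rw [ZMod.natCast_self] at h0
      rw [zero_pow (by omega : l+1 ≠ 0)] at h0
      linear_combination -h0
    have hc' : ((dInt p (p^(2*l+1)) (b : ZMod (p^(2*l+1))) tv M : ℤ) : ZMod p)
        = (M : ZMod p)^2 * (((i2:ℤ)*((av:ℤ)*M + (bv:ℤ)*cM) : ℤ) : ZMod p) := by
      rw [dInt, ← hbvdef, ← hphddef]
      push_cast
      linear_combination (-((i2 : ZMod p)*(M : ZMod p)))*f2
        + (-((i2 : ZMod p)*(bv : ZMod p)*(M : ZMod p)))*f1
        + (-((bv : ZMod p)*(M : ZMod p))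
            - ((phd : ℕ) : ZMod p)*(tv : ZMod p)*(M : ZMod p)^2)*f3
        + ((i2 : ZMod p)*(tv : ZMod p)*(M : ZMod p)^2)*f4
    have hsubst : gaussSum' p ((i2:ℤ)*((av:ℤ)*M + (bv:ℤ)*cM)) D'
        = gaussSum' p (dInt p (p^(2*l+1)) (b : ZMod (p^(2*l+1))) tv M) eI :=
      gaussSum'_subst p _ _ _ _ (M : ZMod p) hMp hc' he'
    -- final bookkeeping
    have hA0 : eZMod (p^(2*l+1)) ((a : ZMod (p^(2*l+1))) * ((M : ZMod (p^(2*l+1))))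
          + (b : ZMod (p^(2*l+1))) * ((M : ZMod (p^(2*l+1))))⁻¹)
        = E (p^(2*l+1)) ((av:ℤ)*M + (bv:ℤ)*cM) := by
      rw [E_eq_eZMod]
      congr 1
      push_cast
      rw [hacast, hbcast, hccast]
    have hplC : ((p^l : ℕ) : ℂ) = (p:ℂ)^l := by push_cast; ring
    rw [hgsum, hsubst, hA0.symm, hplC]
    ring

  calc Kloos (p^(2*l+1)) (a : ZMod (p^(2*l+1))) (b : ZMod (p^(2*l+1))) χ
      = ∑ x : (ZMod (p^(2*l+1)))ˣ, F x := rfl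
    _ = ∑ uy : (ZMod (p^l))ˣ × ZMod (p^(l+1)), F (phiU p l hl uy) :=
        (Fintype.sum_bijective _ hbij (fun uy => F (phiU p l hl uy)) F (fun _ => rfl)).symm
    _ = ∑ u : (ZMod (p^l))ˣ, ∑ y : ZMod (p^(l+1)), F (phiU p l hl (u, y)) :=
        Fintype.sum_prod_type _
    _ = ∑ u : (ZMod (p^l))ˣ, (p:ℂ)^l
          * (if (p:ℤ)^l ∣ hInt (p^(2*l+1)) (a : ZMod (p^(2*l+1))) (b : ZMod (p^(2*l+1)))
                t.val ((u : ZMod (p^l)).val)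
            then eZMod (p^(2*l+1)) ((a : ZMod (p^(2*l+1)))
                  * (((u : ZMod (p^l)).val : ZMod (p^(2*l+1))))
                  + (b : ZMod (p^(2*l+1))) * (((u : ZMod (p^l)).val : ZMod (p^(2*l+1))))⁻¹)
                * χ (((u : ZMod (p^l)).val : ZMod (p^(2*l+1))))
                * gaussSum' p
                    (dInt p (p^(2*l+1)) (b : ZMod (p^(2*l+1))) t.val ((u : ZMod (p^l)).val))
                    (hInt (p^(2*l+1)) (a : ZMod (p^(2*l+1))) (b : ZMod (p^(2*l+1))) t.val
                        ((u : ZMod (p^l)).val) / (p:ℤ)^l)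
            else 0) := Finset.sum_congr rfl (fun u _ => inner u)
    _ = (p:ℂ)^l * ∑ u : (ZMod (p^l))ˣ,
          (if (p:ℤ)^l ∣ hInt (p^(2*l+1)) (a : ZMod (p^(2*l+1))) (b : ZMod (p^(2*l+1)))
                t.val ((u : ZMod (p^l)).val)
            then eZMod (p^(2*l+1)) ((a : ZMod (p^(2*l+1)))
                  * (((u : ZMod (p^l)).val : ZMod (p^(2*l+1))))
                  + (b : ZMod (p^(2*l+1))) * (((u : ZMod (p^l)).val : ZMod (p^(2*l+1))))⁻¹)
                * χ (((u : ZMod (p^l)).val : ZMod (p^(2*l+1))))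
                * gaussSum' p
                    (dInt p (p^(2*l+1)) (b : ZMod (p^(2*l+1))) t.val ((u : ZMod (p^l)).val))
                    (hInt (p^(2*l+1)) (a : ZMod (p^(2*l+1))) (b : ZMod (p^(2*l+1))) t.val
                        ((u : ZMod (p^l)).val) / (p:ℤ)^l)
            else 0) := by rw [Finset.mul_sum]
    _ = _ := by rw [Finset.sum_filter]
end

section
/- Let p be an odd prime, k ≥ 2, q = p^k, and let a, b ∈ (ℤ/qℤ)^*. If χ is a multiplicative character of (ℤ/qℤ)^* whose parameter t_χ satisfies t_χ² ≢ −4ab (mod p), then |K_q(a,b,χ)| ≤ 2√q. -/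
open Complex Finset

lemma red_natCast (N e : ℕ) [NeZero N] (h : e ∣ N) (n : ℕ) :
    (((n : ZMod N).val : ZMod e)) = (n : ZMod e) := by
  rw [ZMod.val_natCast]
  exact (ZMod.natCast_eq_natCast_iff _ _ _).2 ((Nat.mod_modEq n N).of_dvd h)

lemma eZMod_natCast (q : ℕ) [NeZero q] (a : ℕ) :
    eZMod q (a : ZMod q) = Complex.exp (2 * Real.pi * Complex.I * a / q) := by
  rw [eZMod, ZMod.val_natCast]
  conv_rhs => rw [show (a : ℂ) = ((q * (a / q) + a % q : ℕ) : ℂ) by rw [Nat.div_add_mod]]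
  push_cast
  rw [show 2 * (Real.pi:ℂ) * I * (q * (a/q:ℕ) + (a % q : ℕ)) / q
      = 2*(Real.pi:ℂ)*I*(a % q : ℕ)/q + (a/q:ℕ) * (2*Real.pi*I) * (q / q) by ring]
  rw [div_self (Nat.cast_ne_zero.2 (NeZero.ne q)), mul_one, Complex.exp_add,
    Complex.exp_nat_mul_two_pi_mul_I, mul_one]

lemma eZMod_zero (q : ℕ) [NeZero q] : eZMod q 0 = 1 := by
  simp [eZMod]

lemma abs_eZMod (q : ℕ) (x : ZMod q) : ‖eZMod q x‖ = 1 := by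
  rw [eZMod, show 2 * (Real.pi:ℂ) * I * x.val / q = ((2 * Real.pi * x.val / q : ℝ):ℂ) * I by
    push_cast; ring]
  exact Complex.norm_exp_ofReal_mul_I _

lemma eZMod_mul_neg (q : ℕ) [NeZero q] (x : ZMod q) : eZMod q x * eZMod q (-x) = 1 := by
  rw [← eZMod_add]; simp [eZMod_zero]

lemma eZMod_ne_zero (q : ℕ) [NeZero q] (x : ZMod q) : eZMod q x ≠ 0 := by
  intro h; have := abs_eZMod q x; rw [h] at this; simp at this

lemma conj_eZMod (q : ℕ) [NeZero q] (x : ZMod q) :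
    (starRingEnd ℂ) (eZMod q x) = eZMod q (-x) := by
  have h1 : eZMod q x * (starRingEnd ℂ) (eZMod q x) = 1 := by
    rw [Complex.mul_conj]
    norm_cast
    rw [← Complex.sq_norm, abs_eZMod]; norm_num
  rw [eq_inv_of_mul_eq_one_right h1, eq_inv_of_mul_eq_one_right (eZMod_mul_neg q x)]

lemma eZMod_eq_one_iff (q : ℕ) [NeZero q] (x : ZMod q) : eZMod q x = 1 ↔ x = 0 := by
  constructor
  · intro h
    rw [eZMod, Complex.exp_eq_one_iff] at h
    obtain ⟨n, hn⟩ := h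
    obtain ⟨v, hveq⟩ : ∃ v, x.val = v := ⟨x.val, rfl⟩
    rw [hveq] at hn
    have hq : (q:ℂ) ≠ 0 := Nat.cast_ne_zero.2 (NeZero.ne q)
    have hπ : (Real.pi:ℂ) ≠ 0 := by exact_mod_cast Real.pi_ne_zero
    have h2 : (v : ℂ) = n * q := by
      have h3 : 2 * (Real.pi:ℂ) * I * v = n * (2 * Real.pi * I) * q := by
        field_simp at hn; linear_combination (2 * (Real.pi:ℂ) * I) * hn
      have hne : (2 * (Real.pi:ℂ) * I) ≠ 0 := by simp [hπ, Complex.I_ne_zero]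
      apply mul_left_cancel₀ hne
      linear_combination h3
    have hval : (v : ℝ) = n * q := by exact_mod_cast h2
    have h0 : 0 ≤ (v:ℝ) := by positivity
    have hlt : (v:ℝ) < q := by exact_mod_cast hveq ▸ ZMod.val_lt x
    have hqpos : (0:ℝ) < q := by exact_mod_cast Nat.pos_of_ne_zero (NeZero.ne q)
    have hn0 : n = 0 := by
      by_contra hne
      rcases lt_or_gt_of_ne hne with h' | h'
      · have : (n:ℝ) ≤ -1 := by exact_mod_cast Int.le_of_lt_add_one (by simpa using h')
        nlinarith
      · have : (1:ℝ) ≤ n := by exact_mod_cast h'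
        nlinarith
    rw [hn0] at hval; simp at hval
    have : v = 0 := by exact_mod_cast hval
    exact (ZMod.val_eq_zero x).1 (hveq.trans this)
  · intro h; rw [h]; exact eZMod_zero q

lemma sum_eZMod_mul_s5 (q : ℕ) [NeZero q] (c : ZMod q) :
    ∑ y : ZMod q, eZMod q (c * y) = if c = 0 then (q : ℂ) else 0 := by
  split_ifs with h
  · simp [h, eZMod_zero, Finset.card_univ]
  · have key : eZMod q c * ∑ y : ZMod q, eZMod q (c * y) = ∑ y : ZMod q, eZMod q (c * y) := by
      rw [Finset.mul_sum]
      rw [← Equiv.sum_comp (Equiv.addLeft (1 : ZMod q)) (fun y => eZMod q (c * y))]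
      apply Finset.sum_congr rfl
      intro y _
      simp only [Equiv.coe_addLeft]
      rw [mul_add, eZMod_add, mul_one]
    have hne : eZMod q c ≠ 1 := fun hc => h ((eZMod_eq_one_iff q c).1 hc)
    have h0 : (eZMod q c - 1) * ∑ y : ZMod q, eZMod q (c * y) = 0 := by
      linear_combination key
    rcases mul_eq_zero.1 h0 with h' | h'
    · exact absurd (by linear_combination h') hne
    · exact h'

/-- Lemma D: `e_{de}(d·w) = e_e(w mod e)`. -/
lemma eZMod_mul_cast (N d e : ℕ) (hN : N = d * e) (hd : d ≠ 0) (he : e ≠ 0) (w : ZMod N) :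
    eZMod N ((d : ZMod N) * w) = eZMod e ((w.val : ZMod e)) := by
  subst hN
  have : NeZero (d * e) := ⟨mul_ne_zero hd he⟩
  have : NeZero e := ⟨he⟩
  conv_lhs => rw [← ZMod.natCast_zmod_val w, ← Nat.cast_mul]
  rw [eZMod_natCast, eZMod_natCast]
  congr 1
  have hdC : (d:ℂ) ≠ 0 := Nat.cast_ne_zero.2 hd
  have heC : (e:ℂ) ≠ 0 := Nat.cast_ne_zero.2 he
  push_cast
  field_simp

/-- Lemma C'': multiplying by `d` only sees the argument mod `e`. -/
lemma mul_cast_eq_of_modEq (N d e : ℕ) [NeZero N] (hN : N = d * e) {w₁ w₂ : ZMod N}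
    (h : (w₁.val : ZMod e) = (w₂.val : ZMod e)) :
    (d : ZMod N) * w₁ = (d : ZMod N) * w₂ := by
  subst hN
  conv_lhs => rw [← ZMod.natCast_zmod_val w₁, ← Nat.cast_mul]
  conv_rhs => rw [← ZMod.natCast_zmod_val w₂, ← Nat.cast_mul]
  rw [ZMod.natCast_eq_natCast_iff]
  exact Nat.ModEq.mul_left' d ((ZMod.natCast_eq_natCast_iff _ _ _).1 h)

/-- reduction as `(·.val : ZMod e)` agrees with the ring hom `castHom`. -/
lemma redh_apply (N e : ℕ) [NeZero N] (h : e ∣ N) (w : ZMod N) :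
    ZMod.castHom h (ZMod e) w = ((w.val : ZMod e)) := by
  rw [ZMod.castHom_apply, ZMod.natCast_val]

/-- Splitting a sum over `ZMod (d*e)` into low and high digits. -/
lemma sum_zmod_split (N d e : ℕ) [NeZero N] [NeZero d] [NeZero e] (hN : N = d * e)
    (F : ZMod N → ℂ) :
    ∑ x : ZMod N, F x =
      ∑ z : ZMod d, ∑ y : ZMod e,
        F (((z.val + d * y.val : ℕ) : ZMod N)) := by
  subst hN
  have hd : d ≠ 0 := NeZero.ne d
  have he : e ≠ 0 := NeZero.ne e
  have hg : Function.Bijective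
      (fun zy : ZMod d × ZMod e => ((zy.1.val + d * zy.2.val : ℕ) : ZMod (d*e))) := by
    rw [Fintype.bijective_iff_injective_and_card]
    constructor
    · intro ⟨z, y⟩ ⟨z', y'⟩ hzy
      simp only at hzy
      have hlt : ∀ (z : ZMod d) (y : ZMod e), z.val + d * y.val < d * e := by
        intro z y
        have h1 : z.val < d := ZMod.val_lt z
        have h2 : y.val < e := ZMod.val_lt y
        calc z.val + d * y.val < d + d * y.val := by omega
          _ ≤ d * e := by nlinarith
      have := (ZMod.val_cast_of_lt (hlt z y)) ▸ (ZMod.val_cast_of_lt (hlt z' y')) ▸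
        congrArg ZMod.val hzy
      have hz : z.val = z'.val := by
        have := congrArg (· % d) this
        simpa [Nat.add_mul_mod_self_left, Nat.mod_eq_of_lt (ZMod.val_lt z),
          Nat.mod_eq_of_lt (ZMod.val_lt z')] using this
      have hy : y.val = y'.val := by
        have hd' : 0 < d := Nat.pos_of_ne_zero hd
        have hmul : d * y.val = d * y'.val := by omega
        exact Nat.eq_of_mul_eq_mul_left hd' hmul
      exact Prod.ext (ZMod.val_injective _ hz) (ZMod.val_injective _ hy)
    · simp [ZMod.card]
  rw [(Fintype.sum_bijective _ hg _ F (fun _ => rfl)).symm, Fintype.sum_prod_type]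

/-- Quadratic Gauss sum absolute value. -/
lemma abs_quad_gauss (p : ℕ) [Fact p.Prime] (hodd : p ≠ 2) (α β : ZMod p) (hα : α ≠ 0) :
    ‖∑ u : ZMod p, eZMod p (α * u ^ 2 + β * u)‖ = Real.sqrt p := by
  set T := ∑ u : ZMod p, eZMod p (α * u ^ 2 + β * u) with hT
  have key : T * (starRingEnd ℂ) T = (p : ℂ) := by
    rw [hT, Finset.sum_mul, map_sum]
    calc ∑ u : ZMod p, eZMod p (α * u ^ 2 + β * u) * ∑ v : ZMod p,
          (starRingEnd ℂ) (eZMod p (α * v ^ 2 + β * v))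
        = ∑ v : ZMod p, ∑ u : ZMod p,
            eZMod p (α * u ^ 2 + β * u) * eZMod p (-(α * v ^ 2 + β * v)) := by
          rw [Finset.sum_comm]
          exact Finset.sum_congr rfl fun u _ => by
            rw [Finset.mul_sum]
            exact Finset.sum_congr rfl fun v _ => by rw [conj_eZMod]
      _ = ∑ v : ZMod p, ∑ w : ZMod p,
            eZMod p (α * w ^ 2 + β * w) * eZMod p (2 * α * v * w) := by
          refine Finset.sum_congr rfl fun v _ => ?_
          rw [← Equiv.sum_comp (Equiv.addLeft v) _]
          refine Finset.sum_congr rfl fun w _ => ?_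
          simp only [Equiv.coe_addLeft]
          rw [← eZMod_add, ← eZMod_add]
          congr 1
          ring
      _ = ∑ w : ZMod p, eZMod p (α * w ^ 2 + β * w) * ∑ v : ZMod p, eZMod p ((2 * α * w) * v) := by
          rw [Finset.sum_comm]
          exact Finset.sum_congr rfl fun w _ => by
            rw [Finset.mul_sum]
            exact Finset.sum_congr rfl fun v _ => by ring_nf
      _ = (p : ℂ) := by
          rw [Finset.sum_eq_single 0]
          · simp [sum_eZMod_mul_s5, eZMod_zero]
          · intro w _ hw
            rw [sum_eZMod_mul_s5, if_neg, mul_zero]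
            have h2 : (2 : ZMod p) ≠ 0 := by
              have hp := Fact.out (p := p.Prime)
              intro h
              have hdvd : p ∣ 2 := (ZMod.natCast_eq_zero_iff 2 p).1 (by exact_mod_cast h)
              have := Nat.le_of_dvd (by norm_num) hdvd
              have := hp.two_le
              omega
            exact mul_ne_zero (mul_ne_zero h2 hα) hw
          · intro h; exact absurd (Finset.mem_univ 0) h
  have habs : (‖T‖) ^ 2 = p := by
    rw [Complex.sq_norm]
    have : ((Complex.normSq T : ℝ) : ℂ) = (p : ℂ) := by rw [← Complex.mul_conj]; exact key
    exact_mod_cast this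
  rw [← habs, Real.sqrt_sq (norm_nonneg T)]

lemma isUnit_of_red_ne_zero (p L : ℕ) [Fact p.Prime] [NeZero (p ^ L)]
    (w : ZMod (p ^ L)) (h : ((w.val : ZMod p)) ≠ 0) : IsUnit w := by
  have hp := Fact.out (p := p.Prime)
  have hnd : ¬ p ∣ w.val := fun hd => h ((ZMod.natCast_eq_zero_iff _ _).2 hd)
  have hco : Nat.Coprime w.val p := (Nat.coprime_comm.1 ((hp.coprime_iff_not_dvd).2 hnd))
  have : IsUnit ((w.val : ℕ) : ZMod (p ^ L)) :=
    (ZMod.isUnit_iff_coprime _ _).2 (Nat.Coprime.pow_right L hco)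
  rwa [ZMod.natCast_zmod_val] at this

lemma count_quad_roots (p L : ℕ) [Fact p.Prime] [NeZero (p ^ L)] (hL : 1 ≤ L)
    (A B T : ZMod (p ^ L))
    (hA : ((A.val : ZMod p)) ≠ 0)
    (hdisc : ((T.val : ZMod p)) ^ 2 + 4 * ((A.val : ZMod p)) * ((B.val : ZMod p)) ≠ 0) :
    (Finset.univ.filter (fun z : ZMod (p ^ L) => A * z ^ 2 + T * z - B = 0)).card ≤ 2 := by
  have hdvd : p ∣ p ^ L := dvd_pow_self p (by omega)
  set π : ZMod (p ^ L) →+* ZMod p := ZMod.castHom hdvd (ZMod p) with hπ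
  have hπval : ∀ w : ZMod (p ^ L), π w = ((w.val : ZMod p)) := by
    intro w; rw [hπ, ZMod.castHom_apply, ZMod.natCast_val]
  -- reformulate hypotheses via π
  rw [← hπval] at hA
  rw [← hπval A, ← hπval B, ← hπval T] at hdisc
  set S := Finset.univ.filter (fun z : ZMod (p ^ L) => A * z ^ 2 + T * z - B = 0) with hS
  set T2 := Finset.univ.filter (fun w : ZMod p => π A * w ^ 2 + π T * w - π B = 0) with hT2
  have hmap : ∀ z ∈ S, π z ∈ T2 := by
    intro z hz
    rw [hS, Finset.mem_filter] at hz
    rw [hT2, Finset.mem_filter]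
    refine ⟨Finset.mem_univ _, ?_⟩
    have := congrArg π hz.2
    simpa [map_add, map_mul, map_sub, map_pow] using this
  have hinj : ∀ z ∈ S, ∀ z' ∈ S, π z = π z' → z = z' := by
    intro z hz z' hz' hzz
    rw [hS, Finset.mem_filter] at hz hz'
    have d1 := hz.2
    have d2 := hz'.2
    have hfac : (z - z') * (A * (z + z') + T) = 0 := by linear_combination d1 - d2
    set w := A * (z + z') + T with hw
    have hπw2 : (π w) ^ 2 = π T ^ 2 + 4 * π A * π B := by
      have hπd1 : π A * (π z) ^ 2 + π T * π z - π B = 0 := by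
        have := congrArg π d1
        simpa [map_add, map_mul, map_sub, map_pow] using this
      have : π w = π A * (π z + π z') + π T := by simp [hw, map_add, map_mul]
      rw [this, ← hzz]
      linear_combination 4 * (π A) * hπd1
    have hπw : π w ≠ 0 := by
      intro h0
      rw [h0] at hπw2
      exact hdisc (by linear_combination -hπw2)
    have hwu : IsUnit w := isUnit_of_red_ne_zero p L w (by rwa [← hπval])
    have := (IsUnit.mul_left_eq_zero hwu).1 hfac
    exact sub_eq_zero.1 this
  have hcard : S.card ≤ T2.card := Finset.card_le_card_of_injOn π hmap hinj
  refine hcard.trans ?_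
  -- now bound roots of quadratic over the field ZMod p
  set f : Polynomial (ZMod p) := Polynomial.C (π A) * Polynomial.X ^ 2 + Polynomial.C (π T) * Polynomial.X + Polynomial.C (-(π B)) with hf
  have hdeg : f.natDegree = 2 := Polynomial.natDegree_quadratic hA
  have hf0 : f ≠ 0 := fun h => by simp [h] at hdeg
  have hsub : T2 ⊆ f.roots.toFinset := by
    intro w hw
    rw [hT2, Finset.mem_filter] at hw
    rw [Multiset.mem_toFinset, Polynomial.mem_roots hf0]
    show f.eval w = 0
    rw [hf]
    simp only [Polynomial.eval_add, Polynomial.eval_mul, Polynomial.eval_pow,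
      Polynomial.eval_C, Polynomial.eval_X]
    linear_combination hw.2
  calc T2.card ≤ f.roots.toFinset.card := Finset.card_le_card hsub
    _ ≤ Multiset.card f.roots := Multiset.toFinset_card_le _
    _ ≤ f.natDegree := Polynomial.card_roots' f
    _ = 2 := hdeg

lemma abs_mulChar_unit (n : ℕ) [NeZero n] (χ : MulChar (ZMod n) ℂ) (u : (ZMod n)ˣ) :
    ‖χ (u : ZMod n)‖ = 1 := by
  have h := Complex.norm_eq_one_of_mem_rootsOfUnity (χ.apply_mem_rootsOfUnity u)
  rw [MulChar.coe_equivToUnitHom] at h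
  exact h

lemma kloos_skeleton (p k l m : ℕ) [Fact p.Prime] (hk : l + m = k) (hl : 1 ≤ l)
    (a b : ZMod (p ^ k)) (χ : MulChar (ZMod (p ^ k)) ℂ)
    (Eu : ZMod (p ^ m) → (ZMod (p ^ k))ˣ)
    (P : ZMod (p ^ l) → Prop) [DecidablePred P]
    (C : ℝ) (hC : 0 ≤ C)
    (hinner : ∀ x : (ZMod (p ^ k))ˣ,
      ‖∑ y : ZMod (p ^ m),
        eZMod (p ^ k) (a * ((x * Eu y : (ZMod (p ^ k))ˣ) : ZMod (p ^ k)) +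
          b * (((x * Eu y)⁻¹ : (ZMod (p ^ k))ˣ) : ZMod (p ^ k))) *
        χ ((x * Eu y : (ZMod (p ^ k))ˣ) : ZMod (p ^ k))‖
        ≤ if P (((x : ZMod (p ^ k)).val : ZMod (p ^ l))) then C else 0)
    (hcount : (Finset.univ.filter P).card ≤ 2) :
    ‖Kloos (p ^ k) a b χ‖ ≤ 2 * C := by
  have hp := Fact.out (p := p.Prime)
  have hp0 : p ≠ 0 := hp.pos.ne'
  haveI : NeZero (p ^ k) := ⟨pow_ne_zero _ hp0⟩
  haveI : NeZero (p ^ l) := ⟨pow_ne_zero _ hp0⟩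
  haveI : NeZero (p ^ m) := ⟨pow_ne_zero _ hp0⟩
  -- averaging
  have hav : ((p ^ m : ℕ) : ℂ) * Kloos (p ^ k) a b χ =
      ∑ x : (ZMod (p ^ k))ˣ, ∑ y : ZMod (p ^ m),
        eZMod (p ^ k) (a * ((x * Eu y : (ZMod (p ^ k))ˣ) : ZMod (p ^ k)) +
          b * (((x * Eu y)⁻¹ : (ZMod (p ^ k))ˣ) : ZMod (p ^ k))) *
        χ ((x * Eu y : (ZMod (p ^ k))ˣ) : ZMod (p ^ k)) := by
    rw [Finset.sum_comm]
    have hfix : ∀ y : ZMod (p ^ m), ∑ x : (ZMod (p ^ k))ˣ,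
        (eZMod (p ^ k) (a * ((x * Eu y : (ZMod (p ^ k))ˣ) : ZMod (p ^ k)) +
          b * (((x * Eu y)⁻¹ : (ZMod (p ^ k))ˣ) : ZMod (p ^ k))) *
        χ ((x * Eu y : (ZMod (p ^ k))ˣ) : ZMod (p ^ k))) = Kloos (p ^ k) a b χ := by
      intro y
      exact Equiv.sum_comp (Equiv.mulRight (Eu y)) (fun x : (ZMod (p ^ k))ˣ =>
        eZMod (p ^ k) (a * (x : ZMod (p ^ k)) + b * ((x⁻¹ : (ZMod (p ^ k))ˣ) : ZMod (p ^ k))) *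
        χ (x : ZMod (p ^ k)))
    rw [Finset.sum_congr rfl (fun y _ => hfix y), Finset.sum_const, Finset.card_univ,
      ZMod.card, nsmul_eq_mul]
  have hb1 : ((p ^ m : ℕ) : ℝ) * ‖Kloos (p ^ k) a b χ‖ ≤
      ∑ x : (ZMod (p ^ k))ˣ, (if P (((x : ZMod (p ^ k)).val : ZMod (p ^ l))) then C else 0) := by
    have := congrArg (‖·‖) hav
    rw [norm_mul, Complex.norm_natCast] at this
    rw [this]
    refine (norm_sum_le _ _).trans ?_
    exact Finset.sum_le_sum fun x _ => hinner x
  -- count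
  have hcard1 : (Finset.univ.filter
      (fun x : (ZMod (p ^ k))ˣ => P (((x : ZMod (p ^ k)).val : ZMod (p ^ l))))).card ≤
      (Finset.univ.filter (fun x : ZMod (p ^ k) => P ((x.val : ZMod (p ^ l))))).card := by
    refine Finset.card_le_card_of_injOn (fun u => (u : ZMod (p ^ k))) ?_ ?_
    · intro u hu
      simp only [Finset.coe_filter, Finset.mem_univ, true_and, Set.mem_setOf_eq] at hu ⊢
      exact hu
    · intro u _ v _ h
      exact Units.ext h
  have hcard2 : (Finset.univ.filter (fun x : ZMod (p ^ k) => P ((x.val : ZMod (p ^ l))))).card =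
      (p ^ m) * (Finset.univ.filter P).card := by
    have hqe : p ^ k = p ^ l * p ^ m := by rw [← pow_add, hk]
    have hsum := sum_zmod_split (p ^ k) (p ^ l) (p ^ m) hqe
      (fun x => if P ((x.val : ZMod (p ^ l))) then (1 : ℂ) else 0)
    have hred : ∀ (z : ZMod (p ^ l)) (y : ZMod (p ^ m)),
        ((((z.val + (p ^ l) * y.val : ℕ) : ZMod (p ^ k))).val : ZMod (p ^ l)) = z := by
      intro z y
      rw [red_natCast (p ^ k) (p ^ l) (hqe ▸ Dvd.intro _ rfl) _]
      push_cast
      have hz : ((z.val : ℕ) : ZMod (p ^ l)) = z := ZMod.natCast_zmod_val z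
      have hpl : ((p : ZMod (p ^ l))) ^ l = 0 := by
        rw [← Nat.cast_pow, ZMod.natCast_self]
      rw [hpl]
      push_cast at hz
      rw [hz]
      ring
    have hinnersum : ∀ z : ZMod (p ^ l), (∑ y : ZMod (p ^ m),
        (if P (((((z.val + (p ^ l) * y.val : ℕ) : ZMod (p ^ k))).val : ZMod (p ^ l)))
          then (1:ℂ) else 0))
        = if P z then ((p ^ m : ℕ) : ℂ) else 0 := by
      intro z
      rw [Finset.sum_congr rfl (fun y _ => by rw [hred z y])]
      rw [Finset.sum_const, Finset.card_univ, ZMod.card, nsmul_eq_mul]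
      split_ifs <;> simp
    rw [Finset.sum_congr rfl (fun z _ => hinnersum z)] at hsum
    rw [← Finset.sum_filter, Finset.sum_const] at hsum
    rw [← Finset.sum_filter, Finset.sum_const] at hsum
    simp only [nsmul_eq_mul, mul_one] at hsum
    have h2 : ((Finset.univ.filter (fun x : ZMod (p ^ k) =>
        P ((x.val : ZMod (p ^ l))))).card : ℂ)
        = (((p ^ m) * (Finset.univ.filter P).card : ℕ) : ℂ) := by
      push_cast
      push_cast at hsum
      rw [hsum]; ring
    exact_mod_cast h2
  have hb2 : ∑ x : (ZMod (p ^ k))ˣ,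
      (if P (((x : ZMod (p ^ k)).val : ZMod (p ^ l))) then C else 0)
      ≤ ((p ^ m : ℕ) : ℝ) * 2 * C := by
    rw [← Finset.sum_filter, Finset.sum_const, nsmul_eq_mul]
    have hle : ((Finset.univ.filter
        (fun x : (ZMod (p ^ k))ˣ => P (((x : ZMod (p ^ k)).val : ZMod (p ^ l))))).card : ℝ)
        ≤ ((p ^ m : ℕ) : ℝ) * 2 := by
      have : (Finset.univ.filter
          (fun x : (ZMod (p ^ k))ˣ => P (((x : ZMod (p ^ k)).val : ZMod (p ^ l))))).card
          ≤ (p ^ m) * 2 := by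
        refine hcard1.trans ?_
        rw [hcard2]
        exact Nat.mul_le_mul_left _ hcount
      exact_mod_cast this
    exact mul_le_mul_of_nonneg_right hle hC
  have hpm : (0:ℝ) < ((p ^ m : ℕ) : ℝ) := by
    have : 0 < p ^ m := pow_pos hp.pos m
    exact_mod_cast this
  have hfin := hb1.trans hb2
  nlinarith [norm_nonneg (Kloos (p ^ k) a b χ)]

lemma odd_inner_bound (p l : ℕ) [Fact p.Prime] (hodd : p ≠ 2) (hl : 1 ≤ l)
    (D : ZMod (p ^ (l + 1))) (α : ZMod p)
    (hα : ((D.val : ZMod (p ^ l))) = 0 → α ≠ 0) :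
    ‖∑ y : ZMod (p ^ (l + 1)),
        eZMod (p ^ (l + 1)) (D * y) * eZMod p (α * ((y.val : ZMod p)) ^ 2)‖
      ≤ if ((D.val : ZMod (p ^ l))) = 0 then ((p : ℝ) ^ l * Real.sqrt p) else 0 := by
  have hp := Fact.out (p := p.Prime)
  have hp0 : p ≠ 0 := hp.pos.ne'
  haveI : NeZero p := ⟨hp0⟩
  haveI : NeZero (p ^ l) := ⟨pow_ne_zero _ hp0⟩
  haveI : NeZero (p ^ (l + 1)) := ⟨pow_ne_zero _ hp0⟩
  have hN : p ^ (l + 1) = p * p ^ l := by rw [pow_succ, mul_comm]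
  have hpdvd : p ∣ p ^ (l + 1) := dvd_pow_self p (by omega)
  -- split y = u + p * v
  rw [sum_zmod_split (p ^ (l + 1)) p (p ^ l) hN
    (fun y => eZMod (p ^ (l + 1)) (D * y) * eZMod p (α * ((y.val : ZMod p)) ^ 2))]
  have hterm : ∀ (u : ZMod p) (v : ZMod (p ^ l)),
      eZMod (p ^ (l + 1)) (D * ((u.val + p * v.val : ℕ) : ZMod (p ^ (l + 1)))) *
        eZMod p (α * (((((u.val + p * v.val : ℕ) : ZMod (p ^ (l + 1)))).val : ZMod p)) ^ 2)
      = (eZMod (p ^ (l + 1)) (D * ((u.val : ℕ) : ZMod (p ^ (l + 1)))) *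
          eZMod p (α * u ^ 2)) *
        eZMod (p ^ l) (((D.val : ZMod (p ^ l))) * v) := by
    intro u v
    have hredu : ((((u.val + p * v.val : ℕ) : ZMod (p ^ (l + 1)))).val : ZMod p) = u := by
      rw [red_natCast _ p hpdvd]
      push_cast
      rw [ZMod.natCast_self, ZMod.natCast_zmod_val]
      ring
    rw [hredu]
    have hsplit : D * ((u.val + p * v.val : ℕ) : ZMod (p ^ (l + 1)))
        = D * ((u.val : ℕ) : ZMod (p ^ (l + 1)))
          + (p : ZMod (p ^ (l + 1))) * (D * ((v.val : ℕ) : ZMod (p ^ (l + 1)))) := by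
      push_cast
      ring
    rw [hsplit, eZMod_add, eZMod_mul_cast (p ^ (l + 1)) p (p ^ l) hN hp0 (pow_ne_zero _ hp0)]
    have hval : (((D * ((v.val : ℕ) : ZMod (p ^ (l + 1)))).val : ZMod (p ^ l)))
        = ((D.val : ZMod (p ^ l))) * v := by
      have hdl : (p:ℕ) ^ l ∣ p ^ (l + 1) := pow_dvd_pow p (by omega)
      set π : ZMod (p ^ (l+1)) →+* ZMod (p ^ l) := ZMod.castHom hdl (ZMod (p ^ l)) with hπ
      have hπval : ∀ w : ZMod (p ^ (l+1)), π w = ((w.val : ZMod (p ^ l))) := fun w => by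
        rw [hπ, ZMod.castHom_apply, ZMod.natCast_val]
      rw [← hπval, map_mul, hπval D]
      congr 1
      rw [hπ, ZMod.castHom_apply]
      have : ((v.val : ℕ) : ZMod (p ^ (l+1))).cast = ((v.val : ℕ) : ZMod (p ^ l)) := by
        rw [← ZMod.natCast_val, red_natCast _ _ hdl]
      rw [this, ZMod.natCast_zmod_val]
    rw [hval]
    ring
  rw [Finset.sum_congr rfl (fun u _ => Finset.sum_congr rfl (fun v _ => hterm u v))]
  have hfactor : ∀ u : ZMod p, ∑ v : ZMod (p ^ l),
      (eZMod (p ^ (l + 1)) (D * ((u.val : ℕ) : ZMod (p ^ (l + 1)))) * eZMod p (α * u ^ 2)) *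
        eZMod (p ^ l) (((D.val : ZMod (p ^ l))) * v)
      = (eZMod (p ^ (l + 1)) (D * ((u.val : ℕ) : ZMod (p ^ (l + 1)))) * eZMod p (α * u ^ 2)) *
        (if ((D.val : ZMod (p ^ l))) = 0 then ((p ^ l : ℕ) : ℂ) else 0) := by
    intro u
    rw [← Finset.mul_sum, sum_eZMod_mul_s5]
  rw [Finset.sum_congr rfl (fun u _ => hfactor u)]
  by_cases hD : ((D.val : ZMod (p ^ l))) = 0
  · rw [if_pos hD]
    simp only [hD, if_pos]
    -- D = p^l * j
    have hdvdval : (p:ℕ) ^ l ∣ D.val := by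
      have := hD
      rwa [ZMod.natCast_eq_zero_iff] at this
    obtain ⟨j, hj⟩ := hdvdval
    have hDval : D = (((p ^ l * j : ℕ)) : ZMod (p ^ (l + 1))) := by
      rw [← hj, ZMod.natCast_zmod_val]
    have hsimp : ∀ u : ZMod p,
        eZMod (p ^ (l + 1)) (D * ((u.val : ℕ) : ZMod (p ^ (l + 1))))
        = eZMod p (((j : ZMod p)) * u) := by
      intro u
      have hN2 : p ^ (l + 1) = p ^ l * p := by rw [pow_succ]
      have : D * ((u.val : ℕ) : ZMod (p ^ (l + 1)))
          = ((p ^ l : ℕ) : ZMod (p ^ (l + 1))) * (((j : ℕ) : ZMod (p ^ (l + 1))) *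
              ((u.val : ℕ) : ZMod (p ^ (l + 1)))) := by
        rw [hDval]; push_cast; ring
      rw [this, eZMod_mul_cast (p ^ (l + 1)) (p ^ l) p hN2 (pow_ne_zero _ hp0) hp0]
      congr 1
      have hdl : (p:ℕ) ∣ p ^ (l + 1) := hpdvd
      set π : ZMod (p ^ (l+1)) →+* ZMod p := ZMod.castHom hdl (ZMod p) with hπ
      have hπval : ∀ w : ZMod (p ^ (l+1)), π w = ((w.val : ZMod p)) := fun w => by
        rw [hπ, ZMod.castHom_apply, ZMod.natCast_val]
      rw [← hπval, map_mul]
      congr 1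
      · rw [hπval, red_natCast _ _ hdl]
      · rw [hπval, red_natCast _ _ hdl, ZMod.natCast_zmod_val]
    rw [Finset.sum_congr rfl (fun u _ => by rw [hsimp u])]
    have : ∑ u : ZMod p, eZMod p (((j : ZMod p)) * u) * eZMod p (α * u ^ 2) *
        ((p ^ l : ℕ) : ℂ)
        = ((p ^ l : ℕ) : ℂ) * ∑ u : ZMod p, eZMod p (α * u ^ 2 + ((j : ZMod p)) * u) := by
      rw [Finset.mul_sum]
      refine Finset.sum_congr rfl fun u _ => ?_
      rw [eZMod_add]
      ring
    rw [this, norm_mul, Complex.norm_natCast, abs_quad_gauss p hodd α ((j : ZMod p)) (hα hD)]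
    have : ((p ^ l : ℕ) : ℝ) = (p:ℝ) ^ l := by push_cast; ring
    rw [this]
  · rw [if_neg hD]
    simp only [hD, if_neg, mul_zero]
    simp

lemma even_inner (p k l n : ℕ) [Fact p.Prime] (hk : k = l + l) (hl : 1 ≤ l) (hn : n = l)
    (a b : (ZMod (p ^ k))ˣ) (χ : MulChar (ZMod (p ^ k)) ℂ) (t : ZMod (p ^ n))
    (hte : ∀ y : ZMod (p ^ n),
      χ (1 + (p : ZMod (p ^ k)) ^ l * ((y.val : ℕ) : ZMod (p ^ k))) = eZMod (p ^ n) (t * y)) :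
    ∃ Eu : ZMod (p ^ n) → (ZMod (p ^ k))ˣ, ∀ x : (ZMod (p ^ k))ˣ,
      ‖∑ y : ZMod (p ^ n),
        eZMod (p ^ k) ((a : ZMod (p ^ k)) * ((x * Eu y : (ZMod (p ^ k))ˣ) : ZMod (p ^ k)) +
          (b : ZMod (p ^ k)) * (((x * Eu y)⁻¹ : (ZMod (p ^ k))ˣ) : ZMod (p ^ k))) *
        χ ((x * Eu y : (ZMod (p ^ k))ˣ) : ZMod (p ^ k))‖
      ≤ if (((a : ZMod (p ^ k)).val : ZMod (p ^ l))) * (((x : ZMod (p ^ k)).val : ZMod (p ^ l))) ^ 2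
            + ((t.val : ZMod (p ^ l))) * (((x : ZMod (p ^ k)).val : ZMod (p ^ l)))
            - (((b : ZMod (p ^ k)).val : ZMod (p ^ l))) = 0
        then ((p ^ l : ℕ) : ℝ) else 0 := by
  subst hn
  have hp := Fact.out (p := p.Prime)
  have hp0 : p ≠ 0 := hp.pos.ne'
  haveI : NeZero (p ^ k) := ⟨pow_ne_zero _ hp0⟩
  haveI : NeZero (p ^ n) := ⟨pow_ne_zero _ hp0⟩
  have htt : ((t.val : ZMod (p ^ n))) = t := ZMod.natCast_zmod_val t
  simp only [htt]
  have hqe : p ^ k = p ^ n * p ^ n := by rw [← pow_add, hk]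
  have hldvd : (p:ℕ) ^ n ∣ p ^ k := hqe ▸ Dvd.intro _ rfl
  have hcast : ((p ^ n : ℕ) : ZMod (p ^ k)) = (p : ZMod (p ^ k)) ^ n := by push_cast; ring
  set π : ZMod (p ^ k) →+* ZMod (p ^ n) := ZMod.castHom hldvd (ZMod (p ^ n)) with hπ
  have hπval : ∀ w : ZMod (p ^ k), π w = ((w.val : ZMod (p ^ n))) := fun w => by
    rw [hπ, ZMod.castHom_apply, ZMod.natCast_val]
  have hπn : ∀ (y : ZMod (p ^ n)), π (((y.val : ℕ) : ZMod (p ^ k))) = y := fun y => by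
    rw [hπval, red_natCast _ _ hldvd, ZMod.natCast_zmod_val]
  set E : ZMod (p ^ n) → ZMod (p ^ k) := fun y =>
    1 + (p : ZMod (p ^ k)) ^ n * ((y.val : ℕ) : ZMod (p ^ k)) with hE
  have hPP : (p : ZMod (p ^ k)) ^ n * (p : ZMod (p ^ k)) ^ n = 0 := by
    rw [← hcast, ← Nat.cast_mul, ← pow_add, ← hk, ZMod.natCast_self]
  have hEadd : ∀ y y' : ZMod (p ^ n), E y * E y' = E (y + y') := by
    intro y y'
    have h1 : E y * E y' = 1 + (p : ZMod (p ^ k)) ^ n *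
        (((y.val : ℕ) : ZMod (p ^ k)) + ((y'.val : ℕ) : ZMod (p ^ k)))
        + ((p : ZMod (p ^ k)) ^ n * (p : ZMod (p ^ k)) ^ n) *
          (((y.val : ℕ) : ZMod (p ^ k)) * ((y'.val : ℕ) : ZMod (p ^ k))) := by
      rw [hE]; ring
    rw [h1, hPP, zero_mul, add_zero]
    have h2 : (p : ZMod (p ^ k)) ^ n *
        (((y.val : ℕ) : ZMod (p ^ k)) + ((y'.val : ℕ) : ZMod (p ^ k)))
        = (p : ZMod (p ^ k)) ^ n * (((y + y').val : ℕ) : ZMod (p ^ k)) := by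
      rw [← hcast]
      apply mul_cast_eq_of_modEq (p ^ k) (p ^ n) (p ^ n) hqe
      rw [← hπval, ← hπval, map_add, hπn, hπn, hπn]
    rw [h2, hE]
  have hE0 : E 0 = 1 := by
    rw [hE]; simp
  have hEinv : ∀ y : ZMod (p ^ n), E y * E (-y) = 1 := fun y => by
    rw [hEadd, add_neg_cancel, hE0]
  refine ⟨fun y => Units.mkOfMulEqOne (E y) (E (-y)) (hEinv y), ?_⟩
  intro x
  -- notation
  have hXXi : (x : ZMod (p ^ k)) * ((x⁻¹ : (ZMod (p ^ k))ˣ) : ZMod (p ^ k)) = 1 := by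
    rw [← Units.val_mul, mul_inv_cancel, Units.val_one]
  have hcoe1 : ∀ y, ((x * Units.mkOfMulEqOne (E y) (E (-y)) (hEinv y) : (ZMod (p ^ k))ˣ) :
      ZMod (p ^ k)) = (x : ZMod (p ^ k)) * E y := fun y => rfl
  have hcoe2 : ∀ y, (((x * Units.mkOfMulEqOne (E y) (E (-y)) (hEinv y))⁻¹ : (ZMod (p ^ k))ˣ) :
      ZMod (p ^ k)) = ((x⁻¹ : (ZMod (p ^ k))ˣ) : ZMod (p ^ k)) * E (-y) := fun y => by
    rw [mul_inv_rev, mul_comm]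
    rfl
  -- expand the summand
  have hsummand : ∀ y : ZMod (p ^ n),
      eZMod (p ^ k) ((a : ZMod (p ^ k)) *
          ((x * Units.mkOfMulEqOne (E y) (E (-y)) (hEinv y) : (ZMod (p ^ k))ˣ) : ZMod (p ^ k)) +
        (b : ZMod (p ^ k)) *
          (((x * Units.mkOfMulEqOne (E y) (E (-y)) (hEinv y))⁻¹ : (ZMod (p ^ k))ˣ) : ZMod (p ^ k))) *
      χ ((x * Units.mkOfMulEqOne (E y) (E (-y)) (hEinv y) : (ZMod (p ^ k))ˣ) : ZMod (p ^ k))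
      = (eZMod (p ^ k) ((a : ZMod (p ^ k)) * (x : ZMod (p ^ k)) +
          (b : ZMod (p ^ k)) * ((x⁻¹ : (ZMod (p ^ k))ˣ) : ZMod (p ^ k))) * χ (x : ZMod (p ^ k))) *
        eZMod (p ^ n) (((π ((a : ZMod (p ^ k)) * (x : ZMod (p ^ k)))
            - π ((b : ZMod (p ^ k)) * ((x⁻¹ : (ZMod (p ^ k))ˣ) : ZMod (p ^ k))) + t)) * y) := by
    intro y
    rw [hcoe1, hcoe2]
    -- exponent splitting
    have hexp : (a : ZMod (p ^ k)) * ((x : ZMod (p ^ k)) * E y) +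
        (b : ZMod (p ^ k)) * (((x⁻¹ : (ZMod (p ^ k))ˣ) : ZMod (p ^ k)) * E (-y))
        = ((a : ZMod (p ^ k)) * (x : ZMod (p ^ k)) +
            (b : ZMod (p ^ k)) * ((x⁻¹ : (ZMod (p ^ k))ˣ) : ZMod (p ^ k)))
          + ((p ^ n : ℕ) : ZMod (p ^ k)) *
            ((a : ZMod (p ^ k)) * (x : ZMod (p ^ k)) * ((y.val : ℕ) : ZMod (p ^ k)) +
             (b : ZMod (p ^ k)) * ((x⁻¹ : (ZMod (p ^ k))ˣ) : ZMod (p ^ k)) *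
               (((-y).val : ℕ) : ZMod (p ^ k))) := by
      rw [hE, hcast]; ring
    rw [hexp, eZMod_add, eZMod_mul_cast (p ^ k) (p ^ n) (p ^ n) hqe
      (pow_ne_zero _ hp0) (pow_ne_zero _ hp0)]
    -- character part
    have hχ : χ ((x : ZMod (p ^ k)) * E y) = χ (x : ZMod (p ^ k)) * eZMod (p ^ n) (t * y) := by
      rw [map_mul, hE, hte y]
    rw [hχ]
    -- reduce the A part
    have hA : ((((a : ZMod (p ^ k)) * (x : ZMod (p ^ k)) * ((y.val : ℕ) : ZMod (p ^ k)) +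
        (b : ZMod (p ^ k)) * ((x⁻¹ : (ZMod (p ^ k))ˣ) : ZMod (p ^ k)) *
          (((-y).val : ℕ) : ZMod (p ^ k))).val : ZMod (p ^ n)))
        = (π ((a : ZMod (p ^ k)) * (x : ZMod (p ^ k)))
            - π ((b : ZMod (p ^ k)) * ((x⁻¹ : (ZMod (p ^ k))ˣ) : ZMod (p ^ k)))) * y := by
      rw [← hπval, map_add, map_mul, map_mul, map_mul (f := π), map_mul (f := π), hπn, hπn]
      ring
    rw [hA]
    have hcomb : eZMod (p ^ n) ((π ((a : ZMod (p ^ k)) * (x : ZMod (p ^ k)))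
            - π ((b : ZMod (p ^ k)) * ((x⁻¹ : (ZMod (p ^ k))ˣ) : ZMod (p ^ k)))) * y) *
        eZMod (p ^ n) (t * y)
        = eZMod (p ^ n) (((π ((a : ZMod (p ^ k)) * (x : ZMod (p ^ k)))
            - π ((b : ZMod (p ^ k)) * ((x⁻¹ : (ZMod (p ^ k))ˣ) : ZMod (p ^ k))) + t)) * y) := by
      rw [← eZMod_add]
      congr 1
      ring
    calc eZMod (p ^ k) ((a : ZMod (p ^ k)) * (x : ZMod (p ^ k)) +
            (b : ZMod (p ^ k)) * ((x⁻¹ : (ZMod (p ^ k))ˣ) : ZMod (p ^ k))) *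
          eZMod (p ^ n) ((π ((a : ZMod (p ^ k)) * (x : ZMod (p ^ k)))
            - π ((b : ZMod (p ^ k)) * ((x⁻¹ : (ZMod (p ^ k))ˣ) : ZMod (p ^ k)))) * y) *
          (χ (x : ZMod (p ^ k)) * eZMod (p ^ n) (t * y))
        = (eZMod (p ^ k) ((a : ZMod (p ^ k)) * (x : ZMod (p ^ k)) +
            (b : ZMod (p ^ k)) * ((x⁻¹ : (ZMod (p ^ k))ˣ) : ZMod (p ^ k))) * χ (x : ZMod (p ^ k))) *
          (eZMod (p ^ n) ((π ((a : ZMod (p ^ k)) * (x : ZMod (p ^ k)))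
            - π ((b : ZMod (p ^ k)) * ((x⁻¹ : (ZMod (p ^ k))ˣ) : ZMod (p ^ k)))) * y) *
           eZMod (p ^ n) (t * y)) := by ring
      _ = _ := by rw [hcomb]
  rw [Finset.sum_congr rfl (fun y _ => hsummand y), ← Finset.mul_sum, sum_eZMod_mul_s5]
  rw [norm_mul, norm_mul, abs_eZMod, abs_mulChar_unit, one_mul, one_mul]
  -- now the condition
  set c := π ((a : ZMod (p ^ k)) * (x : ZMod (p ^ k)))
    - π ((b : ZMod (p ^ k)) * ((x⁻¹ : (ZMod (p ^ k))ˣ) : ZMod (p ^ k))) + t with hc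
  by_cases hc0 : c = 0
  · rw [if_pos hc0]
    have hcond : (((a : ZMod (p ^ k)).val : ZMod (p ^ n))) *
        (((x : ZMod (p ^ k)).val : ZMod (p ^ n))) ^ 2
        + t * (((x : ZMod (p ^ k)).val : ZMod (p ^ n)))
        - (((b : ZMod (p ^ k)).val : ZMod (p ^ n))) = 0 := by
      have hZZi : (((x : ZMod (p ^ k)).val : ZMod (p ^ n))) *
          ((((x⁻¹ : (ZMod (p ^ k))ˣ) : ZMod (p ^ k)).val : ZMod (p ^ n))) = 1 := by
        rw [← hπval, ← hπval, ← map_mul, hXXi, map_one]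
      have hc' : (π ((a : ZMod (p ^ k)))) * (π ((x : ZMod (p ^ k))))
          - (π ((b : ZMod (p ^ k)))) * (π (((x⁻¹ : (ZMod (p ^ k))ˣ) : ZMod (p ^ k)))) + t = 0 := by
        have := hc0
        rw [hc, map_mul, map_mul] at this
        exact this
      have hZZi' : (π ((x : ZMod (p ^ k)))) *
          (π (((x⁻¹ : (ZMod (p ^ k))ˣ) : ZMod (p ^ k)))) = 1 := by
        rw [← map_mul, hXXi, map_one]
      simp only [← hπval]
      linear_combination (π ((x : ZMod (p ^ k)))) * hc' + (π ((b : ZMod (p ^ k)))) * hZZi'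
    rw [if_pos hcond]
    rw [Complex.norm_natCast]
  · rw [if_neg hc0, norm_zero]
    split_ifs with h
    · positivity
    · exact le_refl 0

lemma odd_inner (p k l n : ℕ) [Fact p.Prime] (hodd : p ≠ 2) (hk : k = l + (l + 1))
    (hl : 1 ≤ l) (hn : n = l + 1)
    (a b : (ZMod (p ^ k))ˣ) (χ : MulChar (ZMod (p ^ k)) ℂ) (t : ZMod (p ^ n))
    (hto : ∀ y : ZMod (p ^ n),
      χ (1 + (p : ZMod (p ^ k)) ^ l * ((y.val : ℕ) : ZMod (p ^ k)) +
          (p : ZMod (p ^ k)) ^ (2 * l) *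
            (((y ^ 2 * (2 : ZMod (p ^ n))⁻¹).val : ℕ) : ZMod (p ^ k))) =
        eZMod (p ^ n) (t * y))
    (htab : ((t.val : ZMod p)) ^ 2 ≠
      -4 * (((a : ZMod (p ^ k)).val : ZMod p)) * (((b : ZMod (p ^ k)).val : ZMod p))) :
    ∃ Eu : ZMod (p ^ n) → (ZMod (p ^ k))ˣ, ∀ x : (ZMod (p ^ k))ˣ,
      ‖∑ y : ZMod (p ^ n),
        eZMod (p ^ k) ((a : ZMod (p ^ k)) * ((x * Eu y : (ZMod (p ^ k))ˣ) : ZMod (p ^ k)) +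
          (b : ZMod (p ^ k)) * (((x * Eu y)⁻¹ : (ZMod (p ^ k))ˣ) : ZMod (p ^ k))) *
        χ ((x * Eu y : (ZMod (p ^ k))ˣ) : ZMod (p ^ k))‖
      ≤ if (((a : ZMod (p ^ k)).val : ZMod (p ^ l))) * (((x : ZMod (p ^ k)).val : ZMod (p ^ l))) ^ 2
            + ((t.val : ZMod (p ^ l))) * (((x : ZMod (p ^ k)).val : ZMod (p ^ l)))
            - (((b : ZMod (p ^ k)).val : ZMod (p ^ l))) = 0
        then ((p ^ l : ℕ) : ℝ) * Real.sqrt p else 0 := by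
  subst hn
  have hp := Fact.out (p := p.Prime)
  have hp0 : p ≠ 0 := hp.pos.ne'
  haveI : NeZero p := ⟨hp0⟩
  haveI : NeZero (p ^ k) := ⟨pow_ne_zero _ hp0⟩
  haveI : NeZero (p ^ l) := ⟨pow_ne_zero _ hp0⟩
  haveI : NeZero (p ^ (l + 1)) := ⟨pow_ne_zero _ hp0⟩
  -- divisibility and factorizations
  have hqm : p ^ k = p ^ l * p ^ (l + 1) := by rw [← pow_add, hk]
  have hq1 : p ^ k = p ^ (2 * l) * p := by rw [← pow_succ, hk]; ring_nf
  have hmdvd : (p:ℕ) ^ (l + 1) ∣ p ^ k := ⟨p ^ l, by rw [hqm]; ring⟩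
  have hldvd : (p:ℕ) ^ l ∣ p ^ k := pow_dvd_pow p (by omega)
  have h1dvd : (p:ℕ) ∣ p ^ k := dvd_pow_self p (by omega)
  have hlm : (p:ℕ) ^ l ∣ p ^ (l + 1) := pow_dvd_pow p (by omega)
  have h1m : (p:ℕ) ∣ p ^ (l + 1) := dvd_pow_self p (by omega)
  have hcastl : ((p ^ l : ℕ) : ZMod (p ^ k)) = (p : ZMod (p ^ k)) ^ l := by push_cast; ring
  have hcast2l : ((p ^ (2 * l) : ℕ) : ZMod (p ^ k)) = (p : ZMod (p ^ k)) ^ (2 * l) := by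
    push_cast; ring
  -- reduction homs
  set πm : ZMod (p ^ k) →+* ZMod (p ^ (l + 1)) := ZMod.castHom hmdvd _ with hπm
  set π1 : ZMod (p ^ k) →+* ZMod p := ZMod.castHom h1dvd _ with hπ1
  set πl : ZMod (p ^ k) →+* ZMod (p ^ l) := ZMod.castHom hldvd _ with hπl
  set ρ1 : ZMod (p ^ (l + 1)) →+* ZMod p := ZMod.castHom h1m _ with hρ1
  set ρl : ZMod (p ^ (l + 1)) →+* ZMod (p ^ l) := ZMod.castHom hlm _ with hρl
  have hπmval : ∀ w : ZMod (p ^ k), πm w = ((w.val : ZMod (p ^ (l + 1)))) := fun w => by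
    rw [hπm, ZMod.castHom_apply, ZMod.natCast_val]
  have hπ1val : ∀ w : ZMod (p ^ k), π1 w = ((w.val : ZMod p)) := fun w => by
    rw [hπ1, ZMod.castHom_apply, ZMod.natCast_val]
  have hπlval : ∀ w : ZMod (p ^ k), πl w = ((w.val : ZMod (p ^ l))) := fun w => by
    rw [hπl, ZMod.castHom_apply, ZMod.natCast_val]
  have hρ1val : ∀ w : ZMod (p ^ (l + 1)), ρ1 w = ((w.val : ZMod p)) := fun w => by
    rw [hρ1, ZMod.castHom_apply, ZMod.natCast_val]
  have hρlval : ∀ w : ZMod (p ^ (l + 1)), ρl w = ((w.val : ZMod (p ^ l))) := fun w => by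
    rw [hρl, ZMod.castHom_apply, ZMod.natCast_val]
  have hπmn : ∀ (y : ZMod (p ^ (l + 1))), πm (((y.val : ℕ) : ZMod (p ^ k))) = y := fun y => by
    rw [hπmval, red_natCast _ _ hmdvd, ZMod.natCast_zmod_val]
  have hπ1n : ∀ (y : ZMod (p ^ (l + 1))), π1 (((y.val : ℕ) : ZMod (p ^ k))) = ρ1 y := fun y => by
    rw [hπ1val, red_natCast _ _ h1dvd, hρ1val]
  -- 2 is invertible mod p^(l+1)
  have h2unit : IsUnit (2 : ZMod (p ^ (l + 1))) := by
    have hco : Nat.Coprime 2 (p ^ (l + 1)) :=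
      Nat.Coprime.pow_right _ (((Nat.coprime_primes Nat.prime_two hp).2 (fun h => hodd h.symm)))
    have := (ZMod.isUnit_iff_coprime 2 (p ^ (l + 1))).2 hco
    simpa using this
  have h2inv : (2 : ZMod (p ^ (l + 1))) * (2 : ZMod (p ^ (l + 1)))⁻¹ = 1 :=
    ZMod.mul_inv_of_unit _ h2unit
  -- the truncated exponential
  set w : ZMod (p ^ (l + 1)) → ZMod (p ^ (l + 1)) := fun y =>
    y ^ 2 * (2 : ZMod (p ^ (l + 1)))⁻¹ with hw
  have hwadd : ∀ y y' : ZMod (p ^ (l + 1)), w y + w y' + y * y' = w (y + y') := by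
    intro y y'
    rw [hw]
    simp only
    linear_combination (-(y * y')) * h2inv
  set E : ZMod (p ^ (l + 1)) → ZMod (p ^ k) := fun y =>
    1 + (p : ZMod (p ^ k)) ^ l * ((y.val : ℕ) : ZMod (p ^ k)) +
      (p : ZMod (p ^ k)) ^ (2 * l) * (((w y).val : ℕ) : ZMod (p ^ k)) with hE
  -- vanishing of high powers
  have h3l : (p : ZMod (p ^ k)) ^ l * (p : ZMod (p ^ k)) ^ (2 * l) = 0 := by
    rw [← pow_add, ← Nat.cast_pow, ZMod.natCast_eq_zero_iff]
    exact pow_dvd_pow p (by omega)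
  have h4l : (p : ZMod (p ^ k)) ^ (2 * l) * (p : ZMod (p ^ k)) ^ (2 * l) = 0 := by
    rw [← pow_add, ← Nat.cast_pow, ZMod.natCast_eq_zero_iff]
    exact pow_dvd_pow p (by omega)
  have hEadd : ∀ y y' : ZMod (p ^ (l + 1)), E y * E y' = E (y + y') := by
    intro y y'
    have h1 : E y * E y' = 1 +
        (p : ZMod (p ^ k)) ^ l * (((y.val : ℕ) : ZMod (p ^ k)) + ((y'.val : ℕ) : ZMod (p ^ k)))
        + (p : ZMod (p ^ k)) ^ (2 * l) * ((((w y).val : ℕ) : ZMod (p ^ k)) +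
            (((w y').val : ℕ) : ZMod (p ^ k)) +
            ((y.val : ℕ) : ZMod (p ^ k)) * ((y'.val : ℕ) : ZMod (p ^ k)))
        + ((p : ZMod (p ^ k)) ^ l * (p : ZMod (p ^ k)) ^ (2 * l)) *
            (((y.val : ℕ) : ZMod (p ^ k)) * (((w y').val : ℕ) : ZMod (p ^ k)) +
             ((y'.val : ℕ) : ZMod (p ^ k)) * (((w y).val : ℕ) : ZMod (p ^ k)))
        + ((p : ZMod (p ^ k)) ^ (2 * l) * (p : ZMod (p ^ k)) ^ (2 * l)) *
            ((((w y).val : ℕ) : ZMod (p ^ k)) * (((w y').val : ℕ) : ZMod (p ^ k))) := by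
      rw [hE]
      have h2l2 : (p : ZMod (p ^ k)) ^ l * (p : ZMod (p ^ k)) ^ l
          = (p : ZMod (p ^ k)) ^ (2 * l) := by rw [← pow_add]; ring_nf
      simp only
      linear_combination (((y.val : ℕ) : ZMod (p ^ k)) * ((y'.val : ℕ) : ZMod (p ^ k))) * h2l2
    rw [h1, h3l, h4l, zero_mul, zero_mul, add_zero, add_zero]
    have h2 : (p : ZMod (p ^ k)) ^ l *
        (((y.val : ℕ) : ZMod (p ^ k)) + ((y'.val : ℕ) : ZMod (p ^ k)))
        = (p : ZMod (p ^ k)) ^ l * (((y + y').val : ℕ) : ZMod (p ^ k)) := by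
      rw [← hcastl]
      apply mul_cast_eq_of_modEq (p ^ k) (p ^ l) (p ^ (l + 1)) hqm
      rw [← hπmval, ← hπmval, map_add, hπmn, hπmn, hπmn]
    have h3 : (p : ZMod (p ^ k)) ^ (2 * l) * ((((w y).val : ℕ) : ZMod (p ^ k)) +
            (((w y').val : ℕ) : ZMod (p ^ k)) +
            ((y.val : ℕ) : ZMod (p ^ k)) * ((y'.val : ℕ) : ZMod (p ^ k)))
        = (p : ZMod (p ^ k)) ^ (2 * l) * (((w (y + y')).val : ℕ) : ZMod (p ^ k)) := by
      rw [← hcast2l]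
      apply mul_cast_eq_of_modEq (p ^ k) (p ^ (2 * l)) p hq1
      rw [← hπ1val, ← hπ1val, map_add, map_add, map_mul, hπ1n, hπ1n, hπ1n, hπ1n,
        ← map_add, ← map_mul, ← map_add, hwadd, hπ1n]
    rw [h2, h3, hE]
  have hE0 : E 0 = 1 := by
    rw [hE]
    simp only
    have hw0 : w 0 = 0 := by rw [hw]; simp only; ring
    rw [hw0]
    simp
  have hEinv : ∀ y : ZMod (p ^ (l + 1)), E y * E (-y) = 1 := fun y => by
    rw [hEadd, add_neg_cancel, hE0]
  refine ⟨fun y => Units.mkOfMulEqOne (E y) (E (-y)) (hEinv y), ?_⟩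
  intro x
  have hXXi : (x : ZMod (p ^ k)) * ((x⁻¹ : (ZMod (p ^ k))ˣ) : ZMod (p ^ k)) = 1 := by
    rw [← Units.val_mul, mul_inv_cancel, Units.val_one]
  have hcoe1 : ∀ y, ((x * Units.mkOfMulEqOne (E y) (E (-y)) (hEinv y) : (ZMod (p ^ k))ˣ) :
      ZMod (p ^ k)) = (x : ZMod (p ^ k)) * E y := fun y => rfl
  have hcoe2 : ∀ y, (((x * Units.mkOfMulEqOne (E y) (E (-y)) (hEinv y))⁻¹ : (ZMod (p ^ k))ˣ) :
      ZMod (p ^ k)) = ((x⁻¹ : (ZMod (p ^ k))ˣ) : ZMod (p ^ k)) * E (-y) := fun y => by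
    rw [mul_inv_rev, mul_comm]
    rfl
  -- abbreviations
  set X : ZMod (p ^ k) := (x : ZMod (p ^ k)) with hX
  set Xi : ZMod (p ^ k) := ((x⁻¹ : (ZMod (p ^ k))ˣ) : ZMod (p ^ k)) with hXi
  set A' : ZMod (p ^ k) := (a : ZMod (p ^ k)) with hA'
  set B' : ZMod (p ^ k) := (b : ZMod (p ^ k)) with hB'
  set D : ZMod (p ^ (l + 1)) := πm (A' * X) - πm (B' * Xi) + t with hD
  set α : ZMod p := (π1 (A' * X) + π1 (B' * Xi)) * ρ1 ((2 : ZMod (p ^ (l + 1)))⁻¹) with hα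
  -- the summand identity
  have hsummand : ∀ y : ZMod (p ^ (l + 1)),
      eZMod (p ^ k) (A' * ((x * Units.mkOfMulEqOne (E y) (E (-y)) (hEinv y) :
            (ZMod (p ^ k))ˣ) : ZMod (p ^ k)) +
        B' * (((x * Units.mkOfMulEqOne (E y) (E (-y)) (hEinv y))⁻¹ :
            (ZMod (p ^ k))ˣ) : ZMod (p ^ k))) *
      χ ((x * Units.mkOfMulEqOne (E y) (E (-y)) (hEinv y) : (ZMod (p ^ k))ˣ) : ZMod (p ^ k))
      = (eZMod (p ^ k) (A' * X + B' * Xi) * χ X) *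
        (eZMod (p ^ (l + 1)) (D * y) * eZMod p (α * ((y.val : ZMod p)) ^ 2)) := by
    intro y
    rw [hcoe1, hcoe2]
    have hexp : A' * (X * E y) + B' * (Xi * E (-y))
        = (A' * X + B' * Xi)
          + ((p ^ l : ℕ) : ZMod (p ^ k)) *
              (A' * X * ((y.val : ℕ) : ZMod (p ^ k)) +
               B' * Xi * (((-y).val : ℕ) : ZMod (p ^ k)))
          + ((p ^ (2 * l) : ℕ) : ZMod (p ^ k)) *
              (A' * X * (((w y).val : ℕ) : ZMod (p ^ k)) +
               B' * Xi * (((w (-y)).val : ℕ) : ZMod (p ^ k))) := by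
      rw [hE, hcastl, hcast2l]
      ring
    rw [hexp, eZMod_add, eZMod_add,
      eZMod_mul_cast (p ^ k) (p ^ l) (p ^ (l + 1)) hqm (pow_ne_zero _ hp0) (pow_ne_zero _ hp0),
      eZMod_mul_cast (p ^ k) (p ^ (2 * l)) p hq1 (pow_ne_zero _ hp0) hp0]
    -- character part
    have hχ : χ (X * E y) = χ X * eZMod (p ^ (l + 1)) (t * y) := by
      rw [map_mul, hE, hto y]
    rw [hχ]
    -- the A-part reduction
    have hA : (((A' * X * ((y.val : ℕ) : ZMod (p ^ k)) +
        B' * Xi * (((-y).val : ℕ) : ZMod (p ^ k))).val : ZMod (p ^ (l + 1))))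
        = (πm (A' * X) - πm (B' * Xi)) * y := by
      rw [← hπmval]
      simp only [map_add, map_mul, hπmn]
      ring
    -- the B-part reduction
    have hB : (((A' * X * (((w y).val : ℕ) : ZMod (p ^ k)) +
        B' * Xi * (((w (-y)).val : ℕ) : ZMod (p ^ k))).val : ZMod p))
        = α * ((y.val : ZMod p)) ^ 2 := by
      rw [← hπ1val]
      simp only [map_add, map_mul, hπ1n]
      have hwred : ∀ z : ZMod (p ^ (l + 1)), ρ1 (w z) =
          (ρ1 z) ^ 2 * ρ1 ((2 : ZMod (p ^ (l + 1)))⁻¹) := by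
        intro z
        rw [hw]
        simp only
        rw [map_mul, map_pow]
      rw [hwred, hwred, map_neg]
      rw [hα]
      have : ρ1 y = ((y.val : ZMod p)) := hρ1val y
      rw [this]
      simp only [map_mul]
      ring
    rw [hA, hB]
    have hcomb : eZMod (p ^ (l + 1)) ((πm (A' * X) - πm (B' * Xi)) * y) *
        eZMod (p ^ (l + 1)) (t * y) = eZMod (p ^ (l + 1)) (D * y) := by
      rw [← eZMod_add, hD]
      congr 1
      ring
    calc eZMod (p ^ k) (A' * X + B' * Xi) *
          eZMod (p ^ (l + 1)) ((πm (A' * X) - πm (B' * Xi)) * y) *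
          eZMod p (α * ((y.val : ZMod p)) ^ 2) *
          (χ X * eZMod (p ^ (l + 1)) (t * y))
        = (eZMod (p ^ k) (A' * X + B' * Xi) * χ X) *
          ((eZMod (p ^ (l + 1)) ((πm (A' * X) - πm (B' * Xi)) * y) *
            eZMod (p ^ (l + 1)) (t * y)) * eZMod p (α * ((y.val : ZMod p)) ^ 2)) := by ring
      _ = _ := by rw [hcomb]
  rw [Finset.sum_congr rfl (fun y _ => hsummand y), ← Finset.mul_sum]
  rw [norm_mul, norm_mul, abs_eZMod, abs_mulChar_unit, one_mul, one_mul]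
  -- derive α ≠ 0 when the critical congruence holds
  have hαimp : ((D.val : ZMod (p ^ l))) = 0 → α ≠ 0 := by
    intro hD0 hα0
    -- reductions mod p
    have hρ2 : ρ1 ((2 : ZMod (p ^ (l + 1)))⁻¹) ≠ 0 := by
      intro h0
      have := congrArg ρ1 h2inv
      rw [map_mul, h0, mul_zero, map_one] at this
      exact zero_ne_one this
    have hC0 : π1 (A' * X) + π1 (B' * Xi) = 0 := by
      rcases mul_eq_zero.1 hα0 with h | h
      · exact h
      · exact absurd h hρ2
    -- reduce hD0 mod p : first express D mod p
    have hD1 : ρ1 D = 0 := by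
      have : ρ1 D = ((D.val : ZMod p)) := hρ1val D
      rw [this]
      have h2 : ((D.val : ZMod (p ^ l))) = 0 := hD0
      have hdvd : (p:ℕ) ^ l ∣ D.val := by rwa [ZMod.natCast_eq_zero_iff] at h2
      rw [ZMod.natCast_eq_zero_iff]
      exact dvd_trans (dvd_pow_self p (by omega)) hdvd
    rw [hD, map_add, map_sub] at hD1
    have hcomp1 : ∀ u : ZMod (p ^ k), ρ1 (πm u) = π1 u := by
      intro u
      rw [hρ1val, hπmval, hπ1val, red_natCast _ _ h1m]
    rw [hcomp1, hcomp1] at hD1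
    -- now we have: π1(A'X) - π1(B'Xi) + ρ1 t = 0 and π1(A'X) + π1(B'Xi) = 0
    have hZZi1 : π1 X * π1 Xi = 1 := by rw [← map_mul, hXXi, map_one]
    have ht1 : ρ1 t = 2 * π1 (B' * Xi) := by linear_combination hD1 - hC0
    have hABZ : π1 (A' * X) = - π1 (B' * Xi) := by linear_combination hC0
    -- contradiction with htab
    apply htab
    have htval : ((t.val : ZMod p)) = ρ1 t := (hρ1val t).symm
    have haval : (((a : ZMod (p ^ k)).val : ZMod p)) = π1 A' := (hπ1val A').symm
    have hbval : (((b : ZMod (p ^ k)).val : ZMod p)) = π1 B' := (hπ1val B').symm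
    rw [htval, haval, hbval]
    have hab : π1 A' * π1 B' = π1 (A' * X) * π1 (B' * Xi) := by
      rw [map_mul, map_mul]
      linear_combination (-(π1 A' * π1 B')) * hZZi1
    rw [ht1]
    linear_combination 4 * hab + 4 * (π1 (B' * Xi)) * hABZ
  -- apply the bound
  refine (odd_inner_bound p l hodd hl D α hαimp).trans ?_
  -- compare the two if-conditions
  have hDred : ((D.val : ZMod (p ^ l))) = ρl D := (hρlval D).symm
  have hcomp : ∀ u : ZMod (p ^ k), ρl (πm u) = πl u := by
    intro u
    rw [hρlval, hπmval, hπlval, red_natCast _ _ hlm]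
  by_cases hD0 : ((D.val : ZMod (p ^ l))) = 0
  · rw [if_pos hD0]
    have hcond : (((a : ZMod (p ^ k)).val : ZMod (p ^ l))) *
        (((x : ZMod (p ^ k)).val : ZMod (p ^ l))) ^ 2
        + ((t.val : ZMod (p ^ l))) * (((x : ZMod (p ^ k)).val : ZMod (p ^ l)))
        - (((b : ZMod (p ^ k)).val : ZMod (p ^ l))) = 0 := by
      have hD0' : ρl D = 0 := by rw [← hDred]; exact hD0
      rw [hD, map_add, map_sub, hcomp, hcomp] at hD0'
      rw [map_mul, map_mul] at hD0'
      have hZZil : πl X * πl Xi = 1 := by rw [← map_mul, hXXi, map_one]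
      have hgoal : πl A' * (πl X) ^ 2 + ρl t * πl X - πl B' = 0 := by
        linear_combination (πl X) * hD0' + (πl B') * hZZil
      have h1 : (((a : ZMod (p ^ k)).val : ZMod (p ^ l))) = πl A' := (hπlval A').symm
      have h2 : (((b : ZMod (p ^ k)).val : ZMod (p ^ l))) = πl B' := (hπlval B').symm
      have h3 : (((x : ZMod (p ^ k)).val : ZMod (p ^ l))) = πl X := (hπlval X).symm
      have h4 : ((t.val : ZMod (p ^ l))) = ρl t := (hρlval t).symm
      rw [h1, h2, h3, h4]
      exact hgoal
    rw [if_pos hcond]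
    have : ((p ^ l : ℕ) : ℝ) = (p : ℝ) ^ l := by push_cast; ring
    rw [this]
  · rw [if_neg hD0]
    split_ifs with h
    · positivity
    · exact le_refl 0

lemma zmod_eq_val_transport (M N : ℕ) [NeZero M] (h : M = N) (x : ZMod N) :
    ((x.val : ZMod M)).val = x.val := by subst h; rw [ZMod.natCast_zmod_val]

lemma eZMod_transport (M N : ℕ) [NeZero M] (h : M = N) (x : ZMod M) :
    eZMod M x = eZMod N ((x.val : ZMod N)) := by subst h; rw [ZMod.natCast_zmod_val]

lemma zmod_mul_val_transport (M N : ℕ) [NeZero M] (h : M = N) (x y : ZMod M) :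
    (((x * y).val : ZMod N)) = ((x.val : ZMod N)) * ((y.val : ZMod N)) := by
  subst h; rw [ZMod.natCast_zmod_val, ZMod.natCast_zmod_val, ZMod.natCast_zmod_val]






/-- For `q = p^k` (`p` an odd prime, `k ≥ 2`) and a character `χ` of `(ℤ/qℤ)^*` whose
parameter `t_χ` satisfies `t_χ² ≢ -4ab (mod p)`, one has `|K_q(a,b,χ)| ≤ 2√q`.
Here `l = ⌊k/2⌋` and the parameter `t = t_χ ∈ ℤ/p^{k-l}ℤ` is characterized by
`χ(1 + p^l x) = e_{p^l}(tx)` for `k` even and by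
`χ(1 + p^l x + p^{2l}(x²/2)) = e_{p^{l+1}}(tx)` for `k` odd. -/
theorem kloos_bound_of_param
    (p k : ℕ) [Fact p.Prime] (hodd : p ≠ 2) (hk : 2 ≤ k)
    (χ : MulChar (ZMod (p ^ k)) ℂ) (t : ZMod (p ^ (k - k / 2)))
    (hte : k % 2 = 0 → ∀ x : ZMod (p ^ (k - k / 2)),
      χ (1 + (p : ZMod (p ^ k)) ^ (k / 2) * (x.val : ZMod (p ^ k))) =
        eZMod (p ^ (k - k / 2)) (t * x))
    (hto : k % 2 = 1 → ∀ x : ZMod (p ^ (k - k / 2)),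
      χ (1 + (p : ZMod (p ^ k)) ^ (k / 2) * (x.val : ZMod (p ^ k)) +
          (p : ZMod (p ^ k)) ^ (2 * (k / 2)) *
            (((x ^ 2 * (2 : ZMod (p ^ (k - k / 2)))⁻¹).val : ZMod (p ^ k)))) =
        eZMod (p ^ (k - k / 2)) (t * x))
    (a b : (ZMod (p ^ k))ˣ)
    (htab : ((t.val : ZMod p)) ^ 2 ≠
      -4 * (((a : ZMod (p ^ k)).val : ZMod p)) * (((b : ZMod (p ^ k)).val : ZMod p))) :
    ‖Kloos (p ^ k) (a : ZMod (p ^ k)) (b : ZMod (p ^ k)) χ‖ ≤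
      2 * Real.sqrt (p ^ k) := by
  classical
  have hp := Fact.out (p := p.Prime)
  have hp0 : p ≠ 0 := hp.pos.ne'
  have hp1 : (1:ℝ) < (p:ℝ) := by exact_mod_cast hp.one_lt
  haveI : NeZero (p ^ k) := ⟨pow_ne_zero _ hp0⟩
  haveI : NeZero (p ^ (k / 2)) := ⟨pow_ne_zero _ hp0⟩
  haveI : NeZero (p ^ (k - k / 2)) := ⟨pow_ne_zero _ hp0⟩
  have hl1 : 1 ≤ k / 2 := by omega
  have hpl : (p:ℕ) ∣ p ^ (k / 2) := dvd_pow_self p (by omega)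
  -- common reductions
  set Abar : ZMod (p ^ (k / 2)) := (((a : ZMod (p ^ k)).val : ZMod (p ^ (k / 2)))) with hAbar
  set Bbar : ZMod (p ^ (k / 2)) := (((b : ZMod (p ^ k)).val : ZMod (p ^ (k / 2)))) with hBbar
  have hAu : ((Abar.val : ZMod p)) ≠ 0 := by
    have hdvd : (p:ℕ) ^ (k / 2) ∣ p ^ k := pow_dvd_pow p (by omega)
    have h1 : IsUnit Abar := by
      have := (Units.isUnit a).map (ZMod.castHom hdvd (ZMod (p ^ (k / 2))))
      rwa [ZMod.castHom_apply, ← ZMod.natCast_val, ← hAbar] at this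
    have h2 : IsUnit ((Abar.val : ZMod p)) := by
      have := h1.map (ZMod.castHom hpl (ZMod p))
      rwa [ZMod.castHom_apply, ← ZMod.natCast_val] at this
    exact h2.ne_zero
  have hAredp : ((Abar.val : ZMod p)) = (((a : ZMod (p ^ k)).val : ZMod p)) := by
    rw [hAbar]; exact red_natCast _ _ hpl _
  have hBredp : ((Bbar.val : ZMod p)) = (((b : ZMod (p ^ k)).val : ZMod p)) := by
    rw [hBbar]; exact red_natCast _ _ hpl _
  rcases Nat.mod_two_eq_zero_or_one k with hpar | hpar
  · -- EVEN CASE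
    have hkl : k = k / 2 + k / 2 := by omega
    have hml : k - k / 2 = k / 2 := by omega
    have hMN : p ^ (k - k / 2) = p ^ (k / 2) := by rw [hml]
    set t' : ZMod (p ^ (k / 2)) := ((t.val : ZMod (p ^ (k / 2)))) with ht'
    have hte' : ∀ y : ZMod (p ^ (k / 2)),
        χ (1 + (p : ZMod (p ^ k)) ^ (k / 2) * ((y.val : ℕ) : ZMod (p ^ k)))
          = eZMod (p ^ (k / 2)) (t' * y) := by
      intro y
      have hy : (((y.val : ZMod (p ^ (k - k / 2)))).val) = y.val :=
        zmod_eq_val_transport _ _ hMN y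
      have h1 := hte hpar ((y.val : ZMod (p ^ (k - k / 2))))
      rw [hy] at h1
      rw [h1, eZMod_transport _ _ hMN, zmod_mul_val_transport _ _ hMN, hy,
        ZMod.natCast_zmod_val]
    have ht'val : ((t'.val : ZMod p)) = ((t.val : ZMod p)) := by
      rw [ht', zmod_eq_val_transport _ _ hMN.symm t]
    obtain ⟨Eu, hEu⟩ := even_inner p k (k / 2) (k / 2) hkl hl1 rfl a b χ t' hte'
    simp only [ZMod.natCast_zmod_val] at hEu
    have hdisc : ((t'.val : ZMod p)) ^ 2 + 4 * ((Abar.val : ZMod p)) * ((Bbar.val : ZMod p)) ≠ 0 := by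
      intro h
      apply htab
      rw [← ht'val, ← hAredp, ← hBredp]
      linear_combination h
    have hcount := count_quad_roots p (k / 2) hl1 Abar Bbar t' hAu hdisc
    have hmain := kloos_skeleton p k (k / 2) (k / 2) (by omega) hl1
      (a : ZMod (p ^ k)) (b : ZMod (p ^ k)) χ Eu
      (fun z => Abar * z ^ 2 + t' * z - Bbar = 0) ((p ^ (k / 2) : ℕ) : ℝ)
      (by positivity) (fun x => hEu x) hcount
    refine hmain.trans ?_
    have hsq : ((p:ℝ)) ^ k = (((p ^ (k / 2) : ℕ) : ℝ)) ^ 2 := by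
      push_cast
      rw [← pow_mul]
      congr 1
      omega
    rw [hsq, Real.sqrt_sq (by positivity)]
  · -- ODD CASE
    have hkl : k = k / 2 + (k / 2 + 1) := by omega
    have hml : k - k / 2 = k / 2 + 1 := by omega
    obtain ⟨Eu, hEu⟩ := odd_inner p k (k / 2) (k - k / 2) hodd hkl hl1 hml a b χ t
      (hto hpar) htab
    have hdisc : (((((t.val : ZMod (p ^ (k / 2)))).val : ZMod p)) ^ 2
        + 4 * ((Abar.val : ZMod p)) * ((Bbar.val : ZMod p))) ≠ 0 := by
      intro h
      apply htab
      rw [← hAredp, ← hBredp]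
      have htred : (((((t.val : ZMod (p ^ (k / 2)))).val : ZMod p))) = ((t.val : ZMod p)) :=
        red_natCast _ _ hpl _
      rw [← htred]
      linear_combination h
    have hcount := count_quad_roots p (k / 2) hl1 Abar Bbar
      ((t.val : ZMod (p ^ (k / 2)))) hAu hdisc
    have hmain := kloos_skeleton p k (k / 2) (k - k / 2) (by omega) hl1
      (a : ZMod (p ^ k)) (b : ZMod (p ^ k)) χ Eu
      (fun z => Abar * z ^ 2 + ((t.val : ZMod (p ^ (k / 2)))) * z - Bbar = 0)
      (((p ^ (k / 2) : ℕ) : ℝ) * Real.sqrt p)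
      (by positivity) (fun x => hEu x) hcount
    refine hmain.trans ?_
    have hsq : ((p:ℝ)) ^ k = (((p ^ (k / 2) : ℕ) : ℝ)) ^ 2 * p := by
      push_cast
      rw [← pow_mul, ← pow_succ]
      congr 1
      omega
    rw [hsq, Real.sqrt_mul (by positivity), Real.sqrt_sq (by positivity)]
end

section
/- Let p be an odd prime, k ≥ 2, and q = p^k. Then for every a, b ∈ (ℤ/qℤ)^*, the untwisted Kloosterman sum satisfies |K_q(a,b,1)| ≤ 2√q, where 1 denotes the trivial multiplicative character of (ℤ/qℤ)^*. -/
open Complex Finset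

open ZMod

lemma psi_eq_one_iff (N : ℕ) [NeZero N] (x : ZMod N) : stdAddChar x = 1 ↔ x = 0 := by
  constructor
  · intro h
    rw [stdAddChar_apply, ZMod.toCircle_apply] at h
    norm_cast at h
    obtain ⟨j, hj⟩ := Complex.exp_eq_one_iff.mp h
    have hπ : (2 * (Real.pi:ℂ) * I) ≠ 0 := by
      simp [Real.pi_ne_zero, Complex.I_ne_zero]
    have hN : (N:ℂ) ≠ 0 := Nat.cast_ne_zero.mpr (NeZero.ne N)
    have hc : (x.val : ℂ) = j * N := by
      have hj' : 2 * (Real.pi:ℂ) * I * ((x.val:ℕ) : ℂ) = 2 * (Real.pi:ℂ) * I * (j * N) := by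
        field_simp at hj
        push_cast at hj ⊢
        rw [ZMod.natCast_val] at hj ⊢
        linear_combination I * hj
      exact mul_left_cancel₀ hπ hj'
    have h2 : (x.val : ℤ) = j * N := by exact_mod_cast hc
    have h3 : (N:ℕ) ∣ x.val := by
      have : (N:ℤ) ∣ (x.val : ℤ) := ⟨j, by linarith⟩
      exact_mod_cast this
    exact (ZMod.val_eq_zero x).mp (Nat.eq_zero_of_dvd_of_lt h3 (ZMod.val_lt x))
  · intro h; simp [h, stdAddChar_apply]

lemma psi_conj (N : ℕ) [NeZero N] (x : ZMod N) :
    (starRingEnd ℂ) (stdAddChar x) = stdAddChar (-x) := by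
  have h1 : stdAddChar (-x) * stdAddChar x = 1 := by
    rw [← AddChar.map_add_eq_mul]; simp
  have h2 : (starRingEnd ℂ) (stdAddChar x) * stdAddChar x = 1 := by
    rw [mul_comm, Complex.mul_conj]
    norm_cast
    have : ‖stdAddChar x‖ = 1 := by rw [stdAddChar_apply]; exact Circle.norm_coe _
    rw [← Complex.sq_norm, this]; norm_num
  have h3 : stdAddChar x ≠ 0 := by
    intro h; rw [h, mul_zero] at h2; exact one_ne_zero h2.symm
  exact mul_right_cancel₀ h3 (h2.trans h1.symm)

lemma lin_add (N M : ℕ) [NeZero N] [NeZero M] (w : ZMod N) (hw : w * (M : ZMod N) = 0)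
    (t s : ZMod M) :
    stdAddChar (w * (((t+s).val : ℕ) : ZMod N)) =
      stdAddChar (w * ((t.val : ℕ) : ZMod N)) * stdAddChar (w * ((s.val : ℕ) : ZMod N)) := by
  rw [← AddChar.map_add_eq_mul]
  congr 1
  have h1 : (t+s).val = (t.val + s.val) % M := ZMod.val_add t s
  have h2 : t.val + s.val = M * ((t.val + s.val) / M) + (t.val + s.val) % M :=
    (Nat.div_add_mod _ M).symm
  have h3 : (((t+s).val : ℕ) : ZMod N)
      = ((t.val : ℕ) : ZMod N) + ((s.val : ℕ) : ZMod N)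
        - (M : ZMod N) * (((t.val + s.val) / M : ℕ) : ZMod N) := by
    rw [h1]
    have h4 : ((t.val + s.val : ℕ) : ZMod N)
        = (M : ZMod N) * (((t.val + s.val) / M : ℕ) : ZMod N) + (((t.val + s.val) % M : ℕ) : ZMod N) := by
      rw [← Nat.cast_mul, ← Nat.cast_add, ← h2]
    push_cast at h4 ⊢
    linear_combination -h4
  rw [h3]
  linear_combination (-(((t.val + s.val) / M : ℕ) : ZMod N)) * hw

lemma lin_sum (N M : ℕ) [NeZero N] [NeZero M] (hM : 1 < M) (w : ZMod N)
    (hw : w * (M : ZMod N) = 0) :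
    ∑ t : ZMod M, stdAddChar (w * ((t.val : ℕ) : ZMod N)) = if w = 0 then (M : ℂ) else 0 := by
  split_ifs with h
  · simp [h, ZMod.card]
  · set S := ∑ t : ZMod M, stdAddChar (w * ((t.val : ℕ) : ZMod N)) with hS
    have hT1 : (((1 : ZMod M).val : ℕ) : ZMod N) = 1 := by
      haveI : Fact (1 < M) := ⟨hM⟩
      rw [ZMod.val_one M]; norm_num
    have e1 : ∀ t : ZMod M, stdAddChar (w * 1) * stdAddChar (w * ((t.val : ℕ) : ZMod N))
        = stdAddChar (w * (((1 + t : ZMod M).val : ℕ) : ZMod N)) := by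
      intro t
      rw [lin_add N M w hw 1 t, hT1]
    have key : stdAddChar (w * 1) * S = S := by
      calc stdAddChar (w * 1) * S
          = ∑ t : ZMod M, stdAddChar (w * (((1 + t : ZMod M).val : ℕ) : ZMod N)) := by
            rw [hS, Finset.mul_sum]
            exact Finset.sum_congr rfl (fun t _ => e1 t)
        _ = S := Fintype.sum_bijective _ (Equiv.addLeft (1 : ZMod M)).bijective _ _ (fun t => rfl)
    have hne : stdAddChar (w * 1) ≠ 1 := by
      rw [mul_one]
      intro hcon
      exact h ((psi_eq_one_iff N w).mp hcon)
    have hz : (stdAddChar (w * 1) - 1) * S = 0 := by rw [sub_mul, one_mul, key, sub_self]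
    rcases mul_eq_zero.mp hz with h' | h'
    · exact absurd (by linear_combination h') hne
    · exact h'

lemma unit_val_not_dvd (p j : ℕ) [Fact p.Prime] (hj : 1 ≤ j) (u : (ZMod (p^j))ˣ) :
    ¬ p ∣ (u : ZMod (p^j)).val := by
  intro hdvd
  have hcop := ZMod.val_coe_unit_coprime u
  have h2 : p ∣ Nat.gcd ((u : ZMod (p^j)).val) (p^j) :=
    Nat.dvd_gcd hdvd (dvd_pow_self p (by omega))
  rw [hcop] at h2
  exact Nat.Prime.one_lt (Fact.out (p := p.Prime)) |>.ne' (Nat.dvd_one.mp h2)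

lemma cop_aux (p m n : ℕ) [Fact p.Prime] (hm : 1 ≤ m) (u : (ZMod (p^m))ˣ) (t : ZMod (p^n)) :
    Nat.Coprime ((u : ZMod (p^m)).val + p^m * t.val) (p^(m+n)) := by
  apply Nat.Coprime.pow_right
  rw [Nat.coprime_comm, Nat.Prime.coprime_iff_not_dvd (Fact.out (p := p.Prime))]
  intro hdvd
  have h1 : p ∣ p^m * t.val := Dvd.dvd.mul_right (dvd_pow_self p (by omega)) _
  exact unit_val_not_dvd p m hm u ((Nat.dvd_add_right h1).mp (by rwa [add_comm] at hdvd))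

lemma sum_units (p m n : ℕ) [Fact p.Prime] (hm : 1 ≤ m) (f : ZMod (p^(m+n)) → ℂ) :
    ∑ x : (ZMod (p^(m+n)))ˣ, f ↑x
      = ∑ u : (ZMod (p^m))ˣ, ∑ t : ZMod (p^n),
          f ((((u : ZMod (p^m)).val + p^m * t.val : ℕ)) : ZMod (p^(m+n))) := by
  have hp := Fact.out (p := p.Prime)
  have hppos : 0 < p := hp.pos
  haveI : NeZero (p^m) := ⟨pow_ne_zero m hp.ne_zero⟩
  haveI : NeZero (p^n) := ⟨pow_ne_zero n hp.ne_zero⟩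
  set Φ : (ZMod (p^m))ˣ × ZMod (p^n) → (ZMod (p^(m+n)))ˣ :=
    fun ut => ZMod.unitOfCoprime _ (cop_aux p m n hm ut.1 ut.2) with hΦ
  have hlt : ∀ (u : (ZMod (p^m))ˣ) (t : ZMod (p^n)),
      (u : ZMod (p^m)).val + p^m * t.val < p^(m+n) := by
    intro u t
    have h1 : (u : ZMod (p^m)).val < p^m := ZMod.val_lt _
    have h2 : t.val + 1 ≤ p^n := ZMod.val_lt t
    calc (u : ZMod (p^m)).val + p^m * t.val < p^m * (t.val + 1) := by ring_nf; omega
      _ ≤ p^m * p^n := Nat.mul_le_mul_left _ h2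
      _ = p^(m+n) := (pow_add p m n).symm
  have hinj : Function.Injective Φ := by
    rintro ⟨u₁, t₁⟩ ⟨u₂, t₂⟩ h
    have e : ∀ (u : (ZMod (p^m))ˣ) (t : ZMod (p^n)),
        ((Φ (u,t) : (ZMod (p^(m+n)))ˣ) : ZMod (p^(m+n))).val
          = (u : ZMod (p^m)).val + p^m * t.val := by
      intro u t
      rw [hΦ]
      simp only [ZMod.coe_unitOfCoprime]
      exact ZMod.val_cast_of_lt (hlt u t)
    have hval : ((u₁ : ZMod (p^m)).val + p^m * t₁.val : ℕ)
        = ((u₂ : ZMod (p^m)).val + p^m * t₂.val : ℕ) := by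
      rw [← e u₁ t₁, ← e u₂ t₂, h]
    have hu : (u₁ : ZMod (p^m)).val = (u₂ : ZMod (p^m)).val := by
      have e1 := congrArg (fun x => x % p^m) hval
      simpa [Nat.add_mul_mod_self_left, Nat.mod_eq_of_lt (ZMod.val_lt _)] using e1
    have ht : t₁.val = t₂.val := by
      have : p^m * t₁.val = p^m * t₂.val := by omega
      exact Nat.eq_of_mul_eq_mul_left (pow_pos hppos m) this
    exact Prod.ext (Units.ext (ZMod.val_injective _ hu)) (ZMod.val_injective _ ht)
  have hcard : Fintype.card ((ZMod (p^m))ˣ × ZMod (p^n)) = Fintype.card (ZMod (p^(m+n)))ˣ := by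
    rw [Fintype.card_prod, ZMod.card_units_eq_totient, ZMod.card_units_eq_totient, ZMod.card,
      Nat.totient_prime_pow hp hm, Nat.totient_prime_pow hp (by omega : 1 ≤ m + n)]
    obtain ⟨m', rfl⟩ : ∃ m', m = m' + 1 := ⟨m - 1, by omega⟩
    have : m' + 1 + n - 1 = m' + n := by omega
    rw [this, show m' + 1 - 1 = m' from rfl, pow_add]
    ring
  have hbij : Function.Bijective Φ :=
    (Fintype.bijective_iff_injective_and_card Φ).mpr ⟨hinj, hcard⟩
  rw [← Fintype.sum_bijective Φ hbij
    (fun ut => f ((((ut.1 : ZMod (p^m)).val + p^m * ut.2.val : ℕ)) : ZMod (p^(m+n))))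
    (fun x => f ↑x)
    (fun ut => congrArg f (ZMod.coe_unitOfCoprime _ _).symm)]
  rw [Fintype.sum_prod_type]

lemma ppow_zero (p k j : ℕ) [Fact p.Prime] [NeZero (p^k)] (hj : k ≤ j) :
    ((p : ZMod (p^k)))^j = 0 := by
  have : ((p : ZMod (p^k)))^j = (((p^j : ℕ)) : ZMod (p^k)) := by push_cast; ring
  rw [this, ZMod.natCast_eq_zero_iff]
  exact pow_dvd_pow p hj

lemma val_add_cast (N M : ℕ) [NeZero N] [NeZero M] (t s : ZMod M) :
    ∃ E : ZMod N, (((t+s).val : ℕ) : ZMod N)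
      = ((t.val : ℕ) : ZMod N) + ((s.val : ℕ) : ZMod N) - (M : ZMod N) * E := by
  refine ⟨(((t.val + s.val) / M : ℕ) : ZMod N), ?_⟩
  have h1 : (t+s).val = (t.val + s.val) % M := ZMod.val_add t s
  have h2 : t.val + s.val = M * ((t.val + s.val) / M) + (t.val + s.val) % M :=
    (Nat.div_add_mod _ M).symm
  have h4 : ((t.val + s.val : ℕ) : ZMod N)
      = (M : ZMod N) * (((t.val + s.val) / M : ℕ) : ZMod N)
        + (((t.val + s.val) % M : ℕ) : ZMod N) := by
    rw [← Nat.cast_mul, ← Nat.cast_add, ← h2]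
  rw [h1]
  push_cast at h4 ⊢
  linear_combination -h4

lemma two_unit (p j : ℕ) [Fact p.Prime] (hodd : p ≠ 2) : IsUnit (2 : ZMod (p^j)) := by
  have hp : p.Prime := Fact.out
  have : ((2 : ℕ) : ZMod (p^j)) = (2 : ZMod (p^j)) := by norm_num
  rw [← this, ZMod.isUnit_iff_coprime]
  exact Nat.Coprime.pow_right _ ((Nat.coprime_two_left).mpr (hp.odd_of_ne_two hodd))

set_option maxHeartbeats 1000000 in
lemma G_bound (p m n : ℕ) [Fact p.Prime] (hodd : p ≠ 2) (hm : 1 ≤ m) (hmn : m ≤ n)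
    (hnm : n ≤ m + 1) (c d : ZMod (p^(m+n))) (hd : IsUnit d) :
    ‖(∑ t : ZMod (p^n),
        stdAddChar ((((p : ZMod (p^(m+n))))^m * c) * ((t.val : ℕ) : ZMod (p^(m+n)))
          + ((((p : ZMod (p^(m+n))))^m)^2 * d) * ((t.val : ℕ) : ZMod (p^(m+n)))^2))‖
      = if ((p : ZMod (p^(m+n))))^n * c = 0 then Real.sqrt ((p:ℝ)^(m+n)) else 0 := by
  have hp : p.Prime := Fact.out
  haveI : NeZero (p^(m+n)) := ⟨pow_ne_zero _ hp.ne_zero⟩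
  haveI : NeZero (p^n) := ⟨pow_ne_zero _ hp.ne_zero⟩
  haveI : NeZero (p^m) := ⟨pow_ne_zero _ hp.ne_zero⟩
  revert c d hd
  set q : ℕ := p^(m+n) with hq
  intro c d hd
  set P : ZMod q := ((p : ZMod q))^m with hP
  set T : ZMod (p^n) → ZMod q := fun t => ((t.val : ℕ) : ZMod q) with hT
  set G : ℂ := ∑ t : ZMod (p^n), stdAddChar ((P * c) * T t + (P^2 * d) * (T t)^2) with hG
  -- basic vanishing facts
  have hPn : P * ((p : ZMod q))^n = 0 := by
    rw [hP, ← pow_add]; exact ppow_zero p (m+n) (m+n) le_rfl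
  have hP2n : P^2 * ((p : ZMod q))^n = 0 := by
    rw [hP, ← pow_mul, ← pow_add]; exact ppow_zero p (m+n) (m*2+n) (by omega)
  -- phase difference identity
  have phase_diff : ∀ s h : ZMod (p^n),
      (P * c) * T (s + h) + (P^2 * d) * (T (s + h))^2
        = ((P * c) * T h + (P^2 * d) * (T h)^2 + (2 * (P^2 * d) * T h) * T s)
          + ((P * c) * T s + (P^2 * d) * (T s)^2) := by
    intro s h
    obtain ⟨E, hE⟩ := val_add_cast q (p^n) s h
    have hE' : T (s + h) = T s + T h - ((p : ZMod q))^n * E := by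
      rw [hT]; push_cast at hE ⊢; exact hE
    rw [hE']
    linear_combination (-(c*E) - 2*P*d*E*(T s + T h)) * hPn + (d*E^2*((p : ZMod q))^n) * hP2n
  -- conjugate
  have hconj : (starRingEnd ℂ) G
      = ∑ s : ZMod (p^n), stdAddChar (-((P * c) * T s + (P^2 * d) * (T s)^2)) := by
    rw [hG, map_sum]
    exact Finset.sum_congr rfl fun s _ => psi_conj q _
  -- product expansion
  have hprod : G * (starRingEnd ℂ) G
      = ∑ h : ZMod (p^n), stdAddChar ((P * c) * T h + (P^2 * d) * (T h)^2)
          * ∑ s : ZMod (p^n), stdAddChar ((2 * (P^2 * d) * T h) * T s) := by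
    have perterm : ∀ s h : ZMod (p^n),
        stdAddChar ((P * c) * T (s + h) + (P^2 * d) * (T (s + h))^2)
          * stdAddChar (-((P * c) * T s + (P^2 * d) * (T s)^2))
        = stdAddChar ((P * c) * T h + (P^2 * d) * (T h)^2)
            * stdAddChar ((2 * (P^2 * d) * T h) * T s) := by
      intro s h
      rw [phase_diff s h, AddChar.map_add_eq_mul, AddChar.map_add_eq_mul, mul_assoc,
        ← AddChar.map_add_eq_mul (ZMod.stdAddChar) ((P * c) * T s + (P^2 * d) * (T s)^2),
        add_neg_cancel, AddChar.map_zero_eq_one, mul_one]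
    calc G * (starRingEnd ℂ) G
        = ∑ s : ZMod (p^n), ∑ t : ZMod (p^n),
            stdAddChar ((P * c) * T t + (P^2 * d) * (T t)^2)
              * stdAddChar (-((P * c) * T s + (P^2 * d) * (T s)^2)) := by
          rw [hconj, hG, Finset.sum_mul_sum, Finset.sum_comm]
      _ = ∑ s : ZMod (p^n), ∑ h : ZMod (p^n),
            stdAddChar ((P * c) * T (s + h) + (P^2 * d) * (T (s + h))^2)
              * stdAddChar (-((P * c) * T s + (P^2 * d) * (T s)^2)) := by
          refine Finset.sum_congr rfl fun s _ => ?_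
          exact (Fintype.sum_bijective (fun t : ZMod (p^n) => s + t)
            (Equiv.addLeft s).bijective _ _ (fun t => rfl)).symm
      _ = ∑ s : ZMod (p^n), ∑ h : ZMod (p^n),
            stdAddChar ((P * c) * T h + (P^2 * d) * (T h)^2)
              * stdAddChar ((2 * (P^2 * d) * T h) * T s) := by
          exact Finset.sum_congr rfl fun s _ => Finset.sum_congr rfl fun h _ => perterm s h
      _ = _ := by
          rw [Finset.sum_comm]
          exact Finset.sum_congr rfl fun h _ => (Finset.mul_sum _ _ _).symm
  -- evaluate inner linear sums
  have h1pn : 1 < p^n := Nat.one_lt_pow (by omega) hp.one_lt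
  have h1pm : 1 < p^m := Nat.one_lt_pow (by omega) hp.one_lt
  have hinner : ∀ h : ZMod (p^n),
      (∑ s : ZMod (p^n), stdAddChar ((2 * (P^2 * d) * T h) * T s))
        = if 2 * (P^2 * d) * T h = 0 then ((p^n : ℕ) : ℂ) else 0 := by
    intro h
    exact lin_sum q (p^n) h1pn _ (by push_cast; linear_combination (2 * d * T h) * hP2n)
  have h2u : IsUnit (2 : ZMod q) := two_unit p (m+n) hodd
  -- the diagonal set
  set r : ℕ := n - m with hr
  have hDchar : ∀ h : ZMod (p^n), (2 * (P^2 * d) * T h = 0) ↔ ((p^r : ℕ) ∣ h.val) := by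
    intro h
    have e1 : 2 * (P^2 * d) * T h = 2 * (d * (P^2 * T h)) := by ring
    rw [e1, h2u.mul_right_eq_zero, hd.mul_right_eq_zero]
    have e2 : P^2 * T h = (((p^(m*2) * h.val : ℕ)) : ZMod q) := by
      rw [hP, hT, ← pow_mul]; push_cast; ring
    rw [e2, ZMod.natCast_eq_zero_iff]
    have e3 : q = p^(m*2) * p^r := by
      rw [hq, ← pow_add]; congr 1; omega
    rw [e3]
    exact Nat.mul_dvd_mul_iff_left (pow_pos hp.pos _)
  have hcond0 : ∀ h : ZMod (p^n), 2 * (P^2 * d) * T h = 0 → (P^2 * d) * (T h)^2 = 0 := by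
    intro h hh
    have : P^2 * d * T h = 0 := by
      have e1 : 2 * (P^2 * d) * T h = 2 * (P^2 * d * T h) := by ring
      rw [e1, h2u.mul_right_eq_zero] at hh
      exact hh
    linear_combination (T h) * this
  -- reduce to sum over the filter
  have hprod2 : G * (starRingEnd ℂ) G
      = ((p^n : ℕ) : ℂ) * ∑ h ∈ Finset.univ.filter (fun h : ZMod (p^n) => 2 * (P^2 * d) * T h = 0),
          stdAddChar ((P * c) * T h) := by
    rw [hprod, Finset.sum_filter, Finset.mul_sum]
    refine Finset.sum_congr rfl fun h _ => ?_
    rw [hinner h]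
    split_ifs with hh
    · have : (P^2 * d) * (T h)^2 = 0 := hcond0 h hh
      rw [this, add_zero]
      ring
    · simp
  -- reindex the filtered sum
  have hreindex : (∑ h ∈ Finset.univ.filter (fun h : ZMod (p^n) => 2 * (P^2 * d) * T h = 0),
        stdAddChar ((P * c) * T h))
      = ∑ h' : ZMod (p^m), stdAddChar ((((p : ZMod q))^n * c) * ((h'.val : ℕ) : ZMod q)) := by
    have hrm : p^r * p^m = p^n := by rw [← pow_add]; congr 1; omega
    refine Finset.sum_nbij' (fun h => (((h.val / p^r : ℕ)) : ZMod (p^m)))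
      (fun h' => (((p^r * h'.val : ℕ)) : ZMod (p^n))) ?_ ?_ ?_ ?_ ?_
    · intro h _; exact Finset.mem_univ _
    · intro h' _
      rw [Finset.mem_filter]
      refine ⟨Finset.mem_univ _, ?_⟩
      rw [hDchar]
      rw [ZMod.val_cast_of_lt]
      · exact Dvd.intro _ rfl
      · calc p^r * h'.val < p^r * p^m := by
              exact (mul_lt_mul_iff_right₀ (pow_pos hp.pos r)).mpr (ZMod.val_lt h')
          _ = p^n := hrm
    · intro h hmem
      rw [Finset.mem_filter] at hmem
      obtain ⟨-, hh⟩ := hmem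
      rw [hDchar] at hh
      have hlt : h.val / p^r < p^m := by
        apply Nat.div_lt_of_lt_mul
        rw [hrm]; exact ZMod.val_lt h
      show ((((p^r * (((h.val / p^r : ℕ) : ZMod (p^m))).val : ℕ)) : ZMod (p^n))) = h
      rw [ZMod.val_cast_of_lt hlt, Nat.mul_div_cancel' hh, ZMod.natCast_zmod_val]
    · intro h' _
      have hlt : p^r * h'.val < p^n := by
        calc p^r * h'.val < p^r * p^m :=
              (mul_lt_mul_iff_right₀ (pow_pos hp.pos r)).mpr (ZMod.val_lt h')
          _ = p^n := hrm
      show (((((p^r * h'.val : ℕ) : ZMod (p^n))).val / p^r : ℕ) : ZMod (p^m)) = h'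
      rw [ZMod.val_cast_of_lt hlt, Nat.mul_div_cancel_left _ (pow_pos hp.pos _),
        ZMod.natCast_zmod_val]
    · intro h hmem
      rw [Finset.mem_filter] at hmem
      obtain ⟨-, hh⟩ := hmem
      rw [hDchar] at hh
      have hlt : h.val / p^r < p^m := by
        apply Nat.div_lt_of_lt_mul
        rw [hrm]; exact ZMod.val_lt h
      have e6 : ((((h.val / p^r : ℕ) : ZMod (p^m))).val) = h.val / p^r := ZMod.val_cast_of_lt hlt
      congr 1
      show P * c * T h = ((p : ZMod q))^n * c * (((((h.val / p^r : ℕ) : ZMod (p^m))).val : ℕ) : ZMod q)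
      rw [e6]
      have e4 : ((h.val : ℕ) : ZMod q) = ((p^r * (h.val / p^r) : ℕ) : ZMod q) := by
        rw [Nat.mul_div_cancel' hh]
      have e7 : T h = ((p : ZMod q))^r * ((h.val / p^r : ℕ) : ZMod q) := by
        rw [hT]
        dsimp only
        rw [e4]
        push_cast
        ring
      rw [e7, hP]
      rw [show ((p : ZMod q))^n = ((p : ZMod q))^m * ((p : ZMod q))^r from by
        rw [← pow_add]; congr 1; omega]
      ring
  have hfinal : G * (starRingEnd ℂ) G
      = if ((p : ZMod q))^n * c = 0 then ((q : ℕ) : ℂ) else 0 := by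
    rw [hprod2, hreindex, lin_sum q (p^m) h1pm _ (by
      have e8 : ((p : ZMod q))^n * c * ((p^m : ℕ) : ZMod q)
          = c * (((p : ZMod q))^n * ((p : ZMod q))^m) := by push_cast; ring
      have hz : ((p : ZMod q))^n * ((p : ZMod q))^m = 0 := by
        rw [← pow_add]; exact ppow_zero p (m+n) (n+m) (by omega)
      rw [e8, hz, mul_zero])]
    split_ifs with hcond
    · rw [← Nat.cast_mul, ← pow_add]
      norm_cast
      rw [hq, Nat.add_comm]
    · simp
  -- conclude
  have habs2 : ‖G‖^2 = if ((p : ZMod q))^n * c = 0 then ((q : ℕ) : ℝ) else 0 := by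
    have := hfinal
    rw [Complex.mul_conj] at this
    rw [Complex.sq_norm]
    split_ifs at this ⊢ with hcond
    · exact_mod_cast this
    · exact_mod_cast this
  have habs : ‖G‖ = Real.sqrt (‖G‖^2) :=
    (Real.sqrt_sq (norm_nonneg G)).symm
  rw [habs, habs2]
  split_ifs with hcond
  · congr 1
    rw [hq]
    push_cast
    ring
  · exact Real.sqrt_zero

lemma pn_cast (p m n : ℕ) [Fact p.Prime] [NeZero (p^(m+n))] [NeZero (p^m)]
    (X : ZMod (p^(m+n))) (h : ((p : ZMod (p^(m+n))))^n * X = 0) :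
    (ZMod.castHom (pow_dvd_pow p (Nat.le_add_right m n)) (ZMod (p^m))) X = 0 := by
  have hp : p.Prime := Fact.out
  have h1 : ((p^n * X.val : ℕ) : ZMod (p^(m+n))) = 0 := by
    push_cast
    rw [ZMod.natCast_val, ZMod.cast_id]
    linear_combination h
  rw [ZMod.natCast_eq_zero_iff] at h1
  have h2 : p^m ∣ X.val := by
    have e : p^(m+n) = p^n * p^m := by rw [← pow_add]; congr 1; omega
    have h1' : p^n * p^m ∣ p^n * X.val := by rw [← e]; exact h1
    exact (Nat.mul_dvd_mul_iff_left (pow_pos hp.pos n)).mp h1' 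
  rw [ZMod.castHom_apply, ← ZMod.natCast_val, ZMod.natCast_eq_zero_iff]
  exact h2

lemma notunit_dvd (p m : ℕ) [Fact p.Prime] [NeZero (p^m)] (hm : 1 ≤ m) (x : ZMod (p^m))
    (h : ¬ IsUnit x) : p ∣ x.val := by
  have hp : p.Prime := Fact.out
  by_contra hnd
  apply h
  have : IsUnit ((x.val : ℕ) : ZMod (p^m)) := by
    rw [ZMod.isUnit_iff_coprime]
    exact Nat.Coprime.pow_right _ (Nat.coprime_comm.mp ((hp.coprime_iff_not_dvd).mpr hnd))
  rwa [ZMod.natCast_zmod_val] at this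

lemma eZMod_eq_stdAddChar (N : ℕ) [NeZero N] (y : ZMod N) : eZMod N y = stdAddChar y := by
  rw [eZMod, stdAddChar_apply, ZMod.toCircle_apply]

set_option maxHeartbeats 1000000 in
lemma main_aux (p m n : ℕ) [Fact p.Prime] (hodd : p ≠ 2) (hm : 1 ≤ m) (hmn : m ≤ n)
    (hnm : n ≤ m + 1) (a b : (ZMod (p^(m+n)))ˣ) :
    ‖Kloos (p^(m+n)) (a : ZMod (p^(m+n))) (b : ZMod (p^(m+n)))
        (1 : MulChar (ZMod (p^(m+n))) ℂ)‖ ≤ 2 * Real.sqrt ((p:ℝ)^(m+n)) := by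
  have hp : p.Prime := Fact.out
  haveI : NeZero (p^(m+n)) := ⟨pow_ne_zero _ hp.ne_zero⟩
  haveI : NeZero (p^m) := ⟨pow_ne_zero _ hp.ne_zero⟩
  haveI : NeZero (p^n) := ⟨pow_ne_zero _ hp.ne_zero⟩
  -- notation
  set P : ZMod (p^(m+n)) := ((p : ZMod (p^(m+n))))^m with hP
  set U : (ZMod (p^m))ˣ → ZMod (p^(m+n)) :=
    fun u => (((u : ZMod (p^m)).val : ℕ) : ZMod (p^(m+n))) with hU
  have hUunit : ∀ u, IsUnit (U u) := by
    intro u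
    rw [hU, ZMod.isUnit_iff_coprime]
    exact Nat.Coprime.pow_right _
      (Nat.coprime_comm.mp ((hp.coprime_iff_not_dvd).mpr (unit_val_not_dvd p m hm u)))
  set V : (ZMod (p^m))ˣ → ZMod (p^(m+n)) := fun u => (U u)⁻¹ with hV
  have hUV : ∀ u, U u * V u = 1 := fun u => ZMod.mul_inv_of_unit _ (hUunit u)
  have hVunit : ∀ u, IsUnit (V u) := fun u =>
    IsUnit.of_mul_eq_one _ (by rw [mul_comm]; exact hUV u)
  have hP3 : P^3 = 0 := by
    rw [hP, ← pow_mul]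
    exact ppow_zero p (m+n) (m*3) (by omega)
  -- step A: unfold Kloos
  have hK : Kloos (p^(m+n)) (a : ZMod (p^(m+n))) (b : ZMod (p^(m+n))) 1
      = ∑ x : (ZMod (p^(m+n)))ˣ,
          (fun z : ZMod (p^(m+n)) =>
            stdAddChar ((a : ZMod (p^(m+n))) * z + (b : ZMod (p^(m+n))) * z⁻¹)) ↑x := by
    rw [Kloos]
    refine Finset.sum_congr rfl fun x _ => ?_
    rw [MulChar.one_apply_coe, mul_one, eZMod_eq_stdAddChar]
    congr 2
    rw [ZMod.inv_coe_unit]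
  have hK2 : Kloos (p^(m+n)) (a : ZMod (p^(m+n))) (b : ZMod (p^(m+n))) 1
      = ∑ u : (ZMod (p^m))ˣ, ∑ t : ZMod (p^n),
          stdAddChar ((a : ZMod (p^(m+n)))
              * ((((u : ZMod (p^m)).val + p^m * t.val : ℕ)) : ZMod (p^(m+n)))
            + (b : ZMod (p^(m+n)))
              * ((((u : ZMod (p^m)).val + p^m * t.val : ℕ)) : ZMod (p^(m+n)))⁻¹) :=
    hK.trans (sum_units p m n hm
      (fun z => stdAddChar ((a : ZMod (p^(m+n))) * z + (b : ZMod (p^(m+n))) * z⁻¹)))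
  -- step C: rewrite the phase
  have phase : ∀ (u : (ZMod (p^m))ˣ) (t : ZMod (p^n)),
      (a : ZMod (p^(m+n))) * ((((u : ZMod (p^m)).val + p^m * t.val : ℕ)) : ZMod (p^(m+n)))
        + (b : ZMod (p^(m+n)))
            * ((((u : ZMod (p^m)).val + p^m * t.val : ℕ)) : ZMod (p^(m+n)))⁻¹
      = ((a : ZMod (p^(m+n))) * U u + (b : ZMod (p^(m+n))) * V u)
        + ((P * ((a : ZMod (p^(m+n))) - (b : ZMod (p^(m+n))) * (V u)^2))
              * ((t.val : ℕ) : ZMod (p^(m+n)))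
          + ((P^2) * ((b : ZMod (p^(m+n))) * (V u)^3)
              * (((t.val : ℕ) : ZMod (p^(m+n))))^2)) := by
    intro u t
    set T : ZMod (p^(m+n)) := ((t.val : ℕ) : ZMod (p^(m+n))) with hT
    have hz : ((((u : ZMod (p^m)).val + p^m * t.val : ℕ)) : ZMod (p^(m+n))) = U u + P * T := by
      rw [hU, hP, hT]; push_cast; ring
    set w : ZMod (p^(m+n)) := V u - P * T * (V u)^2 + P^2 * T^2 * (V u)^3 with hw
    have hzw : (U u + P * T) * w = 1 := by
      rw [hw]
      linear_combination (1 - P*T*(V u) + P^2*T^2*(V u)^2) * hUV u + (T^3*(V u)^3) * hP3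
    have hzinv : (U u + P * T)⁻¹ = w := by
      have hunit : IsUnit (U u + P * T) := IsUnit.of_mul_eq_one _ hzw
      calc (U u + P * T)⁻¹ = (U u + P * T)⁻¹ * ((U u + P * T) * w) := by rw [hzw, mul_one]
        _ = ((U u + P * T) * (U u + P * T)⁻¹) * w := by ring
        _ = w := by rw [ZMod.mul_inv_of_unit _ hunit, one_mul]
    rw [hz, hzinv, hw]
    ring
  -- step D: split off the inner sum
  have hK3 : Kloos (p^(m+n)) (a : ZMod (p^(m+n))) (b : ZMod (p^(m+n))) 1
      = ∑ u : (ZMod (p^m))ˣ,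
          stdAddChar ((a : ZMod (p^(m+n))) * U u + (b : ZMod (p^(m+n))) * V u)
            * ∑ t : ZMod (p^n),
                stdAddChar ((P * ((a : ZMod (p^(m+n))) - (b : ZMod (p^(m+n))) * (V u)^2))
                      * ((t.val : ℕ) : ZMod (p^(m+n)))
                  + (P^2 * ((b : ZMod (p^(m+n))) * (V u)^3))
                      * (((t.val : ℕ) : ZMod (p^(m+n))))^2) := by
    rw [hK2]
    refine Finset.sum_congr rfl fun u _ => ?_
    rw [Finset.mul_sum]
    refine Finset.sum_congr rfl fun t _ => ?_
    rw [phase u t, AddChar.map_add_eq_mul]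
  -- step E: bound
  rw [hK3]
  calc ‖(∑ u : (ZMod (p^m))ˣ,
        stdAddChar ((a : ZMod (p^(m+n))) * U u + (b : ZMod (p^(m+n))) * V u)
          * ∑ t : ZMod (p^n),
              stdAddChar ((P * ((a : ZMod (p^(m+n))) - (b : ZMod (p^(m+n))) * (V u)^2))
                    * ((t.val : ℕ) : ZMod (p^(m+n)))
                + (P^2 * ((b : ZMod (p^(m+n))) * (V u)^3))
                    * (((t.val : ℕ) : ZMod (p^(m+n))))^2))‖
      ≤ ∑ u : (ZMod (p^m))ˣ,
          ‖(stdAddChar ((a : ZMod (p^(m+n))) * U u + (b : ZMod (p^(m+n))) * V u)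
            * ∑ t : ZMod (p^n),
                stdAddChar ((P * ((a : ZMod (p^(m+n))) - (b : ZMod (p^(m+n))) * (V u)^2))
                      * ((t.val : ℕ) : ZMod (p^(m+n)))
                  + (P^2 * ((b : ZMod (p^(m+n))) * (V u)^3))
                      * (((t.val : ℕ) : ZMod (p^(m+n))))^2))‖ :=
        norm_sum_le _ _
    _ = ∑ u : (ZMod (p^m))ˣ,
          (if ((p : ZMod (p^(m+n))))^n
                * ((a : ZMod (p^(m+n))) - (b : ZMod (p^(m+n))) * (V u)^2) = 0
            then Real.sqrt ((p:ℝ)^(m+n)) else 0) := by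
        refine Finset.sum_congr rfl fun u _ => ?_
        rw [norm_mul]
        have h1 : ‖(stdAddChar ((a : ZMod (p^(m+n))) * U u
            + (b : ZMod (p^(m+n))) * V u))‖ = 1 := by
          rw [stdAddChar_apply]; exact Circle.norm_coe _
        rw [h1, one_mul]
        exact G_bound p m n hodd hm hmn hnm _ _ ((b.isUnit).mul ((hVunit u).pow 3))
    _ ≤ 2 * Real.sqrt ((p:ℝ)^(m+n)) := by
        classical
        set S : Finset (ZMod (p^m))ˣ := Finset.univ.filter
          (fun u => ((p : ZMod (p^(m+n))))^n
            * ((a : ZMod (p^(m+n))) - (b : ZMod (p^(m+n))) * (V u)^2) = 0) with hS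
        have hsum : (∑ u : (ZMod (p^m))ˣ,
            (if ((p : ZMod (p^(m+n))))^n
                  * ((a : ZMod (p^(m+n))) - (b : ZMod (p^(m+n))) * (V u)^2) = 0
              then Real.sqrt ((p:ℝ)^(m+n)) else 0))
            = (S.card : ℝ) * Real.sqrt ((p:ℝ)^(m+n)) := by
          rw [hS, ← Finset.sum_filter, Finset.sum_const, nsmul_eq_mul]
        rw [hsum]
        have hcard : (S.card : ℝ) ≤ 2 := by
          have : S.card ≤ 2 := by
            rcases S.eq_empty_or_nonempty with he | ⟨u₀, hu₀⟩
            · simp [he]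
            · have hsub : S ⊆ {u₀, -u₀} := by
                intro u hu
                have hcond : ∀ v : (ZMod (p^m))ˣ, v ∈ S →
                    ((p : ZMod (p^(m+n))))^n
                      * ((a : ZMod (p^(m+n))) - (b : ZMod (p^(m+n))) * (V v)^2) = 0 := by
                  intro v hv
                  rw [hS, Finset.mem_filter] at hv
                  exact hv.2
                have h1 := hcond u hu
                have h0 := hcond u₀ hu₀
                set Q : ZMod (p^(m+n)) := ((p : ZMod (p^(m+n))))^n with hQ
                set binv : ZMod (p^(m+n)) := ((b⁻¹ : (ZMod (p^(m+n)))ˣ) : ZMod (p^(m+n)))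
                  with hbinv
                have hbb : (b : ZMod (p^(m+n))) * binv = 1 := by
                  rw [hbinv, ← Units.val_mul, mul_inv_cancel, Units.val_one]
                have step1 : Q * ((b : ZMod (p^(m+n))) * ((V u)^2 - (V u₀)^2)) = 0 := by
                  linear_combination h0 - h1
                have e1 : binv * (U u)^2 * (U u₀)^2
                    * (Q * ((b : ZMod (p^(m+n))) * ((V u)^2 - (V u₀)^2))) = 0 := by
                  rw [step1, mul_zero]
                have e2 : binv * (U u)^2 * (U u₀)^2
                    * (Q * ((b : ZMod (p^(m+n))) * ((V u)^2 - (V u₀)^2)))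
                    = Q * (((b : ZMod (p^(m+n))) * binv)
                        * ((U u₀)^2 * (U u * V u)^2 - (U u)^2 * (U u₀ * V u₀)^2)) := by
                  ring
                rw [hUV u, hUV u₀, hbb] at e2
                have key : Q * ((U u₀)^2 - (U u)^2) = 0 := by
                  rw [e2] at e1
                  linear_combination e1
                have hcast := pn_cast p m n _ key
                rw [map_sub, map_pow, map_pow] at hcast
                have hUu : ∀ v : (ZMod (p^m))ˣ,
                    (ZMod.castHom (pow_dvd_pow p (Nat.le_add_right m n)) (ZMod (p^m))) (U v)
                      = (v : ZMod (p^m)) := by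
                  intro v
                  rw [hU]
                  dsimp only
                  rw [map_natCast, ZMod.natCast_zmod_val]
                rw [hUu u, hUu u₀] at hcast
                have hfact : ((u₀ : ZMod (p^m)) - (u : ZMod (p^m)))
                    * ((u₀ : ZMod (p^m)) + (u : ZMod (p^m))) = 0 := by
                  linear_combination hcast
                have hor : IsUnit ((u₀ : ZMod (p^m)) - (u : ZMod (p^m)))
                    ∨ IsUnit ((u₀ : ZMod (p^m)) + (u : ZMod (p^m))) := by
                  by_contra hcon
                  push_neg at hcon
                  obtain ⟨hn1, hn2⟩ := hcon
                  have d1 := notunit_dvd p m hm _ hn1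
                  have d2 := notunit_dvd p m hm _ hn2
                  set x : ZMod (p^m) := (u₀ : ZMod (p^m)) - (u : ZMod (p^m)) with hx
                  set y : ZMod (p^m) := (u₀ : ZMod (p^m)) + (u : ZMod (p^m)) with hy
                  have hxy : x + y = (2 : ZMod (p^m)) * (u₀ : ZMod (p^m)) := by
                    rw [hx, hy]; ring
                  set w : (ZMod (p^m))ˣ := (two_unit p m hodd).unit * u₀ with hwdef
                  have hw : (w : ZMod (p^m)) = (2 : ZMod (p^m)) * (u₀ : ZMod (p^m)) := by
                    rw [hwdef, Units.val_mul, IsUnit.unit_spec]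
                  have hdvd : p ∣ (w : ZMod (p^m)).val := by
                    rw [hw, ← hxy, ZMod.val_add]
                    rw [Nat.dvd_mod_iff (dvd_pow_self p (by omega : m ≠ 0))]
                    exact Nat.dvd_add d1 d2
                  exact unit_val_not_dvd p m hm w hdvd
                rcases hor with hun | hun
                · have : (u₀ : ZMod (p^m)) + (u : ZMod (p^m)) = 0 := by
                    rw [← hun.mul_right_eq_zero]
                    exact hfact
                  have : (u : ZMod (p^m)) = ((-u₀ : (ZMod (p^m))ˣ) : ZMod (p^m)) := by
                    rw [Units.val_neg]
                    linear_combination this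
                  have : u = -u₀ := Units.ext this
                  rw [this]
                  simp
                · have : (u₀ : ZMod (p^m)) - (u : ZMod (p^m)) = 0 := by
                    exact (hun.mul_left_eq_zero).mp hfact
                  have : (u : ZMod (p^m)) = ((u₀ : (ZMod (p^m))ˣ) : ZMod (p^m)) := by
                    linear_combination -this
                  have : u = u₀ := Units.ext this
                  rw [this]
                  simp
              calc S.card ≤ ({u₀, -u₀} : Finset (ZMod (p^m))ˣ).card := Finset.card_le_card hsub
                _ ≤ 2 := by
                    apply le_trans (Finset.card_insert_le _ _)
                    simp
          exact_mod_cast this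
        have hs2 : 0 ≤ Real.sqrt ((p:ℝ)^(m+n)) := Real.sqrt_nonneg _
        nlinarith [hcard, hs2]


/-- For `q = p^k` with `p` an odd prime and `k ≥ 2`, the untwisted Kloosterman sum
satisfies the Weil-type bound `|K_q(a,b,1)| ≤ 2√q` for all units `a, b` of `ℤ/qℤ`. -/
theorem kloos_bound_trivial_char
    (p k : ℕ) [Fact p.Prime] (hodd : p ≠ 2) (hk : 2 ≤ k)
    (a b : (ZMod (p ^ k))ˣ) :
    ‖Kloos (p ^ k) (a : ZMod (p ^ k)) (b : ZMod (p ^ k))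
        (1 : MulChar (ZMod (p ^ k)) ℂ)‖ ≤ 2 * Real.sqrt (p ^ k) := by
  obtain ⟨m, n, hm, hmn, hnm, rfl⟩ : ∃ m n, 1 ≤ m ∧ m ≤ n ∧ n ≤ m + 1 ∧ k = m + n :=
    ⟨k / 2, k - k / 2, by omega, by omega, by omega, by omega⟩
  exact_mod_cast main_aux p m n hodd hm hmn hnm a b
end
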